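/- arXiv:1609.02827 — 9 statements merged into one kernel-verified Lean document; each statement's English description precedes it below -/
import Mathlib

section
/- Let $a, b > 0$ and $\xi \geq 0$. For every positive integer $n$, the quantities $F_n = \frac{1}{\Gamma(b)} \int_{\xi}^{+\infty} t^{b-1} e^{-a t} (t-\xi)^n \, dt$ satisfy the three-term recurrence relation $a F_{n+1} = (n + b - a\xi) F_n + n \xi F_{n-1}$. -/
open Real MeasureTheory Set Filter

private lemma F_integrable (a b ξ : ℝ) (ha : 0 < a) (hb : 0 < b) (hξ : 0 ≤ ξ) (m : ℕ) :
    MeasureTheory.IntegrableOn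
      (fun t : ℝ => t ^ (b - 1) * Real.exp (-a * t) * (t - ξ) ^ m) (Set.Ioi ξ) := by
  have h0 : MeasureTheory.IntegrableOn
      (fun x : ℝ => x ^ (b - 1 + m) * Real.exp (-a * x)) (Set.Ioi 0) := by
    have hs : (-1 : ℝ) < b - 1 + m := by
      have : (0 : ℝ) ≤ m := Nat.cast_nonneg m
      linarith
    have := integrableOn_rpow_mul_exp_neg_mul_rpow (p := 1) (s := b - 1 + m) (b := a)
      hs one_pos ha
    simpa [Real.rpow_one] using this
  have h1 : MeasureTheory.IntegrableOn
      (fun x : ℝ => x ^ (b - 1 + m) * Real.exp (-a * x)) (Set.Ioi ξ) :=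
    h0.mono_set (Set.Ioi_subset_Ioi hξ)
  refine h1.integrable.mono' ?_ ?_
  · apply Measurable.aestronglyMeasurable
    fun_prop
  · refine (MeasureTheory.ae_restrict_mem measurableSet_Ioi).mono fun t ht => ?_
    have htξ : ξ < t := ht
    have ht0 : 0 < t := lt_of_le_of_lt hξ htξ
    have hnn : 0 ≤ t ^ (b - 1) * Real.exp (-a * t) * (t - ξ) ^ m :=
      mul_nonneg (mul_nonneg (Real.rpow_nonneg ht0.le _) (Real.exp_pos _).le)
        (pow_nonneg (by linarith) m)
    rw [Real.norm_eq_abs, abs_of_nonneg hnn]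
    calc t ^ (b - 1) * Real.exp (-a * t) * (t - ξ) ^ m
        ≤ t ^ (b - 1) * Real.exp (-a * t) * t ^ m := by
          gcongr
          all_goals linarith
      _ = t ^ (b - 1 + m) * Real.exp (-a * t) := by
          rw [Real.rpow_add ht0, Real.rpow_natCast]; ring

private lemma F_rec_aux (a b ξ : ℝ) (ha : 0 < a) (hb : 0 < b) (hξ : 0 ≤ ξ) (k : ℕ) :
    a * ∫ t in Set.Ioi ξ, t ^ (b - 1) * Real.exp (-a * t) * (t - ξ) ^ (k + 2)
      = (((k : ℝ) + 1) + b - a * ξ) *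
          (∫ t in Set.Ioi ξ, t ^ (b - 1) * Real.exp (-a * t) * (t - ξ) ^ (k + 1))
        + ((k : ℝ) + 1) * ξ *
          (∫ t in Set.Ioi ξ, t ^ (b - 1) * Real.exp (-a * t) * (t - ξ) ^ k) := by
  set g : ℝ → ℝ := fun t => t ^ b * Real.exp (-a * t) * (t - ξ) ^ (k + 1) with hg
  set D : ℝ → ℝ := fun t =>
    (b * t ^ (b - 1) * Real.exp (-a * t) + t ^ b * (Real.exp (-a * t) * (-a * 1)))
        * (t - ξ) ^ (k + 1)
      + t ^ b * Real.exp (-a * t) * (((k : ℝ) + 1) * (t - ξ) ^ k * 1) with hD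
  have hderiv : ∀ t ∈ Set.Ioi ξ, HasDerivAt g (D t) t := by
    intro t ht
    have ht0 : 0 < t := lt_of_le_of_lt hξ ht
    have h1 : HasDerivAt (fun t : ℝ => t ^ b) (b * t ^ (b - 1)) t :=
      Real.hasDerivAt_rpow_const (Or.inl ht0.ne')
    have h2 : HasDerivAt (fun t : ℝ => Real.exp (-a * t)) (Real.exp (-a * t) * (-a * 1)) t :=
      ((hasDerivAt_id t).const_mul (-a)).exp
    have h3 : HasDerivAt (fun t : ℝ => (t - ξ) ^ (k + 1))
        ((((k : ℕ) + 1 : ℕ) : ℝ) * (t - ξ) ^ k * 1) t :=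
      ((hasDerivAt_id t).sub_const ξ).pow (k + 1)
    have := (h1.mul h2).mul h3
    simp only [hD]
    exact this.congr_deriv (by simp only [Pi.mul_apply]; push_cast; ring)
  -- pointwise identity on Ioi ξ
  have hid : ∀ t ∈ Set.Ioi ξ, D t
      = (b + ((k : ℝ) + 1) - a * ξ) * (t ^ (b - 1) * Real.exp (-a * t) * (t - ξ) ^ (k + 1))
        - a * (t ^ (b - 1) * Real.exp (-a * t) * (t - ξ) ^ (k + 2))
        + (((k : ℝ) + 1) * ξ) * (t ^ (b - 1) * Real.exp (-a * t) * (t - ξ) ^ k) := by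
    intro t ht
    have ht0 : 0 < t := lt_of_le_of_lt hξ ht
    have htb : t ^ b = t ^ (b - 1) * t := by
      rw [← Real.rpow_add_one ht0.ne' (b - 1)]; ring_nf
    simp only [hD, htb]
    ring
  have hint : ∀ m : ℕ, MeasureTheory.IntegrableOn
      (fun t : ℝ => t ^ (b - 1) * Real.exp (-a * t) * (t - ξ) ^ m) (Set.Ioi ξ) :=
    F_integrable a b ξ ha hb hξ
  have hDint : MeasureTheory.IntegrableOn D (Set.Ioi ξ) := by
    have : MeasureTheory.IntegrableOn (fun t : ℝ =>
        (b + ((k : ℝ) + 1) - a * ξ) * (t ^ (b - 1) * Real.exp (-a * t) * (t - ξ) ^ (k + 1))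
        - a * (t ^ (b - 1) * Real.exp (-a * t) * (t - ξ) ^ (k + 2))
        + (((k : ℝ) + 1) * ξ) * (t ^ (b - 1) * Real.exp (-a * t) * (t - ξ) ^ k))
        (Set.Ioi ξ) :=
      (((hint (k + 1)).const_mul _).sub ((hint (k + 2)).const_mul _)).add
        ((hint k).const_mul _)
    exact this.congr_fun (fun t ht => (hid t ht).symm) measurableSet_Ioi
  have hcont : ContinuousWithinAt g (Set.Ici ξ) ξ := by
    apply ContinuousAt.continuousWithinAt
    have c1 : ContinuousAt (fun t : ℝ => t ^ b) ξ :=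
      Real.continuousAt_rpow_const ξ b (Or.inr hb.le)
    exact (c1.mul ((Real.continuous_exp.comp (continuous_const.mul continuous_id)).continuousAt)).mul
      (((continuous_id.sub continuous_const).pow (k + 1)).continuousAt)
  have htend : Tendsto g atTop (nhds 0) := by
    have h0 : Tendsto (fun t : ℝ => t ^ (b + (k + 1 : ℕ)) * Real.exp (-a * t)) atTop (nhds 0) :=
      tendsto_rpow_mul_exp_neg_mul_atTop_nhds_zero _ a ha
    apply squeeze_zero' ?_ ?_ h0
    · filter_upwards [eventually_ge_atTop (max ξ 1)] with t ht
      have ht1 : (1 : ℝ) ≤ t := le_trans (le_max_right _ _) ht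
      have htξ : ξ ≤ t := le_trans (le_max_left _ _) ht
      exact mul_nonneg (mul_nonneg (Real.rpow_nonneg (by linarith) _) (Real.exp_pos _).le)
        (pow_nonneg (by linarith) _)
    · filter_upwards [eventually_ge_atTop (max ξ 1)] with t ht
      have ht1 : (1 : ℝ) ≤ t := le_trans (le_max_right _ _) ht
      have htξ : ξ ≤ t := le_trans (le_max_left _ _) ht
      have ht0 : 0 < t := by linarith
      calc g t = t ^ b * Real.exp (-a * t) * (t - ξ) ^ (k + 1) := rfl
        _ ≤ t ^ b * Real.exp (-a * t) * t ^ (k + 1) := by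
            gcongr
            all_goals linarith
        _ = t ^ (b + (k + 1 : ℕ)) * Real.exp (-a * t) := by
            rw [Real.rpow_add ht0, Real.rpow_natCast]; ring
  have key : ∫ t in Set.Ioi ξ, D t = 0 - g ξ :=
    MeasureTheory.integral_Ioi_of_hasDerivAt_of_tendsto hcont hderiv hDint htend
  have hg0 : g ξ = 0 := by simp [hg]
  rw [hg0, sub_zero] at key
  have hIeq : ∫ t in Set.Ioi ξ, D t
      = (b + ((k : ℝ) + 1) - a * ξ) *
          (∫ t in Set.Ioi ξ, t ^ (b - 1) * Real.exp (-a * t) * (t - ξ) ^ (k + 1))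
        - a * (∫ t in Set.Ioi ξ, t ^ (b - 1) * Real.exp (-a * t) * (t - ξ) ^ (k + 2))
        + (((k : ℝ) + 1) * ξ) *
          (∫ t in Set.Ioi ξ, t ^ (b - 1) * Real.exp (-a * t) * (t - ξ) ^ k) := by
    have h1 : MeasureTheory.Integrable (fun t : ℝ =>
        (b + ((k : ℝ) + 1) - a * ξ) * (t ^ (b - 1) * Real.exp (-a * t) * (t - ξ) ^ (k + 1)))
        (volume.restrict (Set.Ioi ξ)) := (hint (k + 1)).const_mul _
    have h2 : MeasureTheory.Integrable (fun t : ℝ =>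
        a * (t ^ (b - 1) * Real.exp (-a * t) * (t - ξ) ^ (k + 2)))
        (volume.restrict (Set.Ioi ξ)) := (hint (k + 2)).const_mul _
    have h3 : MeasureTheory.Integrable (fun t : ℝ =>
        (((k : ℝ) + 1) * ξ) * (t ^ (b - 1) * Real.exp (-a * t) * (t - ξ) ^ k))
        (volume.restrict (Set.Ioi ξ)) := (hint k).const_mul _
    have h12 : MeasureTheory.Integrable (fun t : ℝ =>
        (b + ((k : ℝ) + 1) - a * ξ) * (t ^ (b - 1) * Real.exp (-a * t) * (t - ξ) ^ (k + 1))
          - a * (t ^ (b - 1) * Real.exp (-a * t) * (t - ξ) ^ (k + 2)))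
        (volume.restrict (Set.Ioi ξ)) := h1.sub h2
    rw [MeasureTheory.setIntegral_congr_fun measurableSet_Ioi hid,
      MeasureTheory.integral_add h12 h3, MeasureTheory.integral_sub h1 h2,
      MeasureTheory.integral_const_mul, MeasureTheory.integral_const_mul,
      MeasureTheory.integral_const_mul]
  rw [hIeq] at key
  linarith

/-- Three-term recurrence: for `a, b > 0`, `ξ ≥ 0` and every positive integer `n`,
`a F_(n+1) = (n + b - a ξ) F_n + n ξ F_(n-1)`. -/
theorem F_recurrence (a b ξ : ℝ) (ha : 0 < a) (hb : 0 < b) (hξ : 0 ≤ ξ)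
    (F : ℕ → ℝ)
    (hF : ∀ n : ℕ, F n = (1 / Real.Gamma b) *
      ∫ t in Set.Ioi ξ, t ^ (b - 1) * Real.exp (-a * t) * (t - ξ) ^ n)
    (n : ℕ) (hn : 1 ≤ n) :
    a * F (n + 1) = ((n : ℝ) + b - a * ξ) * F n + (n : ℝ) * ξ * F (n - 1) := by
  obtain ⟨k, rfl⟩ : ∃ k, n = k + 1 := ⟨n - 1, (Nat.succ_pred_eq_of_pos hn).symm⟩
  have hrec := F_rec_aux a b ξ ha hb hξ k
  rw [hF (k + 1 + 1), hF (k + 1), hF (k + 1 - 1)]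
  simp only [Nat.add_sub_cancel]
  push_cast
  linear_combination (1 / Real.Gamma b) * hrec
end

section
/- Let $a > 0$, $b > 0$, $\xi \geq 0$, and let $n$ be a non-negative integer. Define $c_n(a,b) = \int_0^{+\infty} (\tau+\xi)^{b-1} \tau^n e^{-a\tau} \, d\tau$. Then $a\, c_{n+1}(a,b) = (n+b)\, c_n(a,b) + \xi(1-b)\, c_n(a,b-1)$. -/
open Real MeasureTheory Set Topology

private lemma c_tendsto_aux (β ξ cc : ℝ) (m : ℕ) (hc : 0 < cc) :
    Filter.Tendsto (fun τ : ℝ => (τ + ξ) ^ (β - 1) * τ ^ m * Real.exp (-cc * τ))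
      Filter.atTop (nhds 0) := by
  have h1 : Filter.Tendsto (fun τ : ℝ => (τ + ξ) ^ (β - 1) * Real.exp (-(cc / 2) * (τ + ξ)))
      Filter.atTop (nhds 0) :=
    (tendsto_rpow_mul_exp_neg_mul_atTop_nhds_zero (β - 1) (cc / 2) (by linarith)).comp
      (Filter.tendsto_atTop_add_const_right _ ξ Filter.tendsto_id)
  have h2 : Filter.Tendsto (fun τ : ℝ => τ ^ ((m : ℕ) : ℝ) * Real.exp (-(cc / 2) * τ))
      Filter.atTop (nhds 0) :=
    tendsto_rpow_mul_exp_neg_mul_atTop_nhds_zero _ _ (by linarith)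
  have h3 := (h1.mul h2).const_mul (Real.exp ((cc / 2) * ξ))
  simp only [mul_zero, zero_mul] at h3
  refine h3.congr fun τ => ?_
  have e : Real.exp ((cc / 2) * ξ) * (Real.exp (-(cc / 2) * (τ + ξ)) *
      Real.exp (-(cc / 2) * τ)) = Real.exp (-cc * τ) := by
    rw [← Real.exp_add, ← Real.exp_add]
    congr 1
    ring
  rw [Real.rpow_natCast]
  rw [← e]
  ring

private lemma c_cont_aux (a β ξ : ℝ) (m : ℕ) :
    ContinuousOn (fun τ : ℝ => (τ + ξ) ^ (β - 1) * τ ^ m * Real.exp (-a * τ))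
      {x : ℝ | x + ξ ≠ 0} := by
  refine (ContinuousOn.mul (ContinuousOn.rpow_const ?_ ?_) ?_).mul ?_
  · fun_prop
  · exact fun x hx => Or.inl hx
  · fun_prop
  · fun_prop

private lemma c_int_aux (a β ξ : ℝ) (ha : 0 < a) (hξ : 0 ≤ ξ) (m : ℕ)
    (h : 0 < (m : ℝ) + β ∨ 0 < ξ) :
    MeasureTheory.IntegrableOn
      (fun τ : ℝ => (τ + ξ) ^ (β - 1) * τ ^ m * Real.exp (-a * τ)) (Set.Ioi 0) := by
  have hIoi1 : MeasureTheory.IntegrableOn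
      (fun τ : ℝ => (τ + ξ) ^ (β - 1) * τ ^ m * Real.exp (-a * τ)) (Set.Ioi 1) := by
    apply integrable_of_isBigO_exp_neg (half_pos ha)
    · refine (c_cont_aux a β ξ m).mono (fun x hx => ?_)
      have h1 : (1 : ℝ) ≤ x := hx
      exact ne_of_gt (by linarith)
    · have hg := ((c_tendsto_aux β ξ (a / 2) m (half_pos ha)).isBigO_one ℝ).mul
        (Asymptotics.isBigO_refl (fun τ : ℝ => Real.exp (-(a / 2) * τ)) Filter.atTop)
      simp only [one_mul] at hg
      refine hg.congr' ?_ Filter.EventuallyEq.rfl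
      filter_upwards with τ
      rw [mul_assoc, ← Real.exp_add, show -(a / 2) * τ + -(a / 2) * τ = -a * τ by ring]
  have hIoc : MeasureTheory.IntegrableOn
      (fun τ : ℝ => (τ + ξ) ^ (β - 1) * τ ^ m * Real.exp (-a * τ)) (Set.Ioc 0 1) := by
    rcases eq_or_lt_of_le hξ with hξ0 | hξpos
    · subst hξ0
      have hmβ : 0 < (m : ℝ) + β := by
        rcases h with h | h
        · exact h
        · exact absurd h (lt_irrefl 0)
      have hint : MeasureTheory.IntegrableOn (fun τ : ℝ => τ ^ ((m : ℝ) + β - 1))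
          (Set.Ioc 0 1) := by
        have := intervalIntegral.intervalIntegrable_rpow'
          (show (-1 : ℝ) < (m : ℝ) + β - 1 by linarith) (a := 0) (b := 1)
        rwa [intervalIntegrable_iff_integrableOn_Ioc_of_le zero_le_one] at this
      refine hint.mono' ?_ ?_
      · refine ContinuousOn.aestronglyMeasurable ((c_cont_aux a β 0 m).mono ?_)
          measurableSet_Ioc
        intro x hx
        have h0 : (0 : ℝ) < x := hx.1
        show x + 0 ≠ 0
        simpa using ne_of_gt h0
      · filter_upwards [MeasureTheory.ae_restrict_mem measurableSet_Ioc] with τ hτ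
        have hτ0 : 0 < τ := hτ.1
        have key : (τ + 0) ^ (β - 1) * τ ^ m = τ ^ ((m : ℝ) + β - 1) := by
          rw [add_zero, show (m : ℝ) + β - 1 = (β - 1) + (m : ℝ) by ring,
            Real.rpow_add hτ0, Real.rpow_natCast]
        have hexp : Real.exp (-a * τ) ≤ 1 := Real.exp_le_one_iff.mpr (by nlinarith)
        have hpos : 0 ≤ (τ + 0) ^ (β - 1) * τ ^ m := by positivity
        rw [Real.norm_eq_abs, abs_of_nonneg (by positivity)]
        calc (τ + 0) ^ (β - 1) * τ ^ m * Real.exp (-a * τ)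
            ≤ (τ + 0) ^ (β - 1) * τ ^ m * 1 := mul_le_mul_of_nonneg_left hexp hpos
          _ = τ ^ ((m : ℝ) + β - 1) := by rw [mul_one, key]
    · refine (((c_cont_aux a β ξ m).mono ?_).integrableOn_Icc).mono_set
        Set.Ioc_subset_Icc_self
      intro x hx
      have h0 : (0 : ℝ) ≤ x := hx.1
      exact ne_of_gt (by linarith)
  have hU : Set.Ioi (0 : ℝ) = Set.Ioc 0 1 ∪ Set.Ioi 1 :=
    (Set.Ioc_union_Ioi_eq_Ioi zero_le_one).symm
  rw [hU]
  exact hIoc.union hIoi1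

/-- For `c_n(a,β) = ∫_0^∞ (τ+ξ)^(β-1) τ^n e^(-a τ) dτ`, the recurrence
`a c_(n+1)(a,b) = (n+b) c_n(a,b) + ξ (1-b) c_n(a,b-1)` holds
(the identity requires `n + b - 1 > 0` or `ξ > 0` for the convergence of `c_n(a,b-1)`). -/
theorem c_recurrence (a b ξ : ℝ) (ha : 0 < a) (hb : 0 < b) (hξ : 0 ≤ ξ) (n : ℕ)
    (hconv : 0 < (n : ℝ) + b - 1 ∨ 0 < ξ)
    (c : ℕ → ℝ → ℝ)
    (hc : ∀ (m : ℕ) (β : ℝ), c m β =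
      ∫ τ in Set.Ioi (0 : ℝ), (τ + ξ) ^ (β - 1) * τ ^ m * Real.exp (-a * τ)) :
    a * c (n + 1) b = ((n : ℝ) + b) * c n b + ξ * (1 - b) * c n (b - 1) := by
  have hn0 : (0 : ℝ) ≤ (n : ℝ) := Nat.cast_nonneg n
  have I1 : IntegrableOn (fun τ : ℝ => (τ + ξ) ^ (b - 1) * τ ^ n * Real.exp (-a * τ))
      (Ioi 0) := c_int_aux a b ξ ha hξ n (Or.inl (by linarith))
  have I2 : IntegrableOn (fun τ : ℝ => (τ + ξ) ^ (b - 1) * τ ^ (n + 1) * Real.exp (-a * τ))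
      (Ioi 0) := c_int_aux a b ξ ha hξ (n + 1) (Or.inl (by push_cast; linarith))
  have I3 : IntegrableOn (fun τ : ℝ => (τ + ξ) ^ (b - 1 - 1) * τ ^ n * Real.exp (-a * τ))
      (Ioi 0) := c_int_aux a (b - 1) ξ ha hξ n (hconv.imp (fun h => by linarith) id)
  have I4 : IntegrableOn (fun τ : ℝ => (τ + ξ) ^ (b - 1 - 1) * τ ^ (n + 1) * Real.exp (-a * τ))
      (Ioi 0) := c_int_aux a (b - 1) ξ ha hξ (n + 1) (Or.inl (by push_cast; linarith))
  have hderiv : ∀ τ ∈ Ioi (0 : ℝ),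
      HasDerivAt (fun τ : ℝ => (τ + ξ) ^ (b - 1) * τ ^ (n + 1) * Real.exp (-a * τ))
        ((b - 1) * ((τ + ξ) ^ (b - 1 - 1) * τ ^ (n + 1) * Real.exp (-a * τ)) +
          (((n : ℝ) + 1) * ((τ + ξ) ^ (b - 1) * τ ^ n * Real.exp (-a * τ)) -
            a * ((τ + ξ) ^ (b - 1) * τ ^ (n + 1) * Real.exp (-a * τ)))) τ := by
    intro τ hτ
    have hτ0 : (0 : ℝ) < τ := hτ
    have hτξ : 0 < τ + ξ := by linarith
    have h1 : HasDerivAt (fun x : ℝ => (x + ξ) ^ (b - 1))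
        ((b - 1) * (τ + ξ) ^ (b - 1 - 1)) τ := by
      have := (Real.hasDerivAt_rpow_const (x := τ + ξ) (p := b - 1)
        (Or.inl hτξ.ne')).comp τ ((hasDerivAt_id τ).add_const ξ)
      rw [mul_one] at this
      exact this
    have h2 : HasDerivAt (fun x : ℝ => x ^ (n + 1)) (((n : ℝ) + 1) * τ ^ n) τ := by
      have := hasDerivAt_pow (n + 1) τ
      simpa [Nat.cast_add] using this
    have h3 : HasDerivAt (fun x : ℝ => Real.exp (-a * x)) (-a * Real.exp (-a * τ)) τ := by
      have := ((hasDerivAt_id τ).const_mul (-a)).exp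
      simpa [mul_comm] using this
    have hcomb := (h1.mul h2).mul h3
    refine hcomb.congr_deriv ?_
    simp only [Pi.mul_apply]
    ring
  have hcont : ContinuousWithinAt
      (fun τ : ℝ => (τ + ξ) ^ (b - 1) * τ ^ (n + 1) * Real.exp (-a * τ)) (Ici 0) 0 := by
    rcases eq_or_lt_of_le hξ with hξ0 | hξpos
    · subst hξ0
      have hbn : (0 : ℝ) < b - 1 + ((n + 1 : ℕ) : ℝ) := by push_cast; linarith
      have hcw : ContinuousWithinAt
          (fun τ : ℝ => τ ^ (b - 1 + ((n + 1 : ℕ) : ℝ)) * Real.exp (-a * τ)) (Ici 0) 0 := by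
        apply ContinuousWithinAt.mul
        · exact (Real.continuousAt_rpow_const 0 _ (Or.inr hbn.le)).continuousWithinAt
        · exact (Continuous.continuousAt (by fun_prop)).continuousWithinAt
      refine hcw.congr ?_ ?_
      · intro τ hτ
        have hτ0 : (0 : ℝ) ≤ τ := hτ
        simp only [add_zero]
        rw [Real.rpow_add' hτ0 hbn.ne', Real.rpow_natCast]
      · simp only [add_zero]
        rw [Real.zero_rpow hbn.ne']
        simp
    · refine ContinuousAt.continuousWithinAt
        ((c_cont_aux a b ξ (n + 1)).continuousAt ?_)
      refine IsOpen.mem_nhds (isOpen_ne_fun (by fun_prop) continuous_const) ?_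
      show (0 : ℝ) + ξ ≠ 0
      simpa using ne_of_gt hξpos
  have htend := c_tendsto_aux b ξ a (n + 1) ha
  have hint : IntegrableOn (fun τ : ℝ =>
      (b - 1) * ((τ + ξ) ^ (b - 1 - 1) * τ ^ (n + 1) * Real.exp (-a * τ)) +
        (((n : ℝ) + 1) * ((τ + ξ) ^ (b - 1) * τ ^ n * Real.exp (-a * τ)) -
          a * ((τ + ξ) ^ (b - 1) * τ ^ (n + 1) * Real.exp (-a * τ)))) (Ioi 0) :=
    (I4.const_mul (b - 1)).add ((I1.const_mul ((n : ℝ) + 1)).sub (I2.const_mul a))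
  have hsub : Integrable (fun τ : ℝ =>
      ((n : ℝ) + 1) * ((τ + ξ) ^ (b - 1) * τ ^ n * Real.exp (-a * τ)) -
        a * ((τ + ξ) ^ (b - 1) * τ ^ (n + 1) * Real.exp (-a * τ)))
      (volume.restrict (Ioi 0)) :=
    (I1.const_mul ((n : ℝ) + 1)).sub (I2.const_mul a)
  have hFTC := integral_Ioi_of_hasDerivAt_of_tendsto hcont hderiv hint htend
  rw [integral_add (I4.const_mul (b - 1)) hsub,
    integral_sub (I1.const_mul ((n : ℝ) + 1)) (I2.const_mul a),
    integral_const_mul, integral_const_mul, integral_const_mul] at hFTC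
  have hzero : (0 : ℝ) - (0 + ξ) ^ (b - 1) * 0 ^ (n + 1) * Real.exp (-a * 0) = 0 := by simp
  rw [hzero] at hFTC
  have hsplit : ∫ τ in Ioi (0 : ℝ), (τ + ξ) ^ (b - 1 - 1) * τ ^ (n + 1) * Real.exp (-a * τ)
      = (∫ τ in Ioi (0 : ℝ), (τ + ξ) ^ (b - 1) * τ ^ n * Real.exp (-a * τ)) -
        ξ * ∫ τ in Ioi (0 : ℝ), (τ + ξ) ^ (b - 1 - 1) * τ ^ n * Real.exp (-a * τ) := by
    rw [← integral_const_mul, ← integral_sub I1 (I3.const_mul ξ)]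
    refine setIntegral_congr_fun measurableSet_Ioi fun τ hτ => ?_
    have hτ0 : (0 : ℝ) < τ := hτ
    have hτξ : 0 < τ + ξ := by linarith
    have key : (τ + ξ) ^ (b - 1 - 1) * (τ + ξ) = (τ + ξ) ^ (b - 1) := by
      rw [← Real.rpow_add_one hτξ.ne' (b - 1 - 1)]
      congr 1
      ring
    show (τ + ξ) ^ (b - 1 - 1) * τ ^ (n + 1) * Real.exp (-a * τ) = _
    rw [← key, pow_succ]
    ring
  rw [hc (n + 1) b, hc n b, hc n (b - 1)]
  linear_combination (-1 : ℝ) * hFTC + (b - 1) * hsplit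
end

section
/- Let $a > 0$, $0 < b \leq 1$, $\xi \geq 0$, and let $n$ be a non-negative integer. Then $a\, c_{n+1}(a,b) \leq (n+1)\, c_n(a,b)$, where $c_n(a,b) = \int_0^{+\infty} (\tau+\xi)^{b-1} \tau^n e^{-a\tau} \, d\tau$. -/
open Real MeasureTheory Set Filter Topology

/-- For `a > 0`, `0 < b ≤ 1`, `ξ ≥ 0`: `a c_(n+1)(a,b) ≤ (n+1) c_n(a,b)`. -/
theorem c_ineq_b_le_one (a b ξ : ℝ) (ha : 0 < a) (hb0 : 0 < b) (hb1 : b ≤ 1)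
    (hξ : 0 ≤ ξ) (n : ℕ)
    (c : ℕ → ℝ)
    (hc : ∀ m : ℕ, c m =
      ∫ τ in Set.Ioi (0 : ℝ), (τ + ξ) ^ (b - 1) * τ ^ m * Real.exp (-a * τ)) :
    a * c (n + 1) ≤ ((n : ℝ) + 1) * c n := by
  have hIg : ∀ s : ℝ, -1 < s →
      IntegrableOn (fun x : ℝ => x ^ s * Real.exp (-a * x)) (Ioi 0) := by
    intro s hs
    have h := integrableOn_rpow_mul_exp_neg_mul_rpow (p := 1) hs zero_lt_one ha
    exact h.congr_fun (fun x _ => by simp only [Real.rpow_one]) measurableSet_Ioi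
  have key : ∀ (β : ℝ) (m : ℕ), β ≤ 0 → -1 < (m : ℝ) + β →
      IntegrableOn (fun x : ℝ => (x + ξ) ^ β * x ^ m * Real.exp (-a * x)) (Ioi 0) := by
    intro β m hβ hmβ
    refine (hIg ((m : ℝ) + β) hmβ).mono' ?_ ?_
    · apply ContinuousOn.aestronglyMeasurable _ measurableSet_Ioi
      refine ContinuousOn.mul (ContinuousOn.mul ?_ ?_) ?_
      · refine ContinuousOn.rpow_const ((continuous_id.add continuous_const).continuousOn)
          (fun x hx => Or.inl ?_)
        have hx0 : (0:ℝ) < x := hx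
        have : (0:ℝ) < x + ξ := by linarith
        exact this.ne'
      · exact (continuous_pow m).continuousOn
      · exact (Real.continuous_exp.comp (continuous_const.mul continuous_id)).continuousOn
    · rw [ae_restrict_iff' measurableSet_Ioi]
      filter_upwards with x hx
      have hx0 : (0:ℝ) < x := hx
      have hxξ : (0:ℝ) < x + ξ := by linarith
      rw [Real.norm_eq_abs, abs_of_nonneg (by positivity)]
      have h1 : (x + ξ) ^ β ≤ x ^ β :=
        Real.rpow_le_rpow_of_nonpos hx0 (by linarith) hβ
      calc (x + ξ) ^ β * x ^ m * Real.exp (-a * x)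
          ≤ x ^ β * x ^ m * Real.exp (-a * x) := by
            have := Real.exp_pos (-a * x)
            gcongr
        _ = x ^ ((m : ℝ) + β) * Real.exp (-a * x) := by
            rw [Real.rpow_add hx0, Real.rpow_natCast]; ring
  have hn0 : (0:ℝ) ≤ (n : ℝ) := Nat.cast_nonneg n
  have hI1 := key (b - 2) (n + 1) (by linarith) (by push_cast; linarith)
  have hI2 := key (b - 1) n (by linarith) (by linarith)
  have hI3 := key (b - 1) (n + 1) (by linarith) (by push_cast; linarith)
  have hderiv : ∀ x ∈ Ioi (0:ℝ), HasDerivAt (fun x : ℝ => (x + ξ) ^ (b - 1) * x ^ (n + 1) * Real.exp (-a * x))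
      ((b - 1) * ((x + ξ) ^ (b - 2) * x ^ (n + 1) * Real.exp (-a * x)) + (((n : ℝ) + 1) * ((x + ξ) ^ (b - 1) * x ^ n * Real.exp (-a * x)) - a * ((x + ξ) ^ (b - 1) * x ^ (n + 1) * Real.exp (-a * x)))) x := by
    intro x hx
    have hx0 : (0:ℝ) < x := hx
    have hxξ : (0:ℝ) < x + ξ := by linarith
    have h1 : HasDerivAt (fun y : ℝ => (y + ξ) ^ (b - 1)) ((b - 1) * (x + ξ) ^ (b - 2)) x := by
      have h := (Real.hasDerivAt_rpow_const (x := x + ξ) (p := b - 1)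
        (Or.inl hxξ.ne')).comp x ((hasDerivAt_id x).add_const ξ)
      have hb2 : b - 1 - 1 = b - 2 := by ring
      rw [hb2, mul_one] at h; exact h
    have h2 : HasDerivAt (fun y : ℝ => y ^ (n + 1)) (((n : ℝ) + 1) * x ^ n) x := by
      have := hasDerivAt_pow (n + 1) x
      simpa using this
    have h3 : HasDerivAt (fun y : ℝ => Real.exp (-a * y)) (-a * Real.exp (-a * x)) x := by
      have := ((hasDerivAt_id x).const_mul (-a)).exp
      simpa [mul_comm] using this
    have h := (h1.mul h2).mul h3
    exact h.congr_deriv (by simp only [Pi.mul_apply]; ring)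
  have hnb : (0:ℝ) < (n : ℝ) + b := by positivity
  have hcont : ContinuousWithinAt (fun x : ℝ => (x + ξ) ^ (b - 1) * x ^ (n + 1) * Real.exp (-a * x)) (Ici (0:ℝ)) 0 := by
    have hF0 : ((0:ℝ) + ξ) ^ (b - 1) * (0:ℝ) ^ (n + 1) * Real.exp (-a * 0) = 0 := by simp
    rw [ContinuousWithinAt, hF0]
    apply squeeze_zero' (g := fun x : ℝ => x ^ ((n : ℝ) + b))
    · filter_upwards [self_mem_nhdsWithin] with x hx
      have hx0 : (0:ℝ) ≤ x := hx
      have : (0:ℝ) ≤ x + ξ := by linarith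
      exact mul_nonneg (mul_nonneg (Real.rpow_nonneg this _) (pow_nonneg hx0 _))
        (Real.exp_pos _).le
    · filter_upwards [self_mem_nhdsWithin] with x hx
      have hx0 : (0:ℝ) ≤ x := hx
      rcases hx0.eq_or_lt with h | h
      · subst h
        simp [Real.zero_rpow hnb.ne']
      · have hxξ : (0:ℝ) < x + ξ := by linarith
        have e1 : (x + ξ) ^ (b - 1) ≤ x ^ (b - 1) :=
          Real.rpow_le_rpow_of_nonpos h (by linarith) (by linarith)
        have e2 : Real.exp (-a * x) ≤ 1 := by
          rw [Real.exp_le_one_iff]; nlinarith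
        calc (x + ξ) ^ (b - 1) * x ^ (n + 1) * Real.exp (-a * x) ≤ x ^ (b - 1) * x ^ (n + 1) * 1 := by
              refine mul_le_mul (mul_le_mul_of_nonneg_right e1 (pow_nonneg h.le _)) e2
                (Real.exp_pos _).le ?_
              exact mul_nonneg (Real.rpow_nonneg h.le _) (pow_nonneg h.le _)
          _ = x ^ ((n : ℝ) + b) := by
              rw [mul_one, ← Real.rpow_natCast x (n + 1), ← Real.rpow_add h]
              push_cast
              ring_nf
    · have hcont0 := (Real.continuousAt_rpow_const 0 ((n : ℝ) + b)
        (Or.inr hnb.le)).continuousWithinAt (s := Ici (0:ℝ))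
      simpa [ContinuousWithinAt, Real.zero_rpow hnb.ne'] using hcont0
  have hgtop : Tendsto (fun x : ℝ => x ^ (n + 1) * Real.exp (-a * x)) atTop (𝓝 0) := by
    have h1 : Tendsto (fun x : ℝ => a * x) atTop atTop :=
      Tendsto.const_mul_atTop ha tendsto_id
    have h2 := (tendsto_pow_mul_exp_neg_atTop_nhds_zero (n + 1)).comp h1
    have h3 := h2.const_mul ((a⁻¹) ^ (n + 1))
    rw [mul_zero] at h3
    refine h3.congr fun x => ?_
    simp only [Function.comp]
    rw [← mul_assoc, ← mul_pow, inv_mul_cancel_left₀ ha.ne', neg_mul]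
  have htop : Tendsto (fun x : ℝ => (x + ξ) ^ (b - 1) * x ^ (n + 1) * Real.exp (-a * x)) atTop (𝓝 0) := by
    apply squeeze_zero' (g := fun x : ℝ => x ^ (n + 1) * Real.exp (-a * x)) _ _ hgtop
    · filter_upwards [eventually_ge_atTop (0:ℝ)] with x hx
      have : (0:ℝ) ≤ x + ξ := by linarith
      exact mul_nonneg (mul_nonneg (Real.rpow_nonneg this _) (pow_nonneg hx _))
        (Real.exp_pos _).le
    · filter_upwards [eventually_ge_atTop (1:ℝ)] with x hx
      have hx0 : (0:ℝ) < x := by linarith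
      have e1 : (x + ξ) ^ (b - 1) ≤ 1 :=
        Real.rpow_le_one_of_one_le_of_nonpos (by linarith) (by linarith)
      calc (x + ξ) ^ (b - 1) * x ^ (n + 1) * Real.exp (-a * x) ≤ 1 * x ^ (n + 1) * Real.exp (-a * x) := by
            have h0 : (0:ℝ) ≤ x ^ (n + 1) := pow_nonneg hx0.le _
            have h1 : (0:ℝ) ≤ Real.exp (-a * x) := (Real.exp_pos _).le
            exact mul_le_mul_of_nonneg_right (mul_le_mul_of_nonneg_right e1 h0) h1
        _ = x ^ (n + 1) * Real.exp (-a * x) := by ring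
  have hI23 : IntegrableOn (fun x : ℝ =>
      ((n : ℝ) + 1) * ((x + ξ) ^ (b - 1) * x ^ n * Real.exp (-a * x)) - a * ((x + ξ) ^ (b - 1) * x ^ (n + 1) * Real.exp (-a * x))) (Ioi 0) :=
    (hI2.const_mul _).sub (hI3.const_mul _)
  have hint : IntegrableOn (fun x : ℝ => (b - 1) * ((x + ξ) ^ (b - 2) * x ^ (n + 1) * Real.exp (-a * x)) + (((n : ℝ) + 1) * ((x + ξ) ^ (b - 1) * x ^ n * Real.exp (-a * x)) - a * ((x + ξ) ^ (b - 1) * x ^ (n + 1) * Real.exp (-a * x)))) (Ioi 0) :=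
    (hI1.const_mul _).add hI23
  have hFTC := integral_Ioi_of_hasDerivAt_of_tendsto hcont hderiv hint htop
  have hFTC0 : ∫ x in Ioi (0:ℝ),
      ((b - 1) * ((x + ξ) ^ (b - 2) * x ^ (n + 1) * Real.exp (-a * x)) + (((n : ℝ) + 1) * ((x + ξ) ^ (b - 1) * x ^ n * Real.exp (-a * x)) - a * ((x + ξ) ^ (b - 1) * x ^ (n + 1) * Real.exp (-a * x)))) = 0 := by
    rw [hFTC]; simp
  rw [integral_add (hI1.const_mul _) hI23,
    integral_sub (hI2.const_mul _) (hI3.const_mul _),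
    integral_const_mul, integral_const_mul, integral_const_mul] at hFTC0
  rw [← hc n, ← hc (n + 1)] at hFTC0
  have hpos : 0 ≤ ∫ x in Ioi (0:ℝ), (x + ξ) ^ (b - 2) * x ^ (n + 1) * Real.exp (-a * x) := by
    refine setIntegral_nonneg measurableSet_Ioi fun x hx => ?_
    have hx0 : (0:ℝ) < x := hx
    have : (0:ℝ) ≤ x + ξ := by linarith
    exact mul_nonneg (mul_nonneg (Real.rpow_nonneg this _) (pow_nonneg hx0.le _))
      (Real.exp_pos _).le
  have hneg : (b - 1) * (∫ x in Ioi (0:ℝ), (x + ξ) ^ (b - 2) * x ^ (n + 1) * Real.exp (-a * x)) ≤ 0 :=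
    mul_nonpos_of_nonpos_of_nonneg (by linarith) hpos
  linarith [hFTC0]
end

section
/- Let $a > 0$, $b \geq 1$, $\xi \geq 0$, and let $n$ be a non-negative integer. Then $a\, c_{n+1}(a,b) \leq (n+b)\, c_n(a,b)$, where $c_n(a,b) = \int_0^{+\infty} (\tau+\xi)^{b-1} \tau^n e^{-a\tau} \, d\tau$. -/
open Real MeasureTheory Set
open Filter Topology

/-- For `a > 0`, `b ≥ 1`, `ξ ≥ 0`: `a c_(n+1)(a,b) ≤ (n+b) c_n(a,b)`. -/
theorem c_ineq_b_ge_one (a b ξ : ℝ) (ha : 0 < a) (hb : 1 ≤ b) (hξ : 0 ≤ ξ) (n : ℕ)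
    (c : ℕ → ℝ)
    (hc : ∀ m : ℕ, c m =
      ∫ τ in Set.Ioi (0 : ℝ), (τ + ξ) ^ (b - 1) * τ ^ m * Real.exp (-a * τ)) :
    a * c (n + 1) ≤ ((n : ℝ) + b) * c n := by
  have hb1 : (0:ℝ) ≤ b - 1 := by linarith
  -- basic integrability of τ^s e^{-aτ}
  have hInt : ∀ s : ℝ, -1 < s →
      IntegrableOn (fun τ : ℝ => τ ^ s * Real.exp (-a * τ)) (Ioi 0) := by
    intro s hs
    have h := integrableOn_rpow_mul_exp_neg_mul_rpow hs (zero_lt_one' ℝ) ha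
    refine h.congr_fun (fun τ hτ => ?_) measurableSet_Ioi
    simp only [Real.rpow_one]
  -- continuity of the main integrand
  have contf : ∀ m : ℕ, Continuous
      (fun τ : ℝ => (τ + ξ) ^ (b - 1) * τ ^ m * Real.exp (-a * τ)) := by
    intro m
    have h1 : Continuous fun τ : ℝ => (τ + ξ) ^ (b - 1) := by
      rw [continuous_iff_continuousAt]
      intro x
      exact (Real.continuousAt_rpow_const _ _ (Or.inr hb1)).comp
        (continuousAt_id.add continuousAt_const)
    exact ((h1.mul (continuous_pow m)).mul ((continuous_const.mul continuous_id).rexp))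
  -- key pointwise bound for the rpow factor
  have key : ∀ τ : ℝ, 0 < τ →
      (τ + ξ) ^ (b - 1) ≤ (2 * (1 + ξ)) ^ (b - 1) * (1 + τ ^ (b - 1)) := by
    intro τ hτ
    have h2 : (0:ℝ) ≤ 2 * (1 + ξ) := by linarith
    rcases le_total τ 1 with h | h
    · have : (τ + ξ) ^ (b - 1) ≤ (2 * (1 + ξ)) ^ (b - 1) := by
        apply Real.rpow_le_rpow (by linarith) (by linarith) hb1
      have h3 : (0:ℝ) ≤ τ ^ (b - 1) := Real.rpow_nonneg hτ.le _
      nlinarith [Real.rpow_nonneg h2 (b - 1)]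
    · have h1 : (τ + ξ) ^ (b - 1) ≤ (2 * (1 + ξ) * τ) ^ (b - 1) := by
        apply Real.rpow_le_rpow (by linarith) (by nlinarith) hb1
      rw [Real.mul_rpow h2 (by linarith : (0:ℝ) ≤ τ)] at h1
      have h3 : (0:ℝ) ≤ (2 * (1 + ξ)) ^ (b - 1) := Real.rpow_nonneg h2 _
      nlinarith [Real.rpow_nonneg (by linarith : (0:ℝ) ≤ τ) (b - 1)]
  -- integrability of the main integrand
  have intf : ∀ m : ℕ, IntegrableOn
      (fun τ : ℝ => (τ + ξ) ^ (b - 1) * τ ^ m * Real.exp (-a * τ)) (Ioi 0) := by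
    intro m
    apply Integrable.mono'
      (g := fun τ : ℝ => (2 * (1 + ξ)) ^ (b - 1) *
        (τ ^ (m : ℝ) * Real.exp (-a * τ) + τ ^ ((m : ℝ) + (b - 1)) * Real.exp (-a * τ)))
    · exact ((hInt (m : ℝ) (by have : (0:ℝ) ≤ (m:ℝ) := Nat.cast_nonneg m; linarith)).add
        (hInt ((m : ℝ) + (b - 1)) (by have : (0:ℝ) ≤ (m:ℝ) := Nat.cast_nonneg m; linarith))).const_mul _
    · exact (contf m).aestronglyMeasurable.restrict
    · filter_upwards [ae_restrict_mem measurableSet_Ioi] with τ hτ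
      have hτ0 : (0:ℝ) < τ := hτ
      have hnn : 0 ≤ (τ + ξ) ^ (b - 1) * τ ^ m * Real.exp (-a * τ) := by positivity
      rw [Real.norm_eq_abs, abs_of_nonneg hnn]
      have hk := key τ hτ0
      have he : (0:ℝ) < Real.exp (-a * τ) := Real.exp_pos _
      have hτm : (0:ℝ) ≤ (τ:ℝ) ^ m := by positivity
      calc (τ + ξ) ^ (b - 1) * τ ^ m * Real.exp (-a * τ)
          ≤ ((2 * (1 + ξ)) ^ (b - 1) * (1 + τ ^ (b - 1))) * τ ^ m * Real.exp (-a * τ) := by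
            gcongr
        _ = (2 * (1 + ξ)) ^ (b - 1) *
            (τ ^ (m : ℝ) * Real.exp (-a * τ) + τ ^ ((m : ℝ) + (b - 1)) * Real.exp (-a * τ)) := by
            rw [Real.rpow_add hτ0, Real.rpow_natCast]
            ring
  -- the auxiliary integrand from the rpow derivative, and its bound
  have hg1le : ∀ τ : ℝ, τ ∈ Ioi (0:ℝ) →
      (τ + ξ) ^ (b - 2) * τ ^ (n + 1) * Real.exp (-a * τ) ≤
      (τ + ξ) ^ (b - 1) * τ ^ n * Real.exp (-a * τ) := by
    intro τ hτ
    have hτ0 : (0:ℝ) < τ := hτ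
    have hτξ : (0:ℝ) < τ + ξ := by linarith
    have h1 : (τ + ξ) ^ (b - 1) = (τ + ξ) ^ (b - 2) * (τ + ξ) := by
      rw [show b - 1 = (b - 2) + 1 by ring, Real.rpow_add_one hτξ.ne']
    rw [h1, pow_succ]
    have h2 : (0:ℝ) ≤ (τ + ξ) ^ (b - 2) := Real.rpow_nonneg hτξ.le _
    have he : (0:ℝ) ≤ Real.exp (-a * τ) := (Real.exp_pos _).le
    have hτn : (0:ℝ) ≤ τ ^ n := by positivity
    nlinarith [mul_le_mul_of_nonneg_left (show τ ≤ τ + ξ by linarith)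
      (mul_nonneg (mul_nonneg h2 hτn) he)]
  have contg1 : ContinuousOn
      (fun τ : ℝ => (τ + ξ) ^ (b - 2) * τ ^ (n + 1) * Real.exp (-a * τ)) (Ioi 0) := by
    intro τ hτ
    have hτξ : (0:ℝ) < τ + ξ := by have : (0:ℝ) < τ := hτ; linarith
    apply ContinuousAt.continuousWithinAt
    have hA : ContinuousAt (fun t : ℝ => t + ξ) τ := continuousAt_id.add continuousAt_const
    exact ((hA.rpow_const (Or.inl hτξ.ne')).mul (continuousAt_pow _ _)).mul
      ((continuous_const.mul continuous_id).rexp).continuousAt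
  have intg1 : IntegrableOn
      (fun τ : ℝ => (τ + ξ) ^ (b - 2) * τ ^ (n + 1) * Real.exp (-a * τ)) (Ioi 0) := by
    apply Integrable.mono' (intf n)
      (contg1.aestronglyMeasurable measurableSet_Ioi)
    filter_upwards [ae_restrict_mem measurableSet_Ioi] with τ hτ
    have hτ0 : (0:ℝ) < τ := hτ
    have hτξ : (0:ℝ) < τ + ξ := by linarith
    have hnn : 0 ≤ (τ + ξ) ^ (b - 2) * τ ^ (n + 1) * Real.exp (-a * τ) := by positivity
    rw [Real.norm_eq_abs, abs_of_nonneg hnn]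
    exact hg1le τ hτ
  -- derivative
  have hderiv : ∀ τ ∈ Ioi (0:ℝ),
      HasDerivAt (fun t : ℝ => (t + ξ) ^ (b - 1) * t ^ (n + 1) * Real.exp (-a * t))
        ((b - 1) * ((τ + ξ) ^ (b - 2) * τ ^ (n + 1) * Real.exp (-a * τ)) +
          ((n : ℝ) + 1) * ((τ + ξ) ^ (b - 1) * τ ^ n * Real.exp (-a * τ)) -
          a * ((τ + ξ) ^ (b - 1) * τ ^ (n + 1) * Real.exp (-a * τ))) τ := by
    intro τ hτ
    have hτ0 : (0:ℝ) < τ := hτ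
    have hτξ : (0:ℝ) < τ + ξ := by linarith
    have h1 : HasDerivAt (fun t : ℝ => (t + ξ) ^ (b - 1))
        ((b - 1) * (τ + ξ) ^ (b - 2)) τ := by
      have := (Real.hasDerivAt_rpow_const (x := τ + ξ) (p := b - 1)
        (Or.inl hτξ.ne')).comp τ ((hasDerivAt_id τ).add_const ξ)
      simpa [Function.comp_def, show b - 1 - 1 = b - 2 by ring] using this
    have h2 : HasDerivAt (fun t : ℝ => t ^ (n + 1)) (((n : ℝ) + 1) * τ ^ n) τ := by
      have := hasDerivAt_pow (n + 1) τ
      simpa using this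
    have h3 : HasDerivAt (fun t : ℝ => Real.exp (-a * t))
        (Real.exp (-a * τ) * (-a)) τ := by
      have := ((hasDerivAt_id τ).const_mul (-a)).exp
      simpa using this
    have := (h1.mul h2).mul h3
    refine this.congr_deriv ?_
    simp only [Pi.mul_apply]
    ring
  -- limit at infinity
  have htend : Tendsto (fun τ : ℝ => (τ + ξ) ^ (b - 1) * τ ^ (n + 1) * Real.exp (-a * τ))
      atTop (𝓝 0) := by
    have hlim : Tendsto
        (fun τ : ℝ => (2:ℝ) ^ (b - 1) * (τ ^ (b + (n : ℝ)) * Real.exp (-a * τ)))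
        atTop (𝓝 ((2:ℝ) ^ (b - 1) * 0)) :=
      (tendsto_rpow_mul_exp_neg_mul_atTop_nhds_zero (b + (n : ℝ)) a ha).const_mul _
    rw [mul_zero] at hlim
    apply squeeze_zero' _ _ hlim
    · filter_upwards [eventually_ge_atTop (0:ℝ)] with τ hτ
      positivity
    · filter_upwards [eventually_ge_atTop (max 1 ξ)] with τ hτ
      have hτ1 : (1:ℝ) ≤ τ := le_trans (le_max_left _ _) hτ
      have hτξ : ξ ≤ τ := le_trans (le_max_right _ _) hτ
      have hτ0 : (0:ℝ) < τ := by linarith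
      calc (τ + ξ) ^ (b - 1) * τ ^ (n + 1) * Real.exp (-a * τ)
          ≤ (2 * τ) ^ (b - 1) * τ ^ (n + 1) * Real.exp (-a * τ) := by
            gcongr <;> linarith
        _ = (2:ℝ) ^ (b - 1) * (τ ^ (b + (n : ℝ)) * Real.exp (-a * τ)) := by
            rw [Real.mul_rpow (by norm_num) hτ0.le,
              show b + (n : ℝ) = (b - 1) + ((n : ℝ) + 1) by ring,
              Real.rpow_add hτ0, ← Real.rpow_natCast τ (n + 1)]
            push_cast
            ring
  -- continuity at 0 from the right
  have hcont : ContinuousWithinAt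
      (fun t : ℝ => (t + ξ) ^ (b - 1) * t ^ (n + 1) * Real.exp (-a * t)) (Ici 0) 0 :=
    (contf (n + 1)).continuousWithinAt
  -- integrability of the derivative
  have hF'int : IntegrableOn
      (fun τ : ℝ => (b - 1) * ((τ + ξ) ^ (b - 2) * τ ^ (n + 1) * Real.exp (-a * τ)) +
        ((n : ℝ) + 1) * ((τ + ξ) ^ (b - 1) * τ ^ n * Real.exp (-a * τ)) -
        a * ((τ + ξ) ^ (b - 1) * τ ^ (n + 1) * Real.exp (-a * τ))) (Ioi 0) :=
    ((intg1.const_mul _).add ((intf n).const_mul _)).sub ((intf (n + 1)).const_mul _)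
  -- integration by parts / FTC
  have hFTC := integral_Ioi_of_hasDerivAt_of_tendsto hcont hderiv hF'int htend
  have hF0 : (0 + ξ) ^ (b - 1) * (0:ℝ) ^ (n + 1) * Real.exp (-a * 0) = 0 := by
    simp
  rw [hF0, sub_zero] at hFTC
  have hI1 : Integrable
      (fun τ : ℝ => (b - 1) * ((τ + ξ) ^ (b - 2) * τ ^ (n + 1) * Real.exp (-a * τ)))
      (volume.restrict (Ioi 0)) := intg1.const_mul _
  have hI2 : Integrable
      (fun τ : ℝ => ((n : ℝ) + 1) * ((τ + ξ) ^ (b - 1) * τ ^ n * Real.exp (-a * τ)))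
      (volume.restrict (Ioi 0)) := (intf n).const_mul _
  have hI3 : Integrable
      (fun τ : ℝ => a * ((τ + ξ) ^ (b - 1) * τ ^ (n + 1) * Real.exp (-a * τ)))
      (volume.restrict (Ioi 0)) := (intf (n + 1)).const_mul _
  have hI12 : Integrable
      (fun τ : ℝ => (b - 1) * ((τ + ξ) ^ (b - 2) * τ ^ (n + 1) * Real.exp (-a * τ)) +
        ((n : ℝ) + 1) * ((τ + ξ) ^ (b - 1) * τ ^ n * Real.exp (-a * τ)))
      (volume.restrict (Ioi 0)) := hI1.add hI2
  rw [integral_sub hI12 hI3, integral_add hI1 hI2,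
    integral_const_mul, integral_const_mul, integral_const_mul] at hFTC
  -- comparison of integrals
  have hle : (∫ τ in Ioi (0:ℝ), (τ + ξ) ^ (b - 2) * τ ^ (n + 1) * Real.exp (-a * τ)) ≤
      ∫ τ in Ioi (0:ℝ), (τ + ξ) ^ (b - 1) * τ ^ n * Real.exp (-a * τ) :=
    setIntegral_mono_on intg1 (intf n) measurableSet_Ioi hg1le
  have hnng1 : (0:ℝ) ≤
      ∫ τ in Ioi (0:ℝ), (τ + ξ) ^ (b - 2) * τ ^ (n + 1) * Real.exp (-a * τ) := by
    apply setIntegral_nonneg measurableSet_Ioi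
    intro τ hτ
    have hτ0 : (0:ℝ) < τ := hτ
    positivity
  rw [hc n, hc (n + 1)]
  nlinarith [mul_le_mul_of_nonneg_left hle hb1]
end

section
/- Let $a, b > 0$, $\xi \geq 0$, set $\beta = \max(1, b)$, and let $n$ be a non-negative integer. Then $0 < F_{n+1} \leq \frac{n+\beta}{a} F_n$, where $F_n = \frac{1}{\Gamma(b)} \int_{\xi}^{+\infty} t^{b-1} e^{-a t} (t-\xi)^n \, dt$. -/
open Real MeasureTheory Set

open Filter

lemma aux_int_rpow_exp {a c ξ : ℝ} (ha : 0 < a) (hc : -1 < c) (hξ : 0 ≤ ξ) :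
    IntegrableOn (fun t : ℝ => t ^ c * Real.exp (-a * t)) (Ioi ξ) := by
  have h := integrableOn_rpow_mul_exp_neg_mul_rpow (p := 1) (s := c) (b := a) hc zero_lt_one ha
  have h' : IntegrableOn (fun t : ℝ => t ^ c * Real.exp (-a * t)) (Ioi 0) := by
    refine h.congr_fun (fun x hx => ?_) measurableSet_Ioi
    simp only [Real.rpow_one]
  exact h'.mono_set (Ioi_subset_Ioi hξ)

lemma aux_int_g {a b ξ : ℝ} (ha : 0 < a) (hb : 0 < b) (hξ : 0 ≤ ξ) (m : ℕ) :
    IntegrableOn (fun t : ℝ => t ^ (b - 1) * Real.exp (-a * t) * (t - ξ) ^ m) (Ioi ξ) := by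
  refine Integrable.mono' (aux_int_rpow_exp ha (c := b - 1 + m)
    (by linarith [Nat.cast_nonneg (α := ℝ) m]) hξ) ?_ ?_
  · refine (ContinuousOn.aestronglyMeasurable ?_ measurableSet_Ioi)
    intro x hx
    have hx0 : (0 : ℝ) < x := lt_of_le_of_lt hξ hx
    exact (((Real.continuousAt_rpow_const x _ (Or.inl hx0.ne')).mul
      ((Real.continuous_exp.comp (continuous_const.mul continuous_id)).continuousAt)).mul
      (((continuous_id.sub continuous_const).pow m).continuousAt)).continuousWithinAt
  · filter_upwards [ae_restrict_mem measurableSet_Ioi] with t ht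
    have htξ : ξ < t := ht
    have ht0 : (0 : ℝ) < t := lt_of_le_of_lt hξ htξ
    have h1 : (0:ℝ) ≤ t ^ (b - 1) := Real.rpow_nonneg ht0.le _
    have h2 : (0:ℝ) ≤ Real.exp (-a * t) := (Real.exp_pos _).le
    have h3 : (0:ℝ) ≤ t - ξ := by linarith
    rw [Real.norm_eq_abs, abs_of_nonneg (by positivity)]
    have h4 : (t - ξ) ^ m ≤ t ^ m := pow_le_pow_left₀ h3 (by linarith) m
    calc t ^ (b - 1) * Real.exp (-a * t) * (t - ξ) ^ m
        ≤ t ^ (b - 1) * Real.exp (-a * t) * t ^ m := by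
          exact mul_le_mul_of_nonneg_left h4 (by positivity)
      _ = t ^ (b - 1 + ↑m) * Real.exp (-a * t) := by
          rw [Real.rpow_add ht0, Real.rpow_natCast]; ring

/-- pointwise bound for the `J` integrand. -/
lemma aux_J_le_g {a b ξ : ℝ} (hb : 0 < b) (hξ : 0 ≤ ξ) (n : ℕ) {t : ℝ} (ht : ξ < t) :
    t ^ (b - 2) * Real.exp (-a * t) * (t - ξ) ^ (n + 1)
      ≤ t ^ (b - 1) * Real.exp (-a * t) * (t - ξ) ^ n := by
  have ht0 : (0 : ℝ) < t := lt_of_le_of_lt hξ ht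
  have h3 : (0:ℝ) ≤ t - ξ := by linarith
  have key : t ^ (b - 2) * (t - ξ) ≤ t ^ (b - 1) := by
    have : t ^ (b - 1) = t ^ (b - 2) * t := by
      rw [← Real.rpow_add_one ht0.ne' (b - 2)]; ring_nf
    rw [this]
    exact mul_le_mul_of_nonneg_left (by linarith) (Real.rpow_nonneg ht0.le _)
  calc t ^ (b - 2) * Real.exp (-a * t) * (t - ξ) ^ (n + 1)
      = (t ^ (b - 2) * (t - ξ)) * Real.exp (-a * t) * (t - ξ) ^ n := by ring
    _ ≤ t ^ (b - 1) * Real.exp (-a * t) * (t - ξ) ^ n := by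
        apply mul_le_mul_of_nonneg_right _ (pow_nonneg h3 n)
        exact mul_le_mul_of_nonneg_right key (Real.exp_pos _).le

lemma aux_int_J {a b ξ : ℝ} (ha : 0 < a) (hb : 0 < b) (hξ : 0 ≤ ξ) (n : ℕ) :
    IntegrableOn (fun t : ℝ => t ^ (b - 2) * Real.exp (-a * t) * (t - ξ) ^ (n + 1)) (Ioi ξ) := by
  refine Integrable.mono' (aux_int_g ha hb hξ n) ?_ ?_
  · refine (ContinuousOn.aestronglyMeasurable ?_ measurableSet_Ioi)
    intro x hx
    have hx0 : (0 : ℝ) < x := lt_of_le_of_lt hξ hx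
    exact (((Real.continuousAt_rpow_const x _ (Or.inl hx0.ne')).mul
      ((Real.continuous_exp.comp (continuous_const.mul continuous_id)).continuousAt)).mul
      (((continuous_id.sub continuous_const).pow (n+1)).continuousAt)).continuousWithinAt
  · filter_upwards [ae_restrict_mem measurableSet_Ioi] with t ht
    have htξ : ξ < t := ht
    have ht0 : (0 : ℝ) < t := lt_of_le_of_lt hξ htξ
    have h3 : (0:ℝ) ≤ t - ξ := by linarith
    rw [Real.norm_eq_abs, abs_of_nonneg ?_]
    · exact aux_J_le_g hb hξ n htξ
    · have := Real.rpow_nonneg ht0.le (b - 2)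
      positivity

/-- The key integration-by-parts identity. -/
lemma aux_ibp {a b ξ : ℝ} (ha : 0 < a) (hb : 0 < b) (hξ : 0 ≤ ξ) (n : ℕ) :
    a * ∫ t in Ioi ξ, t ^ (b - 1) * Real.exp (-a * t) * (t - ξ) ^ (n + 1)
      = ((n : ℝ) + 1) * (∫ t in Ioi ξ, t ^ (b - 1) * Real.exp (-a * t) * (t - ξ) ^ n)
        + (b - 1) * ∫ t in Ioi ξ, t ^ (b - 2) * Real.exp (-a * t) * (t - ξ) ^ (n + 1) := by
  set φ : ℝ → ℝ := fun t => t ^ (b - 1) * Real.exp (-a * t) * (t - ξ) ^ (n + 1) with hφdef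
  set φ' : ℝ → ℝ := fun t =>
      (b - 1) * (t ^ (b - 2) * Real.exp (-a * t) * (t - ξ) ^ (n + 1))
      + (-a) * (t ^ (b - 1) * Real.exp (-a * t) * (t - ξ) ^ (n + 1))
      + ((n : ℝ) + 1) * (t ^ (b - 1) * Real.exp (-a * t) * (t - ξ) ^ n) with hφ'def
  have hderiv : ∀ x ∈ Ioi ξ, HasDerivAt φ (φ' x) x := by
    intro x hx
    have hx0 : (0 : ℝ) < x := lt_of_le_of_lt hξ hx
    have h1 : HasDerivAt (fun t : ℝ => t ^ (b - 1)) ((b - 1) * x ^ (b - 2)) x := by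
      have := Real.hasDerivAt_rpow_const (x := x) (p := b - 1) (Or.inl hx0.ne')
      convert this using 2; ring_nf
    have h2 : HasDerivAt (fun t : ℝ => Real.exp (-a * t)) (Real.exp (-a * x) * (-a)) x := by
      have hlin : HasDerivAt (fun t : ℝ => -a * t) (-a) x := by
        simpa using (hasDerivAt_id x).const_mul (-a)
      exact hlin.exp
    have h3 : HasDerivAt (fun t : ℝ => (t - ξ) ^ (n + 1))
        ((↑(n + 1) : ℝ) * (x - ξ) ^ n * 1) x := by
      have := ((hasDerivAt_id x).sub_const ξ).fun_pow (n + 1)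
      simpa using this
    have := (h1.fun_mul h2).fun_mul h3
    convert this using 1
    · rfl
    · rfl
    simp only [hφ'def]
    push_cast
    ring
  have hf'int : IntegrableOn φ' (Ioi ξ) := by
    exact (((aux_int_J ha hb hξ n).const_mul _).add
      ((aux_int_g ha hb hξ (n+1)).const_mul _)).add ((aux_int_g ha hb hξ n).const_mul _)
  have htop : Tendsto φ atTop (nhds 0) := by
    apply squeeze_zero' (g := fun t => t ^ (b - 1 + (↑n + 1)) * Real.exp (-a * t))
    · filter_upwards [eventually_gt_atTop ξ] with t ht
      have ht0 : (0 : ℝ) < t := lt_of_le_of_lt hξ ht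
      have := Real.rpow_nonneg ht0.le (b - 1)
      have : (0:ℝ) ≤ t - ξ := by linarith
      positivity
    · filter_upwards [eventually_gt_atTop ξ] with t ht
      have ht0 : (0 : ℝ) < t := lt_of_le_of_lt hξ ht
      have h3 : (0:ℝ) ≤ t - ξ := by linarith
      have h4 : (t - ξ) ^ (n+1) ≤ t ^ (n+1) := pow_le_pow_left₀ h3 (by linarith) _
      calc φ t ≤ t ^ (b - 1) * Real.exp (-a * t) * t ^ (n + 1) := by
            exact mul_le_mul_of_nonneg_left h4 (by positivity)
        _ = t ^ (b - 1 + (↑n + 1)) * Real.exp (-a * t) := by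
            rw [show (b - 1 + (↑n + 1)) = b - 1 + ((n : ℝ) + 1) by ring, Real.rpow_add ht0,
              show ((n : ℝ) + 1) = ((n + 1 : ℕ) : ℝ) by push_cast; ring, Real.rpow_natCast]
            ring
    · exact tendsto_rpow_mul_exp_neg_mul_atTop_nhds_zero _ a ha
  have hcont : ContinuousWithinAt φ (Ici ξ) ξ := by
    rcases eq_or_lt_of_le hξ with h0 | h0
    · -- ξ = 0
      subst h0
      have hφ0 : φ 0 = 0 := by simp [hφdef]
      rw [ContinuousWithinAt, hφ0]
      apply squeeze_zero' (g := fun t => t ^ (b + n))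
      · filter_upwards [self_mem_nhdsWithin] with t ht
        have ht0 : (0:ℝ) ≤ t := ht
        exact mul_nonneg (mul_nonneg (Real.rpow_nonneg ht0 _) (Real.exp_pos _).le)
          (pow_nonneg (by linarith) _)
      · filter_upwards [self_mem_nhdsWithin] with t ht
        have ht0 : (0:ℝ) ≤ t := ht
        rcases eq_or_lt_of_le ht0 with h | h
        · simp [hφdef, ← h, Real.zero_rpow (ne_of_gt (by linarith [Nat.cast_nonneg (α := ℝ) n] : (0:ℝ) < b + n))]
        · have hexp : Real.exp (-a * t) ≤ 1 := by
            rw [Real.exp_le_one_iff]; nlinarith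
          calc φ t ≤ t ^ (b - 1) * 1 * (t - 0) ^ (n + 1) := by
                apply mul_le_mul_of_nonneg_right _ (pow_nonneg (by linarith) _)
                exact mul_le_mul_of_nonneg_left hexp (Real.rpow_nonneg ht0 _)
            _ = t ^ (b + n) := by
                rw [sub_zero, show ((n:ℝ) = ((n:ℕ):ℝ)) from rfl, show b + (n:ℝ) = b - 1 + ((n+1 : ℕ):ℝ) by push_cast; ring,
                  Real.rpow_add h, Real.rpow_natCast]
                ring
      · have : ContinuousWithinAt (fun t : ℝ => t ^ (b + n)) (Ici (0:ℝ)) 0 :=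
          (Real.continuousAt_rpow_const 0 (b + n) (Or.inr (by positivity))).continuousWithinAt
        have h0 : (0:ℝ) ^ (b + (n:ℝ)) = 0 :=
          Real.zero_rpow (ne_of_gt (by linarith [Nat.cast_nonneg (α := ℝ) n]))
        rw [ContinuousWithinAt] at this
        simpa [h0] using this
    · -- ξ > 0
      exact ((((Real.continuousAt_rpow_const ξ _ (Or.inl h0.ne')).mul
        ((Real.continuous_exp.comp (continuous_const.mul continuous_id)).continuousAt)).mul
        (((continuous_id.sub continuous_const).pow (n+1)).continuousAt))).continuousWithinAt
  have key : ∫ t in Ioi ξ, φ' t = 0 - φ ξ :=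
    integral_Ioi_of_hasDerivAt_of_tendsto hcont hderiv hf'int htop
  have hφξ : φ ξ = 0 := by simp [hφdef]
  rw [hφξ, sub_zero] at key
  have i1 : IntegrableOn (fun t : ℝ =>
      (b - 1) * (t ^ (b - 2) * Real.exp (-a * t) * (t - ξ) ^ (n + 1))) (Ioi ξ) :=
    (aux_int_J ha hb hξ n).const_mul _
  have i2 : IntegrableOn (fun t : ℝ =>
      (-a) * (t ^ (b - 1) * Real.exp (-a * t) * (t - ξ) ^ (n + 1))) (Ioi ξ) :=
    (aux_int_g ha hb hξ (n + 1)).const_mul _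
  have i3 : IntegrableOn (fun t : ℝ =>
      ((n : ℝ) + 1) * (t ^ (b - 1) * Real.exp (-a * t) * (t - ξ) ^ n)) (Ioi ξ) :=
    (aux_int_g ha hb hξ n).const_mul _
  have i12 : IntegrableOn (fun t : ℝ =>
      (b - 1) * (t ^ (b - 2) * Real.exp (-a * t) * (t - ξ) ^ (n + 1))
      + (-a) * (t ^ (b - 1) * Real.exp (-a * t) * (t - ξ) ^ (n + 1))) (Ioi ξ) := i1.add i2
  have key2 : (b - 1) * (∫ t in Ioi ξ, t ^ (b - 2) * Real.exp (-a * t) * (t - ξ) ^ (n + 1))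
        + (-a) * (∫ t in Ioi ξ, t ^ (b - 1) * Real.exp (-a * t) * (t - ξ) ^ (n + 1))
        + ((n : ℝ) + 1) * (∫ t in Ioi ξ, t ^ (b - 1) * Real.exp (-a * t) * (t - ξ) ^ n)
      = 0 := by
    rw [← integral_const_mul, ← integral_const_mul, ← integral_const_mul,
      ← integral_add i1 i2, ← integral_add i12 i3]
    exact key
  linarith

/-- For `a, b > 0`, `ξ ≥ 0`, `β = max 1 b` and every `n : ℕ`:
`0 < F_(n+1) ≤ ((n + β)/a) F_n`. -/
theorem F_asymptotic_property (a b ξ : ℝ) (ha : 0 < a) (hb : 0 < b) (hξ : 0 ≤ ξ)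
    (β : ℝ) (hβ : β = max 1 b) (n : ℕ)
    (F : ℕ → ℝ)
    (hF : ∀ m : ℕ, F m = (1 / Real.Gamma b) *
      ∫ t in Set.Ioi ξ, t ^ (b - 1) * Real.exp (-a * t) * (t - ξ) ^ m) :
    0 < F (n + 1) ∧ F (n + 1) ≤ (((n : ℝ) + β) / a) * F n := by
  have hΓ : 0 < Real.Gamma b := Real.Gamma_pos_of_pos hb
  have hΓinv : 0 < 1 / Real.Gamma b := by positivity
  set I : ℕ → ℝ := fun m => ∫ t in Ioi ξ, t ^ (b - 1) * Real.exp (-a * t) * (t - ξ) ^ m with hI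
  set J : ℝ := ∫ t in Ioi ξ, t ^ (b - 2) * Real.exp (-a * t) * (t - ξ) ^ (n + 1) with hJ
  -- positivity of I (n+1)
  have hIpos : ∀ m : ℕ, 0 < I m := by
    intro m
    rw [hI]
    have hnonneg : 0 ≤ᵐ[volume.restrict (Ioi ξ)]
        fun t : ℝ => t ^ (b - 1) * Real.exp (-a * t) * (t - ξ) ^ m := by
      filter_upwards [ae_restrict_mem measurableSet_Ioi] with t ht
      have ht0 : (0:ℝ) < t := lt_of_le_of_lt hξ ht
      have h3 : (0:ℝ) ≤ t - ξ := by linarith [ht.out]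
      exact mul_nonneg (mul_nonneg (Real.rpow_nonneg ht0.le _) (Real.exp_pos _).le)
        (pow_nonneg h3 _)
    rw [setIntegral_pos_iff_support_of_nonneg_ae hnonneg (aux_int_g ha hb hξ m)]
    have hsub : Ioi ξ ⊆ (Function.support fun t : ℝ =>
        t ^ (b - 1) * Real.exp (-a * t) * (t - ξ) ^ m) ∩ Ioi ξ := by
      intro t ht
      have ht0 : (0:ℝ) < t := lt_of_le_of_lt hξ ht
      have h3 : (0:ℝ) < t - ξ := by simpa [sub_pos] using ht.out
      refine ⟨?_, ht⟩
      have : (0:ℝ) < t ^ (b - 1) * Real.exp (-a * t) * (t - ξ) ^ m := by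
        have := Real.rpow_pos_of_pos ht0 (b - 1)
        positivity
      exact ne_of_gt this
    calc (0 : ENNReal) < volume (Ioi ξ) := by simp [Real.volume_Ioi]
      _ ≤ _ := measure_mono hsub
  -- nonnegativity of J and J ≤ I n
  have hJnonneg : 0 ≤ J := by
    rw [hJ]
    apply setIntegral_nonneg measurableSet_Ioi
    intro t ht
    have ht0 : (0:ℝ) < t := lt_of_le_of_lt hξ ht
    have h3 : (0:ℝ) ≤ t - ξ := by linarith [ht.out]
    exact mul_nonneg (mul_nonneg (Real.rpow_nonneg ht0.le _) (Real.exp_pos _).le)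
      (pow_nonneg h3 _)
  have hJle : J ≤ I n := by
    rw [hJ, hI]
    exact setIntegral_mono_on (aux_int_J ha hb hξ n) (aux_int_g ha hb hξ n) measurableSet_Ioi
      (fun t ht => aux_J_le_g hb hξ n ht)
  have hibp : a * I (n + 1) = ((n : ℝ) + 1) * I n + (b - 1) * J := aux_ibp ha hb hξ n
  -- β ≥ 1 and key inequality
  have hβ1 : 1 ≤ β := by rw [hβ]; exact le_max_left _ _
  have hkey : a * I (n + 1) ≤ ((n : ℝ) + β) * I n := by
    rcases le_or_gt 1 b with h1b | h1b
    · have hβb : β = b := by rw [hβ, max_eq_right h1b]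
      have : (b - 1) * J ≤ (b - 1) * I n :=
        mul_le_mul_of_nonneg_left hJle (by linarith)
      rw [hβb]; nlinarith
    · have hβb : β = 1 := by rw [hβ, max_eq_left h1b.le]
      have : (b - 1) * J ≤ 0 := mul_nonpos_of_nonpos_of_nonneg (by linarith) hJnonneg
      rw [hβb]; nlinarith
  constructor
  · rw [hF]
    exact mul_pos hΓinv (hIpos (n + 1))
  · rw [hF, hF]
    show 1 / Real.Gamma b * I (n + 1) ≤ ((n : ℝ) + β) / a * (1 / Real.Gamma b * I n)
    have h2 := mul_le_mul_of_nonneg_left hkey hΓinv.le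
    calc 1 / Real.Gamma b * I (n + 1)
        = (1 / Real.Gamma b * (a * I (n + 1))) / a := by field_simp
      _ ≤ (1 / Real.Gamma b * (((n : ℝ) + β) * I n)) / a := by gcongr
      _ = ((n : ℝ) + β) / a * (1 / Real.Gamma b * I n) := by ring
end

section
/- Let $a, b > 0$, $\xi \geq 0$, set $\beta = \max(1, b)$, and let $N$ be a non-negative integer. Then $F_N \leq \frac{\prod_{k=0}^{N-1}(k+\beta)}{a^N} F_0$, where $F_n = \frac{1}{\Gamma(b)} \int_{\xi}^{+\infty} t^{b-1} e^{-a t} (t-\xi)^n \, dt$. In particular $F_N = \mathcal{O}(a^{-N}) F_0$ as $a \to +\infty$, uniformly in $\xi \geq 0$. -/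
open Real MeasureTheory Set Filter

private lemma FN_contOn (a c ξ : ℝ) (hξ : 0 ≤ ξ) (m : ℕ) :
    ContinuousOn (fun t : ℝ => t ^ c * Real.exp (-a * t) * (t - ξ) ^ m) (Set.Ioi ξ) := by
  intro t ht
  have ht0 : 0 < t := lt_of_le_of_lt hξ ht
  exact (((Real.continuousAt_rpow_const t c (Or.inl ht0.ne')).mul
    ((Real.continuous_exp.comp (continuous_const.mul continuous_id)).continuousAt)).mul
    (((continuous_id.sub continuous_const).pow m).continuousAt)).continuousWithinAt

private lemma FN_integrable (a b ξ : ℝ) (ha : 0 < a) (hb : 0 < b) (hξ : 0 ≤ ξ) (m : ℕ) :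
    IntegrableOn (fun t : ℝ => t ^ (b - 1) * Real.exp (-a * t) * (t - ξ) ^ m) (Set.Ioi ξ) := by
  have hmaj : IntegrableOn (fun t : ℝ => t ^ (b + m - 1) * Real.exp (-a * t)) (Set.Ioi ξ) := by
    have h0 : IntegrableOn (fun t : ℝ => t ^ (b + m - 1) * Real.exp (-a * t)) (Set.Ioi 0) := by
      have := integrableOn_rpow_mul_exp_neg_mul_rpow (p := 1) (s := b + m - 1) (b := a)
        (by linarith [Nat.cast_nonneg (α:=ℝ) m]) one_pos ha
      simpa using this
    exact h0.mono_set (Set.Ioi_subset_Ioi hξ)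
  refine Integrable.mono' hmaj ((FN_contOn a (b-1) ξ hξ m).aestronglyMeasurable measurableSet_Ioi) ?_
  filter_upwards [self_mem_ae_restrict (measurableSet_Ioi : MeasurableSet (Set.Ioi ξ))] with t ht
  have ht0 : 0 < t := lt_of_le_of_lt hξ ht
  have h1 : (t - ξ) ^ m ≤ t ^ m :=
    pow_le_pow_left₀ (sub_nonneg.2 (le_of_lt ht)) (sub_le_self t hξ) m
  have h2 : t ^ (b - 1) * (t - ξ) ^ m ≤ t ^ (b + m - 1) := by
    calc t ^ (b - 1) * (t - ξ) ^ m ≤ t ^ (b - 1) * t ^ m :=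
          mul_le_mul_of_nonneg_left h1 (Real.rpow_nonneg ht0.le _)
      _ = t ^ (b + m - 1) := by
          rw [← Real.rpow_natCast t m, ← Real.rpow_add ht0]; ring_nf
  have hnn : 0 ≤ t ^ (b - 1) * Real.exp (-a * t) * (t - ξ) ^ m := mul_nonneg (mul_nonneg (Real.rpow_nonneg ht0.le _) (Real.exp_pos _).le) (pow_nonneg (sub_nonneg.2 ht.le) _)
  rw [Real.norm_of_nonneg hnn]
  calc t ^ (b - 1) * Real.exp (-a * t) * (t - ξ) ^ m
      = t ^ (b - 1) * (t - ξ) ^ m * Real.exp (-a * t) := by ring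
    _ ≤ t ^ (b + m - 1) * Real.exp (-a * t) :=
        mul_le_mul_of_nonneg_right h2 (Real.exp_pos _).le

private lemma FN_ptwise (a b ξ : ℝ) (hξ : 0 ≤ ξ) (n : ℕ) :
    ∀ t ∈ Set.Ioi ξ, t ^ (b - 2) * Real.exp (-a * t) * (t - ξ) ^ (n + 1) ≤
      t ^ (b - 1) * Real.exp (-a * t) * (t - ξ) ^ n := by
  intro t ht
  have ht0 : 0 < t := lt_of_le_of_lt hξ ht
  have htξ : 0 ≤ t - ξ := sub_nonneg.2 (le_of_lt ht)
  have key : t ^ (b - 2) * (t - ξ) ≤ t ^ (b - 1) := by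
    calc t ^ (b - 2) * (t - ξ) ≤ t ^ (b - 2) * t :=
          mul_le_mul_of_nonneg_left (sub_le_self t hξ) (Real.rpow_nonneg ht0.le _)
      _ = t ^ (b - 1) := by
          rw [show b - 1 = (b - 2) + 1 by ring, Real.rpow_add_one ht0.ne']
  calc t ^ (b - 2) * Real.exp (-a * t) * (t - ξ) ^ (n + 1)
      = (t ^ (b - 2) * (t - ξ)) * Real.exp (-a * t) * (t - ξ) ^ n := by ring
    _ ≤ t ^ (b - 1) * Real.exp (-a * t) * (t - ξ) ^ n := by
        apply mul_le_mul_of_nonneg_right _ (pow_nonneg htξ n)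
        exact mul_le_mul_of_nonneg_right key (Real.exp_pos _).le

private lemma FN_integrable2 (a b ξ : ℝ) (ha : 0 < a) (hb : 0 < b) (hξ : 0 ≤ ξ) (n : ℕ) :
    IntegrableOn (fun t : ℝ => t ^ (b - 2) * Real.exp (-a * t) * (t - ξ) ^ (n + 1))
      (Set.Ioi ξ) := by
  refine Integrable.mono' (FN_integrable a b ξ ha hb hξ n)
    ((FN_contOn a (b - 2) ξ hξ (n + 1)).aestronglyMeasurable measurableSet_Ioi) ?_
  filter_upwards [self_mem_ae_restrict (measurableSet_Ioi : MeasurableSet (Set.Ioi ξ))] with t ht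
  have ht0 : 0 < t := lt_of_le_of_lt hξ ht
  have hnn : 0 ≤ t ^ (b - 2) * Real.exp (-a * t) * (t - ξ) ^ (n + 1) :=
    mul_nonneg (mul_nonneg (Real.rpow_nonneg ht0.le _) (Real.exp_pos _).le)
      (pow_nonneg (sub_nonneg.2 ht.le) _)
  rw [Real.norm_of_nonneg hnn]
  exact FN_ptwise a b ξ hξ n t ht

private lemma FN_ibp (a b ξ : ℝ) (ha : 0 < a) (hb : 0 < b) (hξ : 0 ≤ ξ) (n : ℕ) :
    a * (∫ t in Set.Ioi ξ, t ^ (b - 1) * Real.exp (-a * t) * (t - ξ) ^ (n + 1)) =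
      (b - 1) * (∫ t in Set.Ioi ξ, t ^ (b - 2) * Real.exp (-a * t) * (t - ξ) ^ (n + 1)) +
      ((n : ℝ) + 1) * ∫ t in Set.Ioi ξ, t ^ (b - 1) * Real.exp (-a * t) * (t - ξ) ^ n := by
  set f : ℝ → ℝ := fun t => t ^ (b - 1) * Real.exp (-a * t) * (t - ξ) ^ (n + 1) with hf
  set f' : ℝ → ℝ := fun x =>
    ((b - 1) * (x ^ (b - 2) * Real.exp (-a * x) * (x - ξ) ^ (n + 1)) -
      a * (x ^ (b - 1) * Real.exp (-a * x) * (x - ξ) ^ (n + 1))) +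
      ((n : ℝ) + 1) * (x ^ (b - 1) * Real.exp (-a * x) * (x - ξ) ^ n) with hf'
  have hderiv : ∀ x ∈ Set.Ioi ξ, HasDerivAt f (f' x) x := by
    intro x hx
    have hx0 : 0 < x := lt_of_le_of_lt hξ hx
    have h1 : HasDerivAt (fun t : ℝ => t ^ (b - 1)) ((b - 1) * x ^ (b - 1 - 1)) x :=
      Real.hasDerivAt_rpow_const (Or.inl hx0.ne')
    have h2 : HasDerivAt (fun t : ℝ => Real.exp (-a * t)) (Real.exp (-a * x) * (-a * 1)) x :=
      ((hasDerivAt_id x).const_mul (-a)).exp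
    have h3 : HasDerivAt (fun t : ℝ => (t - ξ) ^ (n + 1))
        ((↑(n + 1) : ℝ) * (x - ξ) ^ n * 1) x := by
      simpa using (((hasDerivAt_id x).sub_const ξ).fun_pow (n + 1))
    have := (h1.mul h2).mul h3
    refine HasDerivAt.congr_deriv (f := f) this ?_
    simp only [f', Pi.mul_apply]
    rw [show b - 1 - 1 = b - 2 by ring]
    push_cast
    ring
  have hcont : ContinuousWithinAt f (Set.Ici ξ) ξ := by
    rcases eq_or_lt_of_le hξ with hξ0 | hξ0
    · -- ξ = 0
      subst hξ0
      have hg : ContinuousWithinAt (fun t : ℝ => t ^ (b + n) * Real.exp (-a * t))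
          (Set.Ici (0 : ℝ)) 0 := by
        exact ((Real.continuousAt_rpow_const 0 (b + n) (Or.inr (by positivity))).mul
          ((Real.continuous_exp.comp (continuous_const.mul continuous_id)).continuousAt)).continuousWithinAt
      refine hg.congr (fun t htt => ?_) ?_
      · rcases eq_or_lt_of_le (Set.mem_Ici.mp htt) with h0 | h0
        · simp [f, ← h0, Real.zero_rpow (by positivity : b + (n:ℝ) ≠ 0)]
        · have : t ^ (b - 1) * (t - 0) ^ (n + 1) = t ^ (b + n) := by
            rw [sub_zero, ← Real.rpow_natCast t (n + 1), ← Real.rpow_add h0]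
            push_cast; ring_nf
          simp only [f]
          rw [show t ^ (b-1) * Real.exp (-a*t) * (t-0)^(n+1)
              = t ^ (b-1) * (t-0)^(n+1) * Real.exp (-a*t) by ring, this]
      · simp [f, Real.zero_rpow (by positivity : b + (n:ℝ) ≠ 0)]
    · exact (((Real.continuousAt_rpow_const ξ (b - 1) (Or.inl hξ0.ne')).mul
        ((Real.continuous_exp.comp (continuous_const.mul continuous_id)).continuousAt)).mul
        (((continuous_id.sub continuous_const).pow (n + 1)).continuousAt)).continuousWithinAt
  have hint2 : IntegrableOn
      (fun t : ℝ => t ^ (b - 2) * Real.exp (-a * t) * (t - ξ) ^ (n + 1)) (Set.Ioi ξ) :=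
    FN_integrable2 a b ξ ha hb hξ n
  have hint1 : IntegrableOn
      (fun t : ℝ => t ^ (b - 1) * Real.exp (-a * t) * (t - ξ) ^ (n + 1)) (Set.Ioi ξ) :=
    FN_integrable a b ξ ha hb hξ (n + 1)
  have hint0 : IntegrableOn
      (fun t : ℝ => t ^ (b - 1) * Real.exp (-a * t) * (t - ξ) ^ n) (Set.Ioi ξ) :=
    FN_integrable a b ξ ha hb hξ n
  have f'int : IntegrableOn f' (Set.Ioi ξ) :=
    (((hint2.const_mul (b - 1)).sub (hint1.const_mul a)).add (hint0.const_mul ((n : ℝ) + 1)))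
  have hlim : Tendsto f atTop (nhds 0) := by
    apply squeeze_zero' (g := fun t : ℝ => t ^ (b + n) * Real.exp (-a * t))
    · filter_upwards [eventually_gt_atTop ξ] with t ht
      have ht0 : 0 < t := lt_of_le_of_lt hξ ht
      exact mul_nonneg (mul_nonneg (Real.rpow_nonneg ht0.le _) (Real.exp_pos _).le)
        (pow_nonneg (sub_nonneg.2 ht.le) _)
    · filter_upwards [eventually_gt_atTop (max ξ 0)] with t ht
      have ht0 : 0 < t := lt_of_le_of_lt (le_max_right _ _) ht
      have htξ : ξ < t := lt_of_le_of_lt (le_max_left _ _) ht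
      have h1 : (t - ξ) ^ (n + 1) ≤ t ^ (n + 1) :=
        pow_le_pow_left₀ (sub_nonneg.2 htξ.le) (sub_le_self t hξ) _
      have h2 : t ^ (b - 1) * (t - ξ) ^ (n + 1) ≤ t ^ (b + n) := by
        calc t ^ (b - 1) * (t - ξ) ^ (n + 1) ≤ t ^ (b - 1) * t ^ (n + 1) :=
              mul_le_mul_of_nonneg_left h1 (Real.rpow_nonneg ht0.le _)
          _ = t ^ (b + n) := by
              rw [← Real.rpow_natCast t (n + 1), ← Real.rpow_add ht0]
              push_cast; ring_nf
      calc f t = t ^ (b - 1) * (t - ξ) ^ (n + 1) * Real.exp (-a * t) := by simp only [f]; ring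
        _ ≤ t ^ (b + n) * Real.exp (-a * t) :=
            mul_le_mul_of_nonneg_right h2 (Real.exp_pos _).le
    · exact tendsto_rpow_mul_exp_neg_mul_atTop_nhds_zero (b + n) a ha
  have hFTC : ∫ x in Set.Ioi ξ, f' x = 0 - f ξ :=
    integral_Ioi_of_hasDerivAt_of_tendsto hcont hderiv f'int hlim
  have hfξ : f ξ = 0 := by simp [f]
  rw [hfξ, zero_sub] at hFTC
  have hsplit : ∫ x in Set.Ioi ξ, f' x =
      ((b - 1) * (∫ t in Set.Ioi ξ, t ^ (b - 2) * Real.exp (-a * t) * (t - ξ) ^ (n + 1)) -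
        a * ∫ t in Set.Ioi ξ, t ^ (b - 1) * Real.exp (-a * t) * (t - ξ) ^ (n + 1)) +
      ((n : ℝ) + 1) * ∫ t in Set.Ioi ξ, t ^ (b - 1) * Real.exp (-a * t) * (t - ξ) ^ n := by
    have hs1 : Integrable (fun x : ℝ =>
        (b - 1) * (x ^ (b - 2) * Real.exp (-a * x) * (x - ξ) ^ (n + 1)) -
          a * (x ^ (b - 1) * Real.exp (-a * x) * (x - ξ) ^ (n + 1)))
        (volume.restrict (Set.Ioi ξ)) := by
      exact (hint2.const_mul (b - 1)).sub (hint1.const_mul a)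
    simp only [hf']
    rw [integral_add hs1 (hint0.const_mul ((n : ℝ) + 1)),
      integral_sub (hint2.const_mul (b - 1)) (hint1.const_mul a),
      MeasureTheory.integral_const_mul, MeasureTheory.integral_const_mul, MeasureTheory.integral_const_mul]
  have hfeq : -f ξ = (0 : ℝ) := by rw [hfξ]; ring
  rw [hsplit] at hFTC
  linarith [hFTC]

/-- For `a, b > 0`, `ξ ≥ 0`, `β = max 1 b` and every `N : ℕ`:
`F_N ≤ (∏_{k=0}^{N-1} (k + β)) / a^N * F_0`. -/
theorem F_N_estimate (a b ξ : ℝ) (ha : 0 < a) (hb : 0 < b) (hξ : 0 ≤ ξ)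
    (β : ℝ) (hβ : β = max 1 b) (N : ℕ)
    (F : ℕ → ℝ)
    (hF : ∀ m : ℕ, F m = (1 / Real.Gamma b) *
      ∫ t in Set.Ioi ξ, t ^ (b - 1) * Real.exp (-a * t) * (t - ξ) ^ m) :
    F N ≤ (∏ k ∈ Finset.range N, ((k : ℝ) + β)) / a ^ N * F 0 := by
  have hΓ : 0 < Real.Gamma b := Real.Gamma_pos_of_pos hb
  set J : ℕ → ℝ :=
    fun m => ∫ t in Set.Ioi ξ, t ^ (b - 1) * Real.exp (-a * t) * (t - ξ) ^ m with hJ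
  have hJnonneg : ∀ m, 0 ≤ J m := by
    intro m
    apply setIntegral_nonneg measurableSet_Ioi
    intro t ht
    have ht0 : 0 < t := lt_of_le_of_lt hξ ht
    exact mul_nonneg (mul_nonneg (Real.rpow_nonneg ht0.le _) (Real.exp_pos _).le)
      (pow_nonneg (sub_nonneg.2 (le_of_lt ht)) _)
  have hβ1 : (1 : ℝ) ≤ β := hβ ▸ le_max_left 1 b
  have hstep : ∀ n : ℕ, a * J (n + 1) ≤ ((n : ℝ) + β) * J n := by
    intro n
    have hibp := FN_ibp a b ξ ha hb hξ n
    set K := ∫ t in Set.Ioi ξ, t ^ (b - 2) * Real.exp (-a * t) * (t - ξ) ^ (n + 1) with hK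
    have hK0 : 0 ≤ K := by
      apply setIntegral_nonneg measurableSet_Ioi
      intro t ht
      exact mul_nonneg (mul_nonneg (Real.rpow_nonneg (lt_of_le_of_lt hξ ht).le _)
        (Real.exp_pos _).le) (pow_nonneg (sub_nonneg.2 ht.le) _)
    have hKb : (b - 1) * K ≤ (β - 1) * J n := by
      rcases le_or_gt b 1 with hb1 | hb1
      · have h1 : (b - 1) * K ≤ 0 := mul_nonpos_of_nonpos_of_nonneg (by linarith) hK0
        have h2 : 0 ≤ (β - 1) * J n := mul_nonneg (by linarith) (hJnonneg n)
        linarith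
      · have hβb : β = b := by rw [hβ, max_eq_right hb1.le]
        have hKJ : K ≤ J n :=
          setIntegral_mono_on (FN_integrable2 a b ξ ha hb hξ n)
            (FN_integrable a b ξ ha hb hξ n) measurableSet_Ioi (FN_ptwise a b ξ hξ n)
        rw [hβb]
        exact mul_le_mul_of_nonneg_left hKJ (by linarith)
    have : a * J (n + 1) = (b - 1) * K + ((n : ℝ) + 1) * J n := hibp
    nlinarith [hJnonneg n]
  have hmain : ∀ n : ℕ, J n ≤ (∏ k ∈ Finset.range n, ((k : ℝ) + β)) / a ^ n * J 0 := by
    intro n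
    induction n with
    | zero => simp
    | succ n ih =>
      have h1 : J (n + 1) ≤ ((n : ℝ) + β) / a * J n := by
        rw [div_mul_eq_mul_div, le_div_iff₀ ha, mul_comm]
        exact hstep n
      have h2 : ((n : ℝ) + β) / a * J n ≤
          ((n : ℝ) + β) / a * ((∏ k ∈ Finset.range n, ((k : ℝ) + β)) / a ^ n * J 0) :=
        mul_le_mul_of_nonneg_left ih (by positivity)
      have h3 : ((n : ℝ) + β) / a * ((∏ k ∈ Finset.range n, ((k : ℝ) + β)) / a ^ n * J 0) =
          (∏ k ∈ Finset.range (n + 1), ((k : ℝ) + β)) / a ^ (n + 1) * J 0 := by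
        rw [Finset.prod_range_succ, pow_succ]
        field_simp
      linarith
  rw [hF N, hF 0]
  calc (1 / Real.Gamma b) * J N
      ≤ (1 / Real.Gamma b) * ((∏ k ∈ Finset.range N, ((k : ℝ) + β)) / a ^ N * J 0) :=
        mul_le_mul_of_nonneg_left (hmain N) (by positivity)
    _ = (∏ k ∈ Finset.range N, ((k : ℝ) + β)) / a ^ N * ((1 / Real.Gamma b) * J 0) := by ring
end

section
/- Let $b > 0$ with $b \neq 1$, let $\xi > 0$, and let $d_n = f^{(n)}(\xi)/n!$ be the Taylor coefficients at $\xi$ of $f(t) = \left(\frac{1-e^{-t}}{t}\right)^{b-1}$. Then for every non-negative integer $n$, $\xi(n+1)(n+2) d_0 d_{n+2} = \xi \sum_{m=0}^{n} (m+1)\left(n-2m+1+\frac{m-n-1}{b-1}\right) d_{m+1} d_{n-m+1} + \sum_{m=0}^{n} (m+1)\left(n-2m-2-\xi+\frac{m-n}{b-1}\right) d_{m+1} d_{n-m} + \sum_{m=0}^{n} (1-m-b)\, d_m d_{n-m}$. -/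
open Real MeasureTheory Set

open Finset


lemma my_leibniz {s : Set ℝ} (hs : IsOpen s) (hu : UniqueDiffOn ℝ s) :
    ∀ (n : ℕ) (f g : ℝ → ℝ), ContDiffOn ℝ (⊤ : ℕ∞) f s → ContDiffOn ℝ (⊤ : ℕ∞) g s →
    ∀ x ∈ s,
    iteratedDerivWithin n (fun t => f t * g t) s x
      = ∑ m ∈ Finset.range (n+1), (n.choose m : ℝ) *
          iteratedDerivWithin m f s x * iteratedDerivWithin (n-m) g s x := by
  intro n
  induction n with
  | zero => intro f g hf hg x hx; simp [iteratedDerivWithin_zero]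
  | succ n ih =>
    intro f g hf hg x hx
    have hinf : ((⊤:ℕ∞) : WithTop ℕ∞) + 1 ≤ ((⊤:ℕ∞) : WithTop ℕ∞) := by norm_num
    have hdf : ContDiffOn ℝ (⊤ : ℕ∞) (derivWithin f s) s := hf.derivWithin hu hinf
    have hdg : ContDiffOn ℝ (⊤ : ℕ∞) (derivWithin g s) s := hg.derivWithin hu hinf
    have hdiff : ∀ (h : ℝ → ℝ), ContDiffOn ℝ (⊤ : ℕ∞) h s → ∀ y ∈ s, DifferentiableAt ℝ h y := by
      intro h hh y hy
      exact (hh.contDiffAt (hs.mem_nhds hy)).differentiableAt (by norm_num)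
    have heq : Set.EqOn (derivWithin (fun t => f t * g t) s)
        (fun t => derivWithin f s t * g t + f t * derivWithin g s t) s := by
      intro y hy
      simp only
      rw [derivWithin_of_isOpen hs hy, derivWithin_of_isOpen hs hy, derivWithin_of_isOpen hs hy,
        deriv_fun_mul (hdiff f hf y hy) (hdiff g hg y hy)]
    have hcast : ∀ h : ℝ → ℝ, ContDiffOn ℝ (⊤ : ℕ∞) h s → ContDiffOn ℝ (n : WithTop ℕ∞) h s :=
      fun h hh => hh.of_le (by exact_mod_cast le_top)
    have step : iteratedDerivWithin (n+1) (fun t => f t * g t) s x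
        = iteratedDerivWithin n ((fun t => derivWithin f s t * g t)
            + (fun t => f t * derivWithin g s t)) s x := by
      rw [iteratedDerivWithin_succ', iteratedDerivWithin_congr heq hx]
      rfl
    rw [step, iteratedDerivWithin_add hx hu (hcast _ (hdf.mul hg) x hx) (hcast _ (hf.mul hdg) x hx),
      ih _ _ hdf hg x hx, ih _ _ hf hdg x hx]
    have e1 : ∀ m, iteratedDerivWithin m (derivWithin f s) s x = iteratedDerivWithin (m+1) f s x :=
      fun m => (congrFun (iteratedDerivWithin_succ' (n := m)) x).symm
    have e2 : ∀ m, iteratedDerivWithin m (derivWithin g s) s x = iteratedDerivWithin (m+1) g s x :=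
      fun m => (congrFun (iteratedDerivWithin_succ' (n := m)) x).symm
    simp only [e1, e2]
    set F := fun m : ℕ => iteratedDerivWithin m f s x
    set G := fun m : ℕ => iteratedDerivWithin m g s x
    -- goal: ∑_{m∈range(n+1)} C(n,m) F(m+1) G(n-m) + ∑_{m∈range(n+1)} C(n,m) F(m) G(n-m+1)
    --     = ∑_{m∈range(n+2)} C(n+1,m) F(m) G(n+1-m)
    have h2 : ∑ m ∈ Finset.range (n+1), (n.choose m : ℝ) * F m * G (n - m + 1)
        = F 0 * G (n+1) + ∑ m ∈ Finset.range n, (n.choose (m+1) : ℝ) * F (m+1) * G (n - (m+1) + 1) := by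
      rw [Finset.sum_range_succ' (fun m => (n.choose m : ℝ) * F m * G (n - m + 1)) n]
      simp [add_comm]
    have h3 : ∑ m ∈ Finset.range n, (n.choose (m+1) : ℝ) * F (m+1) * G (n - (m+1) + 1)
        = ∑ m ∈ Finset.range (n+1), (n.choose (m+1) : ℝ) * F (m+1) * G (n - (m+1) + 1) := by
      rw [Finset.sum_range_succ]
      simp
    have h4 : ∑ m ∈ Finset.range (n+1+1), ((n+1).choose m : ℝ) * F m * G (n + 1 - m)
        = F 0 * G (n+1) + ∑ m ∈ Finset.range (n+1), ((n+1).choose (m+1) : ℝ) * F (m+1) * G (n - m) := by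
      rw [Finset.sum_range_succ' (fun m => ((n+1).choose m : ℝ) * F m * G (n + 1 - m)) (n+1)]
      simp [add_comm]
    rw [h2, h3, h4]
    have h5 : ∑ m ∈ Finset.range (n+1), (n.choose (m+1) : ℝ) * F (m+1) * G (n - (m+1) + 1)
        = ∑ m ∈ Finset.range (n+1), (n.choose (m+1) : ℝ) * F (m+1) * G (n - m) := by
      apply Finset.sum_congr rfl
      intro m hm
      have hm' : m ≤ n := Nat.lt_succ_iff.mp (Finset.mem_range.mp hm)
      rcases eq_or_lt_of_le hm' with h | h
      · subst h
        rw [Nat.choose_succ_self]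
        norm_num
      · have he : n - (m+1) + 1 = n - m := by omega
        rw [he]
    rw [h5]
    have h6 : ∑ m ∈ Finset.range (n+1), (n.choose m : ℝ) * F (m+1) * G (n - m)
        + ∑ m ∈ Finset.range (n+1), (n.choose (m+1) : ℝ) * F (m+1) * G (n - m)
        = ∑ m ∈ Finset.range (n+1), ((n+1).choose (m+1) : ℝ) * F (m+1) * G (n - m) := by
      rw [← Finset.sum_add_distrib]
      apply Finset.sum_congr rfl
      intro m _
      rw [Nat.choose_succ_succ, Nat.cast_add]
      ring
    show (∑ m ∈ Finset.range (n+1), (n.choose m : ℝ) * F (m+1) * G (n - m))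
        + (F 0 * G (n+1) + ∑ m ∈ Finset.range (n+1), (n.choose (m+1) : ℝ) * F (m+1) * G (n - m))
        = _
    linarith [h6]

lemma iter_zero_fun (n : ℕ) (x : ℝ) : iteratedDeriv n (fun _ => (0:ℝ)) x = 0 := by
  induction n generalizing x with
  | zero => simp
  | succ n ih => rw [iteratedDeriv_succ']; simp only [deriv_const']; exact ih x

lemma iter_affine {s : Set ℝ} (hs : IsOpen s) (c1 c0 : ℝ) {x : ℝ} (hx : x ∈ s) :
    ∀ n : ℕ, iteratedDerivWithin n (fun t => c1 * t + c0) s x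
      = if n = 0 then c1 * x + c0 else if n = 1 then c1 else 0 := by
  have hiw : ∀ (n : ℕ) (h : ℝ → ℝ), iteratedDerivWithin n h s x = iteratedDeriv n h x := by
    intro n h
    simp [iteratedDerivWithin, iteratedDeriv, iteratedFDerivWithin_of_isOpen n hs hx]
  have hd : deriv (fun t : ℝ => c1 * t + c0) = fun _ => c1 := by
    funext y
    have : HasDerivAt (fun t : ℝ => c1 * t + c0) c1 y := by
      simpa using ((hasDerivAt_id y).const_mul c1).add_const c0
    simp [this.deriv]
  intro n
  rw [hiw]
  match n with
  | 0 => simp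
  | 1 =>
    rw [iteratedDeriv_succ', hd]
    simp
  | (m+2) =>
    rw [iteratedDeriv_succ', hd, iteratedDeriv_succ']
    simp only [deriv_const']
    rw [iter_zero_fun]
    simp

lemma affine_mul {s : Set ℝ} (hs : IsOpen s) (hu : UniqueDiffOn ℝ s) (c1 c0 : ℝ)
    {v : ℝ → ℝ} (hv : ContDiffOn ℝ (⊤ : ℕ∞) v s) {x : ℝ} (hx : x ∈ s) (n : ℕ) :
    iteratedDerivWithin n (fun t => (c1 * t + c0) * v t) s x
      = (c1 * x + c0) * iteratedDerivWithin n v s x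
        + (n : ℝ) * c1 * iteratedDerivWithin (n - 1) v s x := by
  have haff : ContDiffOn ℝ (⊤ : ℕ∞) (fun t : ℝ => c1 * t + c0) s :=
    ((contDiff_const.mul contDiff_id).add contDiff_const).contDiffOn
  rw [my_leibniz hs hu n _ v haff hv x hx]
  match n with
  | 0 =>
    simp [iter_affine hs c1 c0 hx]
  | (k+1) =>
    rw [Finset.sum_range_succ' _ (k+1)]
    have hz : ∑ m ∈ Finset.range (k+1), ((k+1).choose (m+1) : ℝ) *
        iteratedDerivWithin (m+1) (fun t => c1 * t + c0) s x *
        iteratedDerivWithin (k+1-(m+1)) v s x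
        = (k+1 : ℝ) * c1 * iteratedDerivWithin k v s x := by
      rw [Finset.sum_range_succ' _ k]
      have h0 : ∀ m ∈ Finset.range k, ((k+1).choose (m+1+1) : ℝ) *
          iteratedDerivWithin (m+1+1) (fun t => c1 * t + c0) s x *
          iteratedDerivWithin (k+1-(m+1+1)) v s x = 0 := by
        intro m _
        rw [iter_affine hs c1 c0 hx]
        simp
      rw [Finset.sum_eq_zero h0, iter_affine hs c1 c0 hx]
      simp
    rw [hz, iter_affine hs c1 c0 hx]
    simp only [Nat.add_sub_cancel, Nat.choose_zero_right, Nat.cast_one]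
    push_cast
    ring

noncomputable def gf (t : ℝ) : ℝ := (1 - Real.exp (-t)) / t
noncomputable def gf1 (t : ℝ) : ℝ := (t * Real.exp (-t) - 1 + Real.exp (-t)) / t^2
noncomputable def gf2 (t : ℝ) : ℝ :=
  (-(t^2 * Real.exp (-t)) - 2*t*Real.exp (-t) + 2 - 2*Real.exp (-t)) / t^3

lemma exp_neg_hasDeriv (x : ℝ) : HasDerivAt (fun t : ℝ => Real.exp (-t)) (-Real.exp (-x)) x := by
  exact ((Real.hasDerivAt_exp (-x)).comp x (hasDerivAt_neg x)).congr_deriv (by ring)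

lemma gf_hasDeriv {x : ℝ} (hx : x ≠ 0) : HasDerivAt gf (gf1 x) x := by
  have h1 : HasDerivAt (fun t : ℝ => 1 - Real.exp (-t)) (Real.exp (-x)) x := by
    exact ((hasDerivAt_const x (1:ℝ)).sub (exp_neg_hasDeriv x)).congr_deriv (by ring)
  have := h1.div (hasDerivAt_id x) hx
  refine this.congr_deriv ?_
  unfold gf1
  simp only [id]
  field_simp
  ring

lemma gf1_hasDeriv {x : ℝ} (hx : x ≠ 0) : HasDerivAt gf1 (gf2 x) x := by
  have hN : HasDerivAt (fun t : ℝ => t * Real.exp (-t) - 1 + Real.exp (-t))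
      ((1 * Real.exp (-x) + x * (-Real.exp (-x)) - 0) + -Real.exp (-x)) x := by
    exact (((hasDerivAt_id x).mul (exp_neg_hasDeriv x)).sub (hasDerivAt_const x 1)).add
      (exp_neg_hasDeriv x)
  have hD : HasDerivAt (fun t : ℝ => t^2) (2*x) x := by
    simpa using hasDerivAt_pow 2 x
  have hx2 : x^2 ≠ 0 := pow_ne_zero 2 hx
  have := hN.div hD hx2
  refine this.congr_deriv ?_
  unfold gf2
  field_simp
  ring

lemma gf_pos {x : ℝ} (hx : 0 < x) : 0 < gf x := by
  unfold gf
  apply div_pos _ hx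
  have : Real.exp (-x) < 1 := by rw [Real.exp_lt_one_iff]; linarith
  linarith

lemma bracket_id {x : ℝ} (hx : x ≠ 0) : (x+2) * gf1 x + x * gf2 x + gf x = 0 := by
  unfold gf gf1 gf2
  field_simp
  ring

noncomputable def Ff (b : ℝ) (t : ℝ) : ℝ := ((1 - Real.exp (-t)) / t) ^ (b-1)
noncomputable def Ff1 (b : ℝ) (t : ℝ) : ℝ := (b-1) * gf t ^ (b-2) * gf1 t
noncomputable def Ff2 (b : ℝ) (t : ℝ) : ℝ :=
  (b-1) * (b-2) * gf t ^ (b-3) * gf1 t^2 + (b-1) * gf t ^ (b-2) * gf2 t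

lemma Ff_hasDeriv (b : ℝ) {x : ℝ} (hx : 0 < x) : HasDerivAt (Ff b) (Ff1 b x) x := by
  have hne : gf x ≠ 0 := ne_of_gt (gf_pos hx)
  have := (gf_hasDeriv (ne_of_gt hx)).rpow_const (p := b-1) (Or.inl hne)
  have he : b - 1 - 1 = b - 2 := by ring
  rw [he] at this
  have hFf : Ff b = fun y => gf y ^ (b-1) := by
    funext y; unfold Ff gf; rfl
  rw [hFf]
  convert this using 1
  unfold Ff1
  ring

lemma Ff1_hasDeriv (b : ℝ) {x : ℝ} (hx : 0 < x) : HasDerivAt (Ff1 b) (Ff2 b x) x := by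
  have hne : gf x ≠ 0 := ne_of_gt (gf_pos hx)
  have h1 : HasDerivAt (fun y => (b-1) * gf y ^ (b-2))
      ((b-1) * (gf1 x * (b-2) * gf x ^ (b-2-1))) x :=
    ((gf_hasDeriv (ne_of_gt hx)).rpow_const (p := b-2) (Or.inl hne)).const_mul (b-1)
  have := h1.mul (gf1_hasDeriv (ne_of_gt hx))
  refine this.congr_deriv ?_
  have he : b - 2 - 1 = b - 3 := by ring
  rw [he]
  unfold Ff2
  ring

lemma ode_id (b : ℝ) {x : ℝ} (hx : 0 < x) :
    ((2-b)*x + 0) * (Ff1 b x * Ff1 b x) + ((b-1)*x + 2*(b-1)) * (Ff1 b x * Ff b x)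
      + ((b-1)*x + 0) * (Ff b x * Ff2 b x) + (0*x + (b-1)^2) * (Ff b x * Ff b x) = 0 := by
  have hne : gf x ≠ 0 := ne_of_gt (gf_pos hx)
  have hF : Ff b x = gf x ^ (b-2) * gf x := by
    unfold Ff
    rw [show ((1 - Real.exp (-x)) / x) = gf x from rfl, show b - 1 = (b-2) + 1 by ring,
      Real.rpow_add_one hne]
  have h3 : gf x ^ (b-3) * gf x = gf x ^ (b-2) := by
    rw [show b - 2 = (b-3) + 1 by ring, Real.rpow_add_one hne]
  have hbr := bracket_id (ne_of_gt hx)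
  unfold Ff1 Ff2
  rw [hF]
  set P := gf x ^ (b-2) with hP
  set Q := gf x ^ (b-3) with hQ
  -- use h3 : Q * gf x = P
  linear_combination ((b-1)^2 * P^2 * gf x) * hbr
    + ((b-1)^2 * (b-2) * x * gf1 x ^2 * P) * h3

lemma gf_smooth : ContDiffOn ℝ (⊤:ℕ∞) gf (Set.Ioi 0) := by
  apply ContDiffOn.div
  · exact (contDiff_const.sub (Real.contDiff_exp.comp contDiff_neg)).contDiffOn
  · exact contDiffOn_id
  · intro x hx; exact ne_of_gt hx

lemma gf1_smooth : ContDiffOn ℝ (⊤:ℕ∞) gf1 (Set.Ioi 0) := by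
  apply ContDiffOn.div
  · exact ((contDiff_id.mul (Real.contDiff_exp.comp contDiff_neg)).sub contDiff_const |>.add
      (Real.contDiff_exp.comp contDiff_neg)).contDiffOn
  · exact (contDiff_id.pow 2).contDiffOn
  · intro x hx; exact pow_ne_zero 2 (ne_of_gt hx)

lemma gf2_smooth : ContDiffOn ℝ (⊤:ℕ∞) gf2 (Set.Ioi 0) := by
  apply ContDiffOn.div
  · have he : ContDiff ℝ (⊤:ℕ∞) (fun t : ℝ => Real.exp (-t)) :=
      Real.contDiff_exp.comp contDiff_neg
    exact ((((contDiff_id.pow 2).mul he).neg.sub ((contDiff_const.mul contDiff_id).mul he)).add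
      contDiff_const |>.sub (contDiff_const.mul he)).contDiffOn
  · exact (contDiff_id.pow 3).contDiffOn
  · intro x hx; exact pow_ne_zero 3 (ne_of_gt hx)

lemma rpow_gf_smooth (p : ℝ) : ContDiffOn ℝ (⊤:ℕ∞) (fun t => gf t ^ p) (Set.Ioi 0) := by
  intro x hx
  have hx' : (0:ℝ) < x := hx
  exact ((gf_smooth.contDiffAt ((isOpen_Ioi).mem_nhds hx)).rpow_const_of_ne
    (ne_of_gt (gf_pos hx'))).contDiffWithinAt

lemma Ff_smooth (b : ℝ) : ContDiffOn ℝ (⊤:ℕ∞) (Ff b) (Set.Ioi 0) := by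
  have : Ff b = fun t => gf t ^ (b-1) := by funext y; rfl
  rw [this]; exact rpow_gf_smooth (b-1)

lemma Ff1_smooth (b : ℝ) : ContDiffOn ℝ (⊤:ℕ∞) (Ff1 b) (Set.Ioi 0) :=
  (contDiffOn_const.mul (rpow_gf_smooth (b-2))).mul gf1_smooth

lemma Ff2_smooth (b : ℝ) : ContDiffOn ℝ (⊤:ℕ∞) (Ff2 b) (Set.Ioi 0) :=
  ((contDiffOn_const.mul (rpow_gf_smooth (b-3))).mul (gf1_smooth.pow 2)).add
    ((contDiffOn_const.mul (rpow_gf_smooth (b-2))).mul gf2_smooth)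

lemma ee1 (d : ℕ → ℝ) (n : ℕ) :
    (∑ m ∈ Finset.range (n+1), (((n-m:ℕ):ℝ)+1) * (((n-m:ℕ):ℝ)+2) * d m * d (n-m+2))
      = (∑ m ∈ Finset.range (n+1), ((n-m:ℕ):ℝ) * (((n-m:ℕ):ℝ)+1) * d (m+1) * d (n-m+1))
        + ((n:ℝ)+1) * ((n:ℝ)+2) * d 0 * d (n+2) := by
  rw [Finset.sum_range_succ' (fun m => (((n-m:ℕ):ℝ)+1) * (((n-m:ℕ):ℝ)+2) * d m * d (n-m+2)) n,
    Finset.sum_range_succ (fun m => ((n-m:ℕ):ℝ) * (((n-m:ℕ):ℝ)+1) * d (m+1) * d (n-m+1)) n]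
  simp only [Nat.sub_zero, Nat.sub_self, Nat.cast_zero, zero_mul, add_zero]
  congr 1
  apply Finset.sum_congr rfl
  intro m hm
  have hm' : m < n := Finset.mem_range.mp hm
  have h2 : n - (m+1) + 2 = n - m + 1 := by omega
  have h3 : ((n - (m+1) : ℕ):ℝ) + 1 = ((n - m : ℕ):ℝ) := by
    rw [← Nat.cast_add_one]
    congr 1
    omega
  have h4 : ((n - (m+1) : ℕ):ℝ) + 2 = ((n - m : ℕ):ℝ) + 1 := by
    rw [show ((n - (m+1) : ℕ):ℝ) + 2 = (((n - (m+1)) + 1 : ℕ):ℝ) + 1 by push_cast; ring]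
    rw [show n - (m+1) + 1 = n - m by omega]
  rw [h2, h3, h4]

lemma ee5 (d : ℕ → ℝ) (n : ℕ) :
    (∑ m ∈ Finset.range (n+1), ((n-m:ℕ):ℝ) * (((n-m:ℕ):ℝ)+1) * d (m+1) * d (n-m+1))
      = ∑ m ∈ Finset.range (n+1), (m:ℝ) * ((m:ℝ)+1) * d (m+1) * d (n-m+1) := by
  rw [← Finset.sum_range_reflect (fun j => (j:ℝ) * ((j:ℝ)+1) * d (j+1) * d (n-j+1)) (n+1)]
  apply Finset.sum_congr rfl
  intro m hm
  have hm' : m ≤ n := Nat.lt_succ_iff.mp (Finset.mem_range.mp hm)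
  have h1 : n + 1 - 1 - m = n - m := by omega
  have h2 : n - (n - m) = m := by omega
  rw [h1, h2]
  ring

lemma ee2 (d : ℕ → ℝ) (k : ℕ) :
    (∑ m ∈ Finset.range (k+1), (((k-m:ℕ):ℝ)+1) * (((k-m:ℕ):ℝ)+2) * d m * d (k-m+2))
      = ∑ m ∈ Finset.range (k+1+1), (m:ℝ) * ((m:ℝ)+1) * d (m+1) * d (k+1-m) := by
  rw [Finset.sum_range_succ' (fun m => (m:ℝ) * ((m:ℝ)+1) * d (m+1) * d (k+1-m)) (k+1),
    ← Finset.sum_range_reflect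
      (fun j => (((k-j:ℕ):ℝ)+1) * (((k-j:ℕ):ℝ)+2) * d j * d (k-j+2)) (k+1)]
  simp only [Nat.cast_zero, zero_mul, add_zero]
  apply Finset.sum_congr rfl
  intro m hm
  have hm' : m ≤ k := Nat.lt_succ_iff.mp (Finset.mem_range.mp hm)
  rw [show k + 1 - 1 - m = k - m by omega, show k - (k - m) = m by omega,
    show k + 1 - (m+1) = k - m by omega]
  push_cast
  ring

lemma ee3 (d : ℕ → ℝ) (k : ℕ) :
    (∑ m ∈ Finset.range (k+1), ((m:ℝ)+1) * d (m+1) * d (k-m))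
      = ∑ m ∈ Finset.range (k+1+1), (m:ℝ) * d m * d (k+1-m) := by
  rw [Finset.sum_range_succ' (fun m => (m:ℝ) * d m * d (k+1-m)) (k+1)]
  simp only [Nat.cast_zero, zero_mul, add_zero]
  apply Finset.sum_congr rfl
  intro m hm
  have hm' : m ≤ k := Nat.lt_succ_iff.mp (Finset.mem_range.mp hm)
  rw [show k + 1 - (m+1) = k - m by omega]
  push_cast
  ring

lemma ee4 (d : ℕ → ℝ) (k : ℕ) :
    (∑ m ∈ Finset.range (k+1), ((m:ℝ)+1) * (((k-m : ℕ):ℝ)+1) * d (m+1) * d (k-m+1))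
      = ∑ m ∈ Finset.range (k+1+1), ((m:ℝ)+1) * ((k+1-m:ℕ):ℝ) * d (m+1) * d (k+1-m) := by
  rw [Finset.sum_range_succ (fun m => ((m:ℝ)+1) * ((k+1-m:ℕ):ℝ) * d (m+1) * d (k+1-m)) (k+1)]
  simp only [Nat.sub_self, Nat.cast_zero, mul_zero, zero_mul, add_zero]
  apply Finset.sum_congr rfl
  intro m hm
  have hm' : m ≤ k := Nat.lt_succ_iff.mp (Finset.mem_range.mp hm)
  rw [show k + 1 - m = (k - m) + 1 by omega]
  push_cast
  ring

lemma final_succ (b ξ : ℝ) (hb1 : b ≠ 1) (d : ℕ → ℝ) (k : ℕ)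
    (H2 : (2-b)*ξ * (∑ m ∈ Finset.range (k+1+1), ((m:ℝ)+1) * (((k+1-m : ℕ):ℝ)+1) * d (m+1) * d (k+1-m+1))
      + (2-b) * (∑ m ∈ Finset.range (k+1), ((m:ℝ)+1) * (((k-m : ℕ):ℝ)+1) * d (m+1) * d (k-m+1))
      + (b-1)*(ξ+2) * (∑ m ∈ Finset.range (k+1+1), ((m:ℝ)+1) * d (m+1) * d (k+1-m))
      + (b-1) * (∑ m ∈ Finset.range (k+1), ((m:ℝ)+1) * d (m+1) * d (k-m))
      + (b-1)*ξ * (∑ m ∈ Finset.range (k+1+1), (((k+1-m:ℕ):ℝ)+1) * (((k+1-m:ℕ):ℝ)+2) * d m * d (k+1-m+2))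
      + (b-1) * (∑ m ∈ Finset.range (k+1), (((k-m:ℕ):ℝ)+1) * (((k-m:ℕ):ℝ)+2) * d m * d (k-m+2))
      + (b-1)^2 * (∑ m ∈ Finset.range (k+1+1), d m * d (k+1-m)) = 0) :
    ξ * (((k+1:ℕ) : ℝ) + 1) * (((k+1:ℕ) : ℝ) + 2) * d 0 * d (k+1 + 2) =
        ξ * ∑ m ∈ Finset.range (k+1 + 1), ((m : ℝ) + 1) *
              (((k+1:ℕ) : ℝ) - 2 * (m : ℝ) + 1 + ((m : ℝ) - ((k+1:ℕ) : ℝ) - 1) / (b - 1)) *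
              d (m + 1) * d (k+1 - m + 1)
        + ∑ m ∈ Finset.range (k+1 + 1), ((m : ℝ) + 1) *
              (((k+1:ℕ) : ℝ) - 2 * (m : ℝ) - 2 - ξ + ((m : ℝ) - ((k+1:ℕ) : ℝ)) / (b - 1)) *
              d (m + 1) * d (k+1 - m)
        + ∑ m ∈ Finset.range (k+1 + 1), (1 - (m : ℝ) - b) * d m * d (k+1 - m) := by
  have hb : b - 1 ≠ 0 := sub_ne_zero.mpr hb1
  rw [ee1 d (k+1), ee5 d (k+1), ee2 d k, ee3 d k, ee4 d k] at H2
  have key : (b-1) * (ξ * ∑ m ∈ Finset.range (k+1 + 1), ((m : ℝ) + 1) *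
              (((k+1:ℕ):ℝ) - 2 * (m : ℝ) + 1 + ((m : ℝ) - ((k+1:ℕ):ℝ) - 1) / (b - 1)) *
              d (m + 1) * d (k+1 - m + 1)
        + ∑ m ∈ Finset.range (k+1 + 1), ((m : ℝ) + 1) *
              (((k+1:ℕ):ℝ) - 2 * (m : ℝ) - 2 - ξ + ((m : ℝ) - ((k+1:ℕ):ℝ)) / (b - 1)) *
              d (m + 1) * d (k+1 - m)
        + ∑ m ∈ Finset.range (k+1 + 1), (1 - (m : ℝ) - b) * d m * d (k+1 - m))
      + ((2-b)*ξ * (∑ m ∈ Finset.range (k+1+1), ((m:ℝ)+1) * (((k+1-m : ℕ):ℝ)+1) * d (m+1) * d (k+1-m+1))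
      + (2-b) * (∑ m ∈ Finset.range (k+1+1), ((m:ℝ)+1) * ((k+1-m:ℕ):ℝ) * d (m+1) * d (k+1-m))
      + (b-1)*(ξ+2) * (∑ m ∈ Finset.range (k+1+1), ((m:ℝ)+1) * d (m+1) * d (k+1-m))
      + (b-1) * (∑ m ∈ Finset.range (k+1+1), (m:ℝ) * d m * d (k+1-m))
      + (b-1)*ξ * (∑ m ∈ Finset.range (k+1+1), (m:ℝ) * ((m:ℝ)+1) * d (m+1) * d (k+1-m+1))
      + (b-1) * (∑ m ∈ Finset.range (k+1+1), (m:ℝ) * ((m:ℝ)+1) * d (m+1) * d (k+1-m))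
      + (b-1)^2 * (∑ m ∈ Finset.range (k+1+1), d m * d (k+1-m))) = 0 := by
    simp only [Finset.mul_sum, ← Finset.sum_add_distrib, mul_add]
    apply Finset.sum_eq_zero
    intro m hm
    have hm' : m ≤ k + 1 := Nat.lt_succ_iff.mp (Finset.mem_range.mp hm)
    rw [Nat.cast_sub hm']
    field_simp
    ring
  apply mul_left_cancel₀ hb
  linear_combination H2 - key

lemma final_alg (b ξ : ℝ) (hb1 : b ≠ 1) (d : ℕ → ℝ) (n : ℕ)
    (H : ((2-b)*ξ+0) * ((Nat.factorial n : ℝ) * (∑ m ∈ Finset.range (n+1), ((m:ℝ)+1) * (((n-m : ℕ):ℝ)+1) * d (m+1) * d (n-m+1)))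
      + (n:ℝ)*(2-b) * ((Nat.factorial (n-1) : ℝ) * (∑ m ∈ Finset.range (n-1+1), ((m:ℝ)+1) * (((n-1-m : ℕ):ℝ)+1) * d (m+1) * d (n-1-m+1)))
      + ((b-1)*ξ+2*(b-1)) * ((Nat.factorial n : ℝ) * (∑ m ∈ Finset.range (n+1), ((m:ℝ)+1) * d (m+1) * d (n-m)))
      + (n:ℝ)*(b-1) * ((Nat.factorial (n-1) : ℝ) * (∑ m ∈ Finset.range (n-1+1), ((m:ℝ)+1) * d (m+1) * d (n-1-m)))
      + ((b-1)*ξ+0) * ((Nat.factorial n : ℝ) * (∑ m ∈ Finset.range (n+1), (((n-m:ℕ):ℝ)+1) * (((n-m:ℕ):ℝ)+2) * d m * d (n-m+2)))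
      + (n:ℝ)*(b-1) * ((Nat.factorial (n-1) : ℝ) * (∑ m ∈ Finset.range (n-1+1), (((n-1-m:ℕ):ℝ)+1) * (((n-1-m:ℕ):ℝ)+2) * d m * d (n-1-m+2)))
      + (0*ξ+(b-1)^2) * ((Nat.factorial n : ℝ) * (∑ m ∈ Finset.range (n+1), d m * d (n-m))) = 0) :
    ξ * ((n : ℝ) + 1) * ((n : ℝ) + 2) * d 0 * d (n + 2) =
        ξ * ∑ m ∈ Finset.range (n + 1), ((m : ℝ) + 1) *
              ((n : ℝ) - 2 * (m : ℝ) + 1 + ((m : ℝ) - (n : ℝ) - 1) / (b - 1)) *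
              d (m + 1) * d (n - m + 1)
        + ∑ m ∈ Finset.range (n + 1), ((m : ℝ) + 1) *
              ((n : ℝ) - 2 * (m : ℝ) - 2 - ξ + ((m : ℝ) - (n : ℝ)) / (b - 1)) *
              d (m + 1) * d (n - m)
        + ∑ m ∈ Finset.range (n + 1), (1 - (m : ℝ) - b) * d m * d (n - m) := by
  have hb : b - 1 ≠ 0 := sub_ne_zero.mpr hb1
  match n with
  | 0 =>
    norm_num [Finset.sum_range_succ] at H ⊢
    field_simp
    ring_nf
    ring_nf at H
    linear_combination H
  | (k+1) =>
    simp only [Nat.add_sub_cancel] at H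
    have hfac : ((Nat.factorial (k+1) : ℕ) : ℝ) ≠ 0 :=
      Nat.cast_ne_zero.mpr (Nat.factorial_ne_zero _)
    have hfact : ((Nat.factorial (k+1) : ℕ) : ℝ) = ((k+1:ℕ):ℝ) * ((Nat.factorial k : ℕ):ℝ) := by
      rw [Nat.factorial_succ]
      push_cast
      ring
    apply final_succ b ξ hb1 d k
    apply mul_left_cancel₀ hfac
    rw [mul_zero]
    linear_combination H + ((2-b)*(∑ m ∈ Finset.range (k+1), ((m:ℝ)+1) * (((k-m : ℕ):ℝ)+1) * d (m+1) * d (k-m+1)) + (b-1)*(∑ m ∈ Finset.range (k+1), ((m:ℝ)+1) * d (m+1) * d (k-m)) + (b-1)*(∑ m ∈ Finset.range (k+1), (((k-m:ℕ):ℝ)+1) * (((k-m:ℕ):ℝ)+2) * d m * d (k-m+2))) * hfact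


/-- Recurrence relation for the Taylor coefficients `d_n` of
`f(t) = ((1 - e^(-t))/t)^(b-1)` at `ξ > 0`, for `b > 0`, `b ≠ 1`. -/
theorem d_recurrence (b ξ : ℝ) (hb : 0 < b) (hb1 : b ≠ 1) (hξ : 0 < ξ)
    (f : ℝ → ℝ) (hf : ∀ t : ℝ, f t = ((1 - Real.exp (-t)) / t) ^ (b - 1))
    (d : ℕ → ℝ) (hd : ∀ n : ℕ, d n = iteratedDeriv n f ξ / (Nat.factorial n : ℝ)) :
    ∀ n : ℕ,
      ξ * ((n : ℝ) + 1) * ((n : ℝ) + 2) * d 0 * d (n + 2) =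
        ξ * ∑ m ∈ Finset.range (n + 1), ((m : ℝ) + 1) *
              ((n : ℝ) - 2 * (m : ℝ) + 1 + ((m : ℝ) - (n : ℝ) - 1) / (b - 1)) *
              d (m + 1) * d (n - m + 1)
        + ∑ m ∈ Finset.range (n + 1), ((m : ℝ) + 1) *
              ((n : ℝ) - 2 * (m : ℝ) - 2 - ξ + ((m : ℝ) - (n : ℝ)) / (b - 1)) *
              d (m + 1) * d (n - m)
        + ∑ m ∈ Finset.range (n + 1), (1 - (m : ℝ) - b) * d m * d (n - m) := by
  intro n
  have hfe : f = Ff b := funext fun t => by rw [hf t]; rfl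
  rw [hfe] at hd
  set s : Set ℝ := Set.Ioi 0 with hs
  have hsO : IsOpen s := isOpen_Ioi
  have hsU : UniqueDiffOn ℝ s := hsO.uniqueDiffOn
  have hξs : ξ ∈ s := hξ
  have hw : ∀ (k : ℕ) (h : ℝ → ℝ), iteratedDerivWithin k h s ξ = iteratedDeriv k h ξ := by
    intro k h
    simp [iteratedDerivWithin, iteratedDeriv, iteratedFDerivWithin_of_isOpen k hsO hξs]
  have hfacne : ∀ k : ℕ, ((Nat.factorial k : ℕ) : ℝ) ≠ 0 :=
    fun k => Nat.cast_ne_zero.mpr (Nat.factorial_ne_zero _)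
  have hc0 : ∀ k : ℕ, iteratedDerivWithin k (Ff b) s ξ = (Nat.factorial k : ℝ) * d k := by
    intro k
    rw [hw, hd k, mul_div_cancel₀ _ (hfacne k)]
  have hEq1 : Set.EqOn (derivWithin (Ff b) s) (Ff1 b) s := by
    intro y hy
    rw [derivWithin_of_isOpen hsO hy, (Ff_hasDeriv b hy).deriv]
  have hEq2 : Set.EqOn (derivWithin (Ff1 b) s) (Ff2 b) s := by
    intro y hy
    rw [derivWithin_of_isOpen hsO hy, (Ff1_hasDeriv b hy).deriv]
  have hc1 : ∀ k : ℕ, iteratedDerivWithin k (Ff1 b) s ξ = (Nat.factorial (k+1) : ℝ) * d (k+1) := by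
    intro k
    rw [← iteratedDerivWithin_congr hEq1 hξs, ← iteratedDerivWithin_succ', hc0]
  have hc2 : ∀ k : ℕ, iteratedDerivWithin k (Ff2 b) s ξ = (Nat.factorial (k+2) : ℝ) * d (k+2) := by
    intro k
    rw [← iteratedDerivWithin_congr hEq2 hξs, ← iteratedDerivWithin_succ', hc1]
  -- convolution coefficient identities
  have base : ∀ k m : ℕ, m ≤ k → (k.choose m : ℝ) * (Nat.factorial m : ℝ) *
      (Nat.factorial (k-m) : ℝ) = (Nat.factorial k : ℝ) := by
    intro k m hm
    exact_mod_cast congrArg (Nat.cast (R := ℝ)) (Nat.choose_mul_factorial_mul_factorial hm)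
  have fs : ∀ j : ℕ, (Nat.factorial (j+1) : ℝ) = ((j:ℝ)+1) * (Nat.factorial j : ℝ) := by
    intro j
    rw [Nat.factorial_succ]
    push_cast
    ring
  have hA : ∀ k : ℕ, iteratedDerivWithin k (fun t => Ff1 b t * Ff1 b t) s ξ
      = (Nat.factorial k : ℝ) *
        ∑ m ∈ Finset.range (k+1), ((m:ℝ)+1) * (((k-m : ℕ):ℝ)+1) * d (m+1) * d (k-m+1) := by
    intro k
    rw [my_leibniz hsO hsU k _ _ (Ff1_smooth b) (Ff1_smooth b) ξ hξs, Finset.mul_sum]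
    apply Finset.sum_congr rfl
    intro m hm
    have hm' : m ≤ k := Nat.lt_succ_iff.mp (Finset.mem_range.mp hm)
    rw [hc1 m, hc1 (k-m), fs m, fs (k-m)]
    linear_combination (((m:ℝ)+1) * (((k-m:ℕ):ℝ)+1) * d (m+1) * d (k-m+1)) * base k m hm'
  have hB : ∀ k : ℕ, iteratedDerivWithin k (fun t => Ff1 b t * Ff b t) s ξ
      = (Nat.factorial k : ℝ) *
        ∑ m ∈ Finset.range (k+1), ((m:ℝ)+1) * d (m+1) * d (k-m) := by
    intro k
    rw [my_leibniz hsO hsU k _ _ (Ff1_smooth b) (Ff_smooth b) ξ hξs, Finset.mul_sum]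
    apply Finset.sum_congr rfl
    intro m hm
    have hm' : m ≤ k := Nat.lt_succ_iff.mp (Finset.mem_range.mp hm)
    rw [hc1 m, hc0 (k-m), fs m]
    linear_combination (((m:ℝ)+1) * d (m+1) * d (k-m)) * base k m hm'
  have hC : ∀ k : ℕ, iteratedDerivWithin k (fun t => Ff b t * Ff2 b t) s ξ
      = (Nat.factorial k : ℝ) *
        ∑ m ∈ Finset.range (k+1), (((k-m:ℕ):ℝ)+1) * (((k-m:ℕ):ℝ)+2) * d m * d (k-m+2) := by
    intro k
    rw [my_leibniz hsO hsU k _ _ (Ff_smooth b) (Ff2_smooth b) ξ hξs, Finset.mul_sum]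
    apply Finset.sum_congr rfl
    intro m hm
    have hm' : m ≤ k := Nat.lt_succ_iff.mp (Finset.mem_range.mp hm)
    have f3 : (Nat.factorial (k-m+2) : ℝ)
        = (((k-m:ℕ):ℝ)+2) * (((k-m:ℕ):ℝ)+1) * (Nat.factorial (k-m) : ℝ) := by
      rw [show k-m+2 = (k-m+1)+1 from rfl, fs (k-m+1), fs (k-m)]
      push_cast
      ring
    rw [hc0 m, hc2 (k-m), f3]
    linear_combination ((((k-m:ℕ):ℝ)+1) * (((k-m:ℕ):ℝ)+2) * d m * d (k-m+2)) * base k m hm'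
  have hD : ∀ k : ℕ, iteratedDerivWithin k (fun t => Ff b t * Ff b t) s ξ
      = (Nat.factorial k : ℝ) * ∑ m ∈ Finset.range (k+1), d m * d (k-m) := by
    intro k
    rw [my_leibniz hsO hsU k _ _ (Ff_smooth b) (Ff_smooth b) ξ hξs, Finset.mul_sum]
    apply Finset.sum_congr rfl
    intro m hm
    have hm' : m ≤ k := Nat.lt_succ_iff.mp (Finset.mem_range.mp hm)
    rw [hc0 m, hc0 (k-m)]
    linear_combination (d m * d (k-m)) * base k m hm'
  -- the ODE function L and its vanishing
  set v1 : ℝ → ℝ := fun t => Ff1 b t * Ff1 b t with hv1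
  set v2 : ℝ → ℝ := fun t => Ff1 b t * Ff b t with hv2
  set v3 : ℝ → ℝ := fun t => Ff b t * Ff2 b t with hv3
  set v4 : ℝ → ℝ := fun t => Ff b t * Ff b t with hv4
  have hv1s : ContDiffOn ℝ (⊤:ℕ∞) v1 s := (Ff1_smooth b).mul (Ff1_smooth b)
  have hv2s : ContDiffOn ℝ (⊤:ℕ∞) v2 s := (Ff1_smooth b).mul (Ff_smooth b)
  have hv3s : ContDiffOn ℝ (⊤:ℕ∞) v3 s := (Ff_smooth b).mul (Ff2_smooth b)
  have hv4s : ContDiffOn ℝ (⊤:ℕ∞) v4 s := (Ff_smooth b).mul (Ff_smooth b)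
  have haffs : ∀ c1 c0 : ℝ, ContDiffOn ℝ (⊤:ℕ∞) (fun t : ℝ => c1 * t + c0) s :=
    fun c1 c0 => ((contDiff_const.mul contDiff_id).add contDiff_const).contDiffOn
  set P1 : ℝ → ℝ := fun t => ((2-b) * t + 0) * v1 t with hP1
  set P2 : ℝ → ℝ := fun t => ((b-1) * t + 2*(b-1)) * v2 t with hP2
  set P3 : ℝ → ℝ := fun t => ((b-1) * t + 0) * v3 t with hP3
  set P4 : ℝ → ℝ := fun t => (0 * t + (b-1)^2) * v4 t with hP4
  have hP1s : ContDiffOn ℝ (⊤:ℕ∞) P1 s := (haffs _ _).mul hv1s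
  have hP2s : ContDiffOn ℝ (⊤:ℕ∞) P2 s := (haffs _ _).mul hv2s
  have hP3s : ContDiffOn ℝ (⊤:ℕ∞) P3 s := (haffs _ _).mul hv3s
  have hP4s : ContDiffOn ℝ (⊤:ℕ∞) P4 s := (haffs _ _).mul hv4s
  have hcastn : ∀ (h : ℝ → ℝ), ContDiffOn ℝ (⊤:ℕ∞) h s → ContDiffOn ℝ (n : WithTop ℕ∞) h s :=
    fun h hh => hh.of_le (by exact_mod_cast le_top)
  have hLzero : iteratedDerivWithin n (fun t => P1 t + P2 t + P3 t + P4 t) s ξ = 0 := by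
    have hz : Set.EqOn (fun t => P1 t + P2 t + P3 t + P4 t) (fun _ => (0:ℝ)) s := by
      intro x hx
      exact ode_id b hx
    rw [iteratedDerivWithin_congr hz hξs, hw]
    exact iter_zero_fun n ξ
  have hsplit : iteratedDerivWithin n (fun t => P1 t + P2 t + P3 t + P4 t) s ξ
      = iteratedDerivWithin n P1 s ξ + iteratedDerivWithin n P2 s ξ
        + iteratedDerivWithin n P3 s ξ + iteratedDerivWithin n P4 s ξ := by
    have s1 : iteratedDerivWithin n (fun t => P1 t + P2 t + P3 t + P4 t) s ξ
        = iteratedDerivWithin n ((fun t => P1 t + P2 t + P3 t) + P4) s ξ := rfl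
    have s2 : iteratedDerivWithin n (fun t => P1 t + P2 t + P3 t) s ξ
        = iteratedDerivWithin n ((fun t => P1 t + P2 t) + P3) s ξ := rfl
    have s3 : iteratedDerivWithin n (fun t => P1 t + P2 t) s ξ
        = iteratedDerivWithin n (P1 + P2) s ξ := rfl
    rw [s1, iteratedDerivWithin_add hξs hsU
        (hcastn _ ((hP1s.add hP2s).add hP3s) ξ hξs) (hcastn _ hP4s ξ hξs)]
    rw [s2, iteratedDerivWithin_add hξs hsU (hcastn _ (hP1s.add hP2s) ξ hξs) (hcastn _ hP3s ξ hξs)]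
    rw [s3, iteratedDerivWithin_add hξs hsU (hcastn _ hP1s ξ hξs) (hcastn _ hP2s ξ hξs)]
  have hbig : iteratedDerivWithin n P1 s ξ + iteratedDerivWithin n P2 s ξ
      + iteratedDerivWithin n P3 s ξ + iteratedDerivWithin n P4 s ξ = 0 := by
    rw [← hsplit]
    exact hLzero
  rw [hP1, hP2, hP3, hP4] at hbig
  rw [affine_mul hsO hsU (2-b) 0 hv1s hξs n, affine_mul hsO hsU (b-1) (2*(b-1)) hv2s hξs n,
    affine_mul hsO hsU (b-1) 0 hv3s hξs n, affine_mul hsO hsU 0 ((b-1)^2) hv4s hξs n] at hbig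
  rw [hv1, hv2, hv3, hv4] at hbig
  rw [hA n, hA (n-1), hB n, hB (n-1), hC n, hC (n-1), hD n, hD (n-1)] at hbig
  apply final_alg b ξ hb1 d n
  linear_combination hbig
end

section
/- Let $b > 0$ and let $N \geq 1$ be an integer. There exists a constant $C_N(b) > 0$, depending only on $N$ and $b$, such that for all real $\xi, t$ with $0 \leq \xi \leq t$, the Taylor remainder $r_N(t) = f(t) - \sum_{n=0}^{N-1} d_n (t - \xi)^n$ of $f(t) = \left(\frac{1-e^{-t}}{t}\right)^{b-1}$ at $\xi$ satisfies $|r_N(t)| \leq C_N(b)\, (t-\xi)^N$. -/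
open Real MeasureTheory Set


noncomputable def ggTRB : ℝ → ℝ := dslope (fun t => 1 - Real.exp (-t)) 0

lemma hasDerivAt_ose (a : ℝ) :
    HasDerivAt (fun t : ℝ => 1 - Real.exp (-t)) (Real.exp (-a)) a := by
  have h1 : HasDerivAt (fun t : ℝ => Real.exp (-t)) (Real.exp (-a) * -1) a :=
    (Real.hasDerivAt_exp (-a)).comp a ((hasDerivAt_id a).neg)
  simpa using h1.const_sub 1

lemma ggTRB_zero : ggTRB 0 = 1 := by
  rw [ggTRB, dslope_same]
  rw [(hasDerivAt_ose 0).deriv]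
  simp

lemma ggTRB_ne {t : ℝ} (h : t ≠ 0) : ggTRB t = (1 - Real.exp (-t)) / t := by
  rw [ggTRB, dslope_of_ne _ h, slope_def_field]
  simp

lemma ggTRB_pos (t : ℝ) : 0 < ggTRB t := by
  rcases lt_trichotomy t 0 with ht | rfl | ht
  · rw [ggTRB_ne ht.ne]
    apply div_pos_of_neg_of_neg _ ht
    have : 1 < Real.exp (-t) := by
      rw [Real.one_lt_exp_iff]; linarith
    linarith
  · rw [ggTRB_zero]; norm_num
  · rw [ggTRB_ne ht.ne']
    apply div_pos _ ht
    have : Real.exp (-t) < 1 := by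
      rw [Real.exp_lt_one_iff]; linarith
    linarith

lemma ggTRB_le_one {t : ℝ} (h : 0 ≤ t) : ggTRB t ≤ 1 := by
  rcases eq_or_lt_of_le h with rfl | ht
  · rw [ggTRB_zero]
  · rw [ggTRB_ne ht.ne', div_le_one ht]
    have := Real.add_one_le_exp (-t)
    linarith

lemma ggTRB_lb {x : ℝ} (hx : 1 ≤ x) : (1 - Real.exp (-1)) / x ≤ ggTRB x := by
  have hx0 : (0:ℝ) < x := lt_of_lt_of_le one_pos hx
  rw [ggTRB_ne hx0.ne']
  gcongr


lemma ggTRB_analytic (x : ℝ) : AnalyticAt ℝ ggTRB x := by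
  have hh : ∀ y : ℝ, AnalyticAt ℝ (fun t : ℝ => 1 - Real.exp (-t)) y := fun y =>
    analyticAt_const.sub (analyticAt_rexp.comp analyticAt_id.neg)
  rcases eq_or_ne x 0 with rfl | hx
  · obtain ⟨p, hp⟩ := hh 0
    exact ⟨p.fslope, hp.has_fpower_series_dslope_fslope⟩
  · have hdiv : AnalyticAt ℝ (fun t : ℝ => (1 - Real.exp (-t)) / t) x :=
      (hh x).div analyticAt_id hx
    apply hdiv.congr
    filter_upwards [eventually_ne_nhds hx] with y hy
    exact (ggTRB_ne hy).symm

lemma ggTRB_contDiff {n : WithTop ℕ∞} : ContDiff ℝ n ggTRB :=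
  contDiff_iff_contDiffAt.2 fun x => (ggTRB_analytic x).contDiffAt


lemma iteratedDeriv_expNeg (m : ℕ) :
    iteratedDeriv m (fun x : ℝ => Real.exp (-x)) = fun x => (-1 : ℝ) ^ m * Real.exp (-x) := by
  have h : (fun x : ℝ => Real.exp (-x)) = fun x : ℝ => Real.exp ((-1) * x) := by
    funext x; rw [neg_one_mul]
  rw [h, iteratedDeriv_exp_const_mul]
  funext x; rw [neg_one_mul]

lemma iteratedDeriv_ose (j : ℕ) :
    iteratedDeriv (j + 1) (fun x : ℝ => 1 - Real.exp (-x)) = fun x => (-1 : ℝ) ^ j * Real.exp (-x) := by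
  have hd : deriv (fun x : ℝ => 1 - Real.exp (-x)) = fun x => Real.exp (-x) :=
    funext fun a => (hasDerivAt_ose a).deriv
  rw [iteratedDeriv_succ', hd, iteratedDeriv_expNeg]

lemma expNeg_le_div (j : ℕ) {x : ℝ} (hx : 0 < x) : Real.exp (-x) ≤ (Nat.factorial j : ℝ) / x ^ j := by
  have h1 : x ^ j / (Nat.factorial j : ℝ) ≤ Real.exp x := by
    refine le_trans ?_ (Real.sum_le_exp_of_nonneg hx.le (j + 1))
    exact Finset.single_le_sum (f := fun i => x ^ i / (Nat.factorial i : ℝ))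
      (fun i _ => by positivity) (Finset.self_mem_range_succ j)
  rw [Real.exp_neg, inv_eq_one_div, div_le_div_iff₀ (Real.exp_pos x) (pow_pos hx j)]
  have hj : (0:ℝ) < (Nat.factorial j : ℝ) := by positivity
  rw [div_le_iff₀ hj] at h1
  nlinarith [Real.exp_pos x]

lemma abs_iteratedDeriv_ose_le (j : ℕ) {x : ℝ} (hx : 0 < x) :
    |iteratedDeriv j (fun x : ℝ => 1 - Real.exp (-x)) x| ≤ (Nat.factorial j : ℝ) / x ^ j := by
  match j with
  | 0 =>
    simp only [iteratedDeriv_zero, Nat.factorial_zero, Nat.cast_one, pow_zero, div_one]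
    have h1 : Real.exp (-x) ≤ 1 := Real.exp_le_one_iff.2 (by linarith)
    have h2 : 0 < Real.exp (-x) := Real.exp_pos _
    rw [abs_le]; constructor <;> linarith
  | (k + 1) =>
    rw [iteratedDeriv_ose k]
    rw [abs_mul, abs_pow, abs_neg, abs_one, one_pow, one_mul,
      abs_of_pos (Real.exp_pos _)]
    exact expNeg_le_div (k+1) hx

lemma abs_iteratedDeriv_inv_le (k : ℕ) {x : ℝ} (hx : 0 < x) :
    |iteratedDeriv k (fun y : ℝ => y⁻¹) x| ≤ (Nat.factorial k : ℝ) / x ^ (k + 1) := by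
  rw [show (fun y : ℝ => y⁻¹) = (Inv.inv : ℝ → ℝ) from rfl]
  rw [iteratedDeriv_eq_iterate, iter_deriv_inv]
  rw [abs_mul]
  have h1 : |∏ i ∈ Finset.range k, (-1 - i : ℝ)| = (Nat.factorial k : ℝ) := by
    rw [Finset.abs_prod]
    have : ∀ i ∈ Finset.range k, |(-1 - i : ℝ)| = (i + 1 : ℝ) := by
      intro i _
      rw [abs_of_nonpos (by nlinarith [Nat.cast_nonneg (α := ℝ) i])]
      ring
    rw [Finset.prod_congr rfl this]
    exact_mod_cast Finset.prod_range_add_one_eq_factorial k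
  rw [abs_mul, abs_pow, abs_neg, abs_one, one_pow, one_mul, Nat.abs_cast]
  have h2 : |x ^ (-1 - k : ℤ)| = (x ^ (k + 1))⁻¹ := by
    rw [abs_of_pos (zpow_pos hx _)]
    rw [show (-1 - k : ℤ) = -((k : ℤ) + 1) by ring, zpow_neg]
    norm_cast
  rw [h2, div_eq_mul_inv]

-- helper: norm within open set equals abs of global iteratedDeriv
lemma normIFDW_open {F : ℝ → ℝ} {s : Set ℝ} (hs : IsOpen s) {x : ℝ} (hx : x ∈ s) (m : ℕ) :
    ‖iteratedFDerivWithin ℝ m F s x‖ = |iteratedDeriv m F x| := by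
  rw [iteratedFDerivWithin_of_isOpen m hs hx, norm_iteratedFDeriv_eq_norm_iteratedDeriv,
    Real.norm_eq_abs]

lemma iteratedDeriv_rpow_const (p : ℝ) (i : ℕ) : ∀ {y : ℝ}, 0 < y →
    iteratedDeriv i (fun u : ℝ => u ^ p) y
      = (∏ j ∈ Finset.range i, (p - j)) * y ^ (p - i) := by
  induction i with
  | zero => intro y hy; simp
  | succ i ih =>
    intro y hy
    rw [iteratedDeriv_succ]
    have hev : iteratedDeriv i (fun u : ℝ => u ^ p)
        =ᶠ[nhds y] fun u => (∏ j ∈ Finset.range i, (p - j)) * u ^ (p - i) := by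
      filter_upwards [isOpen_Ioi.mem_nhds (show y ∈ Ioi (0:ℝ) from hy)] with u hu
      exact ih hu
    rw [hev.deriv_eq]
    have hd : HasDerivAt (fun u : ℝ => (∏ j ∈ Finset.range i, (p - j)) * u ^ (p - i))
        ((∏ j ∈ Finset.range i, (p - j)) * ((p - i) * y ^ (p - i - 1))) y :=
      (Real.hasDerivAt_rpow_const (Or.inl hy.ne')).const_mul _
    rw [hd.deriv, Finset.prod_range_succ]
    have he : p - (i : ℝ) - 1 = p - ((i + 1 : ℕ) : ℝ) := by push_cast; ring
    rw [← he]; ring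

lemma abs_iteratedDeriv_gg_le (i : ℕ) {x : ℝ} (hx : 0 < x) :
    |iteratedDeriv i ggTRB x| ≤ ((i+1).factorial : ℝ) / x ^ (i + 1) := by
  have hxm : x ∈ Ioi (0:ℝ) := hx
  have hEq : Set.EqOn ggTRB (fun t => (1 - Real.exp (-t)) * t⁻¹) (Ioi 0) := by
    intro t ht
    rw [ggTRB_ne (ne_of_gt ht), div_eq_mul_inv]
  have h0 : |iteratedDeriv i ggTRB x|
      = ‖iteratedFDerivWithin ℝ i (fun t => (1 - Real.exp (-t)) * t⁻¹) (Ioi 0) x‖ := by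
    rw [← normIFDW_open isOpen_Ioi hxm, iteratedFDerivWithin_congr hEq hxm]
  rw [h0]
  have hf : ContDiffOn ℝ i (fun t : ℝ => 1 - Real.exp (-t)) (Ioi 0) :=
    (contDiff_const.sub (Real.contDiff_exp.comp contDiff_neg)).contDiffOn
  have hg : ContDiffOn ℝ i (fun t : ℝ => t⁻¹) (Ioi 0) := fun y hy =>
    (contDiffAt_inv (𝕜 := ℝ) (ne_of_gt hy)).contDiffWithinAt
  have hmul := norm_iteratedFDerivWithin_mul_le hf hg isOpen_Ioi.uniqueDiffOn hxm le_rfl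
  refine hmul.trans ?_
  have hterm : ∀ j ∈ Finset.range (i + 1),
      (i.choose j : ℝ) * ‖iteratedFDerivWithin ℝ j (fun t : ℝ => 1 - Real.exp (-t)) (Ioi 0) x‖ *
        ‖iteratedFDerivWithin ℝ (i - j) (fun t : ℝ => t⁻¹) (Ioi 0) x‖
      ≤ (i.factorial : ℝ) / x ^ (i + 1) := by
    intro j hj
    have hji : j ≤ i := Nat.lt_succ_iff.mp (Finset.mem_range.mp hj)
    rw [normIFDW_open isOpen_Ioi hxm, normIFDW_open isOpen_Ioi hxm]
    have h1 := abs_iteratedDeriv_ose_le j hx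
    have h2 := abs_iteratedDeriv_inv_le (i - j) hx
    have hab1 : (0:ℝ) ≤ |iteratedDeriv j (fun x : ℝ => 1 - Real.exp (-x)) x| := abs_nonneg _
    have hab2 : (0:ℝ) ≤ |iteratedDeriv (i - j) (fun y : ℝ => y⁻¹) x| := abs_nonneg _
    calc (i.choose j : ℝ) * _ * _
        ≤ (i.choose j : ℝ) * ((Nat.factorial j : ℝ) / x ^ j) *
            ((Nat.factorial (i-j) : ℝ) / x ^ (i - j + 1)) := by
          apply mul_le_mul (mul_le_mul le_rfl h1 hab1 (by positivity)) h2 hab2 (by positivity)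
      _ = (i.choose j : ℝ) * (Nat.factorial j : ℝ) * (Nat.factorial (i-j) : ℝ) /
            x ^ (i + 1) := by
          rw [show i + 1 = j + (i - j + 1) by omega, pow_add]
          ring
      _ = (i.factorial : ℝ) / x ^ (i + 1) := by
          congr 1
          rw [← Nat.cast_mul, ← Nat.cast_mul, Nat.choose_mul_factorial_mul_factorial hji]
  calc ∑ j ∈ Finset.range (i + 1), (i.choose j : ℝ) *
        ‖iteratedFDerivWithin ℝ j (fun t : ℝ => 1 - Real.exp (-t)) (Ioi 0) x‖ *
        ‖iteratedFDerivWithin ℝ (i - j) (fun t : ℝ => t⁻¹) (Ioi 0) x‖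
      ≤ ∑ j ∈ Finset.range (i + 1), (i.factorial : ℝ) / x ^ (i + 1) :=
        Finset.sum_le_sum hterm
    _ = ((i+1).factorial : ℝ) / x ^ (i + 1) := by
        rw [Finset.sum_const, Finset.card_range, nsmul_eq_mul, Nat.factorial_succ]
        push_cast
        ring

lemma FF_tail (b : ℝ) (hb : 0 < b) (n : ℕ) (hn : 1 ≤ n) :
    ∃ M : ℝ, ∀ x : ℝ, 1 ≤ x → |iteratedDeriv n (fun t => ggTRB t ^ (b - 1)) x| ≤ M := by
  set c : ℝ := 1 - Real.exp (-1) with hc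
  have hc0 : 0 < c := by
    have : Real.exp (-1:ℝ) < 1 := Real.exp_lt_one_iff.2 (by norm_num)
    simp only [hc]; linarith
  set P : ℝ := ∏ j ∈ Finset.range n, (|b - 1 - (j:ℝ)| + 1) with hP
  have hP1 : 1 ≤ P := by
    have h := Finset.prod_le_prod (ι := ℕ) (s := Finset.range n) (f := fun _ : ℕ => (1:ℝ))
      (g := fun j : ℕ => |b - 1 - (j:ℝ)| + 1) (by intros; norm_num)
      (by intro j _; show (1:ℝ) ≤ |b - 1 - (j:ℝ)| + 1; linarith [abs_nonneg (b - 1 - (j:ℝ))])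
    simpa using h
  have hPb : ∀ i, i ≤ n → |∏ j ∈ Finset.range i, (b - 1 - (j:ℝ))| ≤ P := by
    intro i hi
    rw [Finset.abs_prod]
    refine le_trans (Finset.prod_le_prod (fun j _ => abs_nonneg _)
      (fun j _ => le_add_of_nonneg_right zero_le_one)) ?_
    rw [hP, ← Finset.prod_range_mul_prod_Ico (fun j => |b - 1 - (j:ℝ)| + 1) hi]
    have hone : (1:ℝ) ≤ ∏ j ∈ Finset.Ico i n, (|b - 1 - (j:ℝ)| + 1) := by
      have h := Finset.prod_le_prod (ι := ℕ) (s := Finset.Ico i n) (f := fun _ : ℕ => (1:ℝ))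
        (g := fun j : ℕ => |b - 1 - (j:ℝ)| + 1) (by intros; norm_num)
        (by intro j _; show (1:ℝ) ≤ |b - 1 - (j:ℝ)| + 1; linarith [abs_nonneg (b - 1 - (j:ℝ))])
      simpa using h
    have hnn : (0:ℝ) ≤ ∏ j ∈ Finset.range i, (|b - 1 - (j:ℝ)| + 1) :=
      Finset.prod_nonneg fun j _ => by positivity
    nlinarith
  set K : ℝ := ((n+1).factorial : ℝ) with hK
  have hK1 : 1 ≤ K := by
    simp only [hK]; exact_mod_cast Nat.one_le_iff_ne_zero.2 (Nat.factorial_ne_zero _)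
  set q : ℝ := (n:ℝ) + 1 - b with hq
  refine ⟨(n.factorial : ℝ) * P * K ^ n * ((c ^ q)⁻¹ + 1), ?_⟩
  intro x hx1
  have hx0 : (0:ℝ) < x := lt_of_lt_of_le one_pos hx1
  have hmemx : x ∈ Ioi (0:ℝ) := hx0
  have hy0 : 0 < ggTRB x := ggTRB_pos x
  have hy1 : ggTRB x ≤ 1 := ggTRB_le_one hx0.le
  have hylb : c / x ≤ ggTRB x := ggTRB_lb hx1
  set en : ℝ := ((n:ℝ) + 1) / (n:ℝ) with hen
  set D : ℝ := K * x ^ (-en) with hD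
  set Cx : ℝ := P * ((x / c) ^ q + 1) with hCx
  have hxcq : (0:ℝ) < (x / c) ^ q := Real.rpow_pos_of_pos (by positivity) q
  -- bound on the outer derivatives
  have hCbound : ∀ i, i ≤ n →
      ‖iteratedFDerivWithin ℝ i (fun u : ℝ => u ^ (b-1)) (Ioi 0) (ggTRB x)‖ ≤ Cx := by
    intro i hi
    rw [normIFDW_open isOpen_Ioi hy0 i, iteratedDeriv_rpow_const (b-1) i hy0, abs_mul]
    have h2 : |ggTRB x ^ (b - 1 - (i:ℝ))| ≤ (x / c) ^ q + 1 := by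
      rw [abs_of_pos (Real.rpow_pos_of_pos hy0 _)]
      have step1 : ggTRB x ^ (b - 1 - (i:ℝ)) ≤ ggTRB x ^ (b - 1 - (n:ℝ)) := by
        apply Real.rpow_le_rpow_of_exponent_ge hy0 hy1
        have : (i:ℝ) ≤ (n:ℝ) := by exact_mod_cast hi
        linarith
      refine step1.trans ?_
      rcases le_or_gt q 0 with hq0 | hq0
      · have h3 : ggTRB x ^ (b - 1 - (n:ℝ)) ≤ 1 :=
          Real.rpow_le_one hy0.le hy1 (by simp only [hq] at hq0; linarith)
        linarith
      · have hcx0 : (0:ℝ) < c / x := by positivity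
        have step2 : ggTRB x ^ (b - 1 - (n:ℝ)) ≤ (c / x) ^ (b - 1 - (n:ℝ)) :=
          Real.rpow_le_rpow_of_nonpos hcx0 hylb (by simp only [hq] at hq0 ⊢; linarith)
        have heq : (c / x) ^ (b - 1 - (n:ℝ)) = (x / c) ^ q := by
          rw [show b - 1 - (n:ℝ) = -q by simp only [hq]; ring, ← inv_div,
            Real.inv_rpow (by positivity), Real.rpow_neg (by positivity), inv_inv]
        rw [heq] at step2
        linarith
    calc |∏ j ∈ Finset.range i, (b - 1 - (j:ℝ))| * |ggTRB x ^ (b - 1 - (i:ℝ))|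
        ≤ P * ((x / c) ^ q + 1) :=
          mul_le_mul (hPb i hi) h2 (abs_nonneg _) (le_trans zero_le_one hP1)
      _ = Cx := hCx.symm
  -- bound on the inner derivatives
  have hDbound : ∀ i, 1 ≤ i → i ≤ n →
      ‖iteratedFDerivWithin ℝ i ggTRB (Ioi 0) x‖ ≤ D ^ i := by
    intro i h1i hin
    rw [normIFDW_open isOpen_Ioi hmemx i]
    refine (abs_iteratedDeriv_gg_le i hx0).trans ?_
    have hDpow : D ^ i = K ^ i * x ^ (-(en * i)) := by
      rw [hD, mul_pow, ← Real.rpow_natCast (x ^ (-en)) i, ← Real.rpow_mul hx0.le]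
      ring_nf
    rw [hDpow]
    have hfac : ((i+1).factorial : ℝ) ≤ K ^ i := by
      have h1 : ((i+1).factorial : ℝ) ≤ K := by
        simp only [hK]; exact_mod_cast Nat.factorial_le (by omega)
      exact h1.trans (le_self_pow₀ hK1 (by omega))
    have hexp : x ^ (-(((i:ℕ):ℝ)+1)) ≤ x ^ (-(en * i)) := by
      apply Real.rpow_le_rpow_of_exponent_le hx1
      have hnpos : (0:ℝ) < (n:ℝ) := by exact_mod_cast hn
      have : en * i ≤ (i:ℝ) + 1 := by
        rw [hen, div_mul_eq_mul_div, div_le_iff₀ hnpos]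
        have hi' : (i:ℝ) ≤ (n:ℝ) := by exact_mod_cast hin
        nlinarith
      linarith
    have hrw : ((i+1).factorial : ℝ) / x ^ (i+1)
        = ((i+1).factorial : ℝ) * x ^ (-(((i:ℕ):ℝ)+1)) := by
      rw [div_eq_mul_inv, ← Real.rpow_natCast x (i+1), ← Real.rpow_neg hx0.le]
      push_cast
      ring_nf
    rw [hrw]
    exact mul_le_mul hfac hexp (Real.rpow_nonneg hx0.le _) (by positivity)
  -- the composition bound
  have hgOut : ContDiffOn ℝ n (fun u : ℝ => u ^ (b-1)) (Ioi 0) := fun u hu =>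
    (Real.contDiffAt_rpow_const_of_ne (ne_of_gt hu)).contDiffWithinAt
  have hgin : ContDiffOn ℝ n ggTRB (Ioi 0) := ggTRB_contDiff.contDiffOn
  have hmap : MapsTo ggTRB (Ioi 0) (Ioi 0) := fun t _ => ggTRB_pos t
  have hcomp := norm_iteratedFDerivWithin_comp_le hgOut hgin le_rfl
    isOpen_Ioi.uniqueDiffOn isOpen_Ioi.uniqueDiffOn hmap hmemx hCbound hDbound
  have habs : |iteratedDeriv n (fun t => ggTRB t ^ (b-1)) x|
      = ‖iteratedFDerivWithin ℝ n ((fun u : ℝ => u ^ (b-1)) ∘ ggTRB) (Ioi 0) x‖ :=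
    (normIFDW_open isOpen_Ioi hmemx n).symm
  rw [habs]
  refine hcomp.trans ?_
  -- final arithmetic
  have hDn : D ^ n = K ^ n * x ^ (-((n:ℝ)+1)) := by
    rw [hD, mul_pow, ← Real.rpow_natCast (x ^ (-en)) n, ← Real.rpow_mul hx0.le]
    congr 1
    rw [hen]
    have hnpos : (0:ℝ) < (n:ℝ) := by exact_mod_cast hn
    field_simp
  have hsplit : (x / c) ^ q * x ^ (-((n:ℝ)+1)) ≤ (c ^ q)⁻¹ := by
    rw [Real.div_rpow hx0.le hc0.le, div_mul_eq_mul_div, ← Real.rpow_add hx0]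
    rw [show q + -((n:ℝ)+1) = -b by rw [hq]; ring]
    have h1 : x ^ (-b) ≤ 1 :=
      Real.rpow_le_one_of_one_le_of_nonpos hx1 (by linarith)
    rw [div_le_iff₀ (Real.rpow_pos_of_pos hc0 q), inv_mul_cancel₀ (ne_of_gt (Real.rpow_pos_of_pos hc0 q))]
    exact h1
  have hxn1 : x ^ (-((n:ℝ)+1)) ≤ 1 :=
    Real.rpow_le_one_of_one_le_of_nonpos hx1 (neg_nonpos.2 (by positivity))
  calc (n.factorial : ℝ) * Cx * D ^ n
      = (n.factorial : ℝ) * P * K ^ n *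
          ((x / c) ^ q * x ^ (-((n:ℝ)+1)) + x ^ (-((n:ℝ)+1))) := by
        rw [hDn, hCx]; ring
    _ ≤ (n.factorial : ℝ) * P * K ^ n * ((c ^ q)⁻¹ + 1) := by
        have hpos : (0:ℝ) ≤ (n.factorial : ℝ) * P * K ^ n := by positivity
        exact mul_le_mul_of_nonneg_left (add_le_add hsplit hxn1) hpos

lemma itdw_eq_itd {F : ℝ → ℝ} (hF : ∀ m : WithTop ℕ∞, ContDiff ℝ m F) {s : Set ℝ}
    (hs : UniqueDiffOn ℝ s) {x : ℝ} (hx : x ∈ s) (m : ℕ) :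
    iteratedDerivWithin m F s x = iteratedDeriv m F x := by
  have h := (contDiff_iff_ftaylorSeries (n := (⊤ : ℕ∞)).mp (hF _)).hasFTaylorSeriesUpToOn s
  have h2 := h.eq_iteratedFDerivWithin_of_uniqueDiffOn (m := m) (mod_cast le_top) hs hx
  rw [iteratedDerivWithin_eq_iteratedFDerivWithin, ← h2, iteratedDeriv_eq_iteratedFDeriv]
  rfl

lemma FF_contDiff (b : ℝ) {m : WithTop ℕ∞} : ContDiff ℝ m (fun t => ggTRB t ^ (b - 1)) :=
  contDiff_iff_contDiffAt.2 fun x =>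
    (ggTRB_contDiff.contDiffAt).rpow_const_of_ne (ggTRB_pos x).ne'

lemma FF_deriv_bound (b : ℝ) (hb : 0 < b) (n : ℕ) (hn : 1 ≤ n) :
    ∃ M : ℝ, 0 ≤ M ∧ ∀ x : ℝ, 0 ≤ x →
      |iteratedDeriv n (fun t => ggTRB t ^ (b - 1)) x| ≤ M := by
  obtain ⟨M₂, hM₂⟩ := FF_tail b hb n hn
  have hcont : Continuous (iteratedDeriv n (fun t => ggTRB t ^ (b - 1))) :=
    (FF_contDiff b (m := ((n : ℕ∞) : WithTop ℕ∞))).continuous_iteratedDeriv n (by exact_mod_cast le_refl _)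
  obtain ⟨M₁, hM₁⟩ := (isCompact_Icc (a := (0:ℝ)) (b := 1)).exists_bound_of_continuousOn
    hcont.continuousOn
  refine ⟨max (max M₁ M₂) 0, le_max_right _ _, ?_⟩
  intro x hx
  rcases le_or_gt x 1 with hx1 | hx1
  · have := hM₁ x ⟨hx, hx1⟩
    rw [Real.norm_eq_abs] at this
    exact this.trans ((le_max_left _ _).trans (le_max_left _ _))
  · exact (hM₂ x hx1.le).trans ((le_max_right _ _).trans (le_max_left _ _))

/-- Uniform bound for the Taylor remainder: for `b > 0` and `N ≥ 1` there is a constant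
`C_N(b) > 0` such that for all `0 ≤ ξ ≤ t`,
`|f(t) - ∑_{n<N} d_n(ξ) (t-ξ)^n| ≤ C_N(b) (t-ξ)^N`,
where `f(t) = ((1 - e^(-t))/t)^(b-1)` (with `f(0) = 1`). -/
theorem taylor_remainder_bound (b : ℝ) (hb : 0 < b) (N : ℕ) (hN : 1 ≤ N)
    (f : ℝ → ℝ)
    (hf : ∀ t : ℝ, f t = if t = 0 then 1 else ((1 - Real.exp (-t)) / t) ^ (b - 1)) :
    ∃ C : ℝ, 0 < C ∧ ∀ ξ t : ℝ, 0 ≤ ξ → ξ ≤ t →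
      |f t - ∑ n ∈ Finset.range N,
          (iteratedDeriv n f ξ / (Nat.factorial n : ℝ)) * (t - ξ) ^ n|
        ≤ C * (t - ξ) ^ N := by
  -- identify f with the smooth function
  have hfe : f = fun t => ggTRB t ^ (b - 1) := by
    funext t
    rw [hf t]
    rcases eq_or_ne t 0 with rfl | ht
    · rw [if_pos rfl, ggTRB_zero, Real.one_rpow]
    · rw [if_neg ht, ggTRB_ne ht]
  subst hfe
  obtain ⟨m, rfl⟩ : ∃ m, N = m + 1 := ⟨N - 1, (Nat.succ_pred_eq_of_pos hN).symm⟩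
  obtain ⟨M, hM0, hM⟩ := FF_deriv_bound b hb (m + 1) (by omega)
  refine ⟨M / (Nat.factorial m : ℝ) + 1, by positivity, ?_⟩
  intro ξ t hξ hξt
  rcases eq_or_lt_of_le hξt with rfl | hlt
  · -- trivial case t = ξ
    have hsum : ∑ n ∈ Finset.range (m + 1),
        (iteratedDeriv n (fun t => ggTRB t ^ (b - 1)) ξ / (Nat.factorial n : ℝ)) * (ξ - ξ) ^ n
        = ggTRB ξ ^ (b - 1) := by
      rw [Finset.sum_eq_single 0]
      · simp
      · intro n _ hn0
        rw [sub_self, zero_pow hn0, mul_zero]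
      · intro h; simp at h
    rw [hsum, sub_self, abs_zero, sub_self, zero_pow (by omega), mul_zero]
  · have hsm : ∀ k : WithTop ℕ∞, ContDiff ℝ k (fun t => ggTRB t ^ (b - 1)) :=
      fun k => FF_contDiff b
    have hub : UniqueDiffOn ℝ (Icc ξ t) := uniqueDiffOn_Icc hlt
    have hbound : ∀ y ∈ Icc ξ t,
        ‖iteratedDerivWithin (m + 1) (fun t => ggTRB t ^ (b - 1)) (Icc ξ t) y‖ ≤ M := by
      intro y hy
      rw [itdw_eq_itd hsm hub hy, Real.norm_eq_abs]
      exact hM y (le_trans hξ hy.1)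
    have htay := taylor_mean_remainder_bound (f := fun t => ggTRB t ^ (b - 1))
      (a := ξ) (b := t) (x := t) (n := m) hξt
      ((hsm _).contDiffOn) (right_mem_Icc.2 hξt) hbound
    rw [Real.norm_eq_abs] at htay
    have hsum : taylorWithinEval (fun t => ggTRB t ^ (b - 1)) m (Icc ξ t) ξ t
        = ∑ n ∈ Finset.range (m + 1),
          (iteratedDeriv n (fun t => ggTRB t ^ (b - 1)) ξ / (Nat.factorial n : ℝ)) * (t - ξ) ^ n := by
      rw [taylor_within_apply]
      refine Finset.sum_congr rfl fun k _ => ?_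
      rw [itdw_eq_itd hsm hub (left_mem_Icc.2 hξt)]
      rw [smul_eq_mul]
      ring
    rw [hsum] at htay
    refine htay.trans ?_
    have hpow : (0:ℝ) ≤ (t - ξ) ^ (m + 1) := pow_nonneg (by linarith) _
    have : M * (t - ξ) ^ (m + 1) / (Nat.factorial m : ℝ)
        = (M / (Nat.factorial m : ℝ)) * (t - ξ) ^ (m + 1) := by ring
    rw [this]
    apply mul_le_mul_of_nonneg_right _ hpow
    have hfm : (0:ℝ) < (Nat.factorial m : ℝ) := by positivity
    nlinarith [div_nonneg hM0 hfm.le]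
end

section
/- Let $a, b > 0$, $x \in (0,1]$, $\xi = -\ln x$, and let $N \geq 1$ be an integer. Define $R_N(a,b,x) = \frac{1}{\Gamma(b)} \int_{\xi}^{+\infty} t^{b-1} e^{-a t} r_N(t)\, dt$, where $r_N(t) = f(t) - \sum_{n=0}^{N-1} d_n (t-\xi)^n$ is the Taylor remainder at $\xi$ of $f(t) = \left(\frac{1-e^{-t}}{t}\right)^{b-1}$. Then there exists a constant $C_N(b) > 0$, depending only on $N$ and $b$ (not on $a$ or $x$), such that $|R_N(a,b,x)| \leq C_N(b)\, F_N$, where $F_N = \frac{1}{\Gamma(b)} \int_{\xi}^{+\infty} t^{b-1} e^{-a t} (t-\xi)^N\, dt$. -/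
open Real MeasureTheory Set

noncomputable def gfun : ℝ → ℝ := fun t => if t = 0 then 1 else (1 - Real.exp (-t)) / t

lemma hasDerivAt_one_sub_exp_neg (t : ℝ) :
    HasDerivAt (fun s : ℝ => 1 - Real.exp (-s)) (Real.exp (-t)) t := by
  have h := (Real.hasDerivAt_exp (-t)).comp t ((hasDerivAt_id t).neg)
  simpa using h.const_sub 1

lemma gfun_eq_dslope : gfun = dslope (fun t : ℝ => 1 - Real.exp (-t)) 0 := by
  funext t
  by_cases ht : t = 0
  · subst ht
    rw [dslope_same]
    simp [gfun, (hasDerivAt_one_sub_exp_neg 0).deriv]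
  · rw [dslope_of_ne _ ht]
    simp [gfun, ht, slope, div_eq_inv_mul]

lemma gfun_analytic (t : ℝ) : AnalyticAt ℝ gfun t := by
  by_cases ht : t = 0
  · subst ht
    rw [gfun_eq_dslope]
    have h : AnalyticAt ℝ (fun t : ℝ => 1 - Real.exp (-t)) 0 :=
      analyticAt_const.sub (analyticAt_rexp.comp analyticAt_id.neg)
    obtain ⟨p, hp⟩ := h
    exact hp.has_fpower_series_dslope_fslope.analyticAt
  · have h : AnalyticAt ℝ (fun s : ℝ => (1 - Real.exp (-s)) / s) t :=
      (analyticAt_const.sub (analyticAt_rexp.comp analyticAt_id.neg)).div analyticAt_id ht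
    apply h.congr
    filter_upwards [isOpen_compl_singleton.mem_nhds ht] with s hs
    simp [gfun, show s ≠ 0 from hs]

lemma gfun_pos (t : ℝ) : 0 < gfun t := by
  unfold gfun
  rcases lt_trichotomy t 0 with h | h | h
  · rw [if_neg h.ne]
    apply div_pos_of_neg_of_neg _ h
    have : 1 < Real.exp (-t) := Real.one_lt_exp_iff.mpr (by linarith)
    linarith
  · simp [h]
  · rw [if_neg h.ne']
    apply div_pos _ h
    have : Real.exp (-t) < 1 := Real.exp_lt_one_iff.mpr (by linarith)
    linarith

variable {b : ℝ} {f : ℝ → ℝ}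

lemma f_eq (hf : ∀ t : ℝ, f t = if t = 0 then 1 else ((1 - Real.exp (-t)) / t) ^ (b - 1)) :
    f = fun t => Real.exp ((b - 1) * Real.log (gfun t)) := by
  funext t
  rw [hf t]
  by_cases ht : t = 0
  · simp [ht, gfun]
  · rw [if_neg ht]
    have hpos : 0 < (1 - Real.exp (-t)) / t := by
      have := gfun_pos t; simpa [gfun, ht] using this
    rw [Real.rpow_def_of_pos hpos]
    simp [gfun, ht, mul_comm]

lemma f_contDiff (hf : ∀ t : ℝ, f t = if t = 0 then 1 else ((1 - Real.exp (-t)) / t) ^ (b - 1))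
    (n : ℕ) : ContDiff ℝ n f := by
  rw [f_eq hf]
  apply ContDiff.exp
  apply ContDiff.mul contDiff_const
  apply ContDiff.log
  · exact contDiff_iff_contDiffAt.mpr fun x => (gfun_analytic x).contDiffAt
  · exact fun x => (gfun_pos x).ne'

lemma f_pos (hf : ∀ t : ℝ, f t = if t = 0 then 1 else ((1 - Real.exp (-t)) / t) ^ (b - 1))
    (t : ℝ) : 0 < f t := by
  rw [f_eq hf]; exact Real.exp_pos _

lemma f_hasDeriv (hf : ∀ t : ℝ, f t = if t = 0 then 1 else ((1 - Real.exp (-t)) / t) ^ (b - 1))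
    {t : ℝ} (ht : 0 < t) :
    HasDerivAt f (f t * ((b - 1) * ((Real.exp t - 1)⁻¹ - t⁻¹))) t := by
  have hexp1 : ∀ s : ℝ, 0 < s → Real.exp (-s) < 1 :=
    fun s hs => Real.exp_lt_one_iff.mpr (by linarith)
  have hne1 : (1 : ℝ) - Real.exp (-t) ≠ 0 := by have := hexp1 t ht; linarith
  have hd1 : HasDerivAt (fun s : ℝ => 1 - Real.exp (-s)) (Real.exp (-t)) t :=
    hasDerivAt_one_sub_exp_neg t
  have h1 : HasDerivAt (fun s : ℝ => Real.log (1 - Real.exp (-s)))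
      (Real.exp (-t) / (1 - Real.exp (-t))) t := hd1.log hne1
  have h2 : HasDerivAt Real.log t⁻¹ t := Real.hasDerivAt_log ht.ne'
  have h3 : HasDerivAt (fun s : ℝ => (b - 1) * (Real.log (1 - Real.exp (-s)) - Real.log s))
      ((b - 1) * (Real.exp (-t) / (1 - Real.exp (-t)) - t⁻¹)) t := (h1.sub h2).const_mul _
  have h4 := h3.exp
  have hev : f =ᶠ[nhds t]
      fun s => Real.exp ((b - 1) * (Real.log (1 - Real.exp (-s)) - Real.log s)) := by
    filter_upwards [isOpen_Ioi.mem_nhds ht] with s hs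
    have hs0 : (s : ℝ) ≠ 0 := ne_of_gt hs
    have hgs : gfun s = (1 - Real.exp (-s)) / s := by simp [gfun, hs0]
    rw [f_eq hf]
    show Real.exp ((b - 1) * Real.log (gfun s)) = _
    rw [hgs, Real.log_div (by have := hexp1 s hs; linarith) hs0]
  have hft : f t = Real.exp ((b - 1) * (Real.log (1 - Real.exp (-t)) - Real.log t)) :=
    hev.self_of_nhds
  have key : Real.exp (-t) / (1 - Real.exp (-t)) = (Real.exp t - 1)⁻¹ := by
    have he : Real.exp t ≠ 0 := (Real.exp_pos t).ne'
    have he1 : Real.exp t - 1 ≠ 0 := by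
      have : (1:ℝ) < Real.exp t := Real.one_lt_exp_iff.mpr ht; linarith
    rw [Real.exp_neg]
    field_simp
  have hfin := h4.congr_of_eventuallyEq hev
  rw [← hft, key] at hfin
  exact hfin

inductive Good : (ℝ → ℝ) → Prop where
  | psi : Good (fun t => (Real.exp t - 1)⁻¹)
  | inv : Good (fun t => t⁻¹)
  | const (c : ℝ) : Good (fun _ => c)
  | add {u v : ℝ → ℝ} : Good u → Good v → Good (fun t => u t + v t)
  | mul {u v : ℝ → ℝ} : Good u → Good v → Good (fun t => u t * v t)

lemma exp_sub_one_pos' {t : ℝ} (ht : 0 < t) : 0 < Real.exp t - 1 := by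
  have : (1:ℝ) < Real.exp t := Real.one_lt_exp_iff.mpr ht; linarith

lemma hasDerivAt_psi {t : ℝ} (ht : 0 < t) :
    HasDerivAt (fun s : ℝ => (Real.exp s - 1)⁻¹)
      (-1 * ((Real.exp t - 1)⁻¹ * (Real.exp t - 1)⁻¹ + (Real.exp t - 1)⁻¹)) t := by
  have hne : Real.exp t - 1 ≠ 0 := (exp_sub_one_pos' ht).ne'
  have h := ((Real.hasDerivAt_exp t).sub_const 1).inv hne
  refine h.congr_deriv ?_
  field_simp
  ring

lemma hasDerivAt_inv' {t : ℝ} (ht : 0 < t) :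
    HasDerivAt (fun s : ℝ => s⁻¹) (-1 * (t⁻¹ * t⁻¹)) t := by
  have h := hasDerivAt_inv ht.ne'
  refine h.congr_deriv ?_
  field_simp

lemma good_deriv {u : ℝ → ℝ} (hu : Good u) :
    ∃ u', Good u' ∧ ∀ t : ℝ, 0 < t → HasDerivAt u (u' t) t := by
  induction hu with
  | psi =>
    exact ⟨_, Good.mul (Good.const (-1)) (Good.add (Good.mul Good.psi Good.psi) Good.psi),
      fun t ht => hasDerivAt_psi ht⟩
  | inv =>
    exact ⟨_, Good.mul (Good.const (-1)) (Good.mul Good.inv Good.inv),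
      fun t ht => hasDerivAt_inv' ht⟩
  | const c => exact ⟨_, Good.const 0, fun t _ => hasDerivAt_const t c⟩
  | add hu hv ihu ihv =>
    obtain ⟨u', hu', hud⟩ := ihu
    obtain ⟨v', hv', hvd⟩ := ihv
    exact ⟨_, Good.add hu' hv', fun t ht => (hud t ht).add (hvd t ht)⟩
  | mul hu hv ihu ihv =>
    obtain ⟨u', hu', hud⟩ := ihu
    obtain ⟨v', hv', hvd⟩ := ihv
    refine ⟨_, Good.add (Good.mul hu' ?_) (Good.mul ?_ hv'), fun t ht => (hud t ht).mul (hvd t ht)⟩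
    · assumption
    · assumption

lemma good_bound {u : ℝ → ℝ} (hu : Good u) : ∃ C : ℝ, 0 ≤ C ∧ ∀ t : ℝ, 1 ≤ t → |u t| ≤ C := by
  induction hu with
  | psi =>
    refine ⟨1, zero_le_one, fun t ht => ?_⟩
    have h1 : (1:ℝ) ≤ Real.exp t - 1 := by
      have := Real.add_one_le_exp t; linarith
    rw [abs_of_pos (by positivity)]
    exact inv_le_one_of_one_le₀ h1
  | inv =>
    refine ⟨1, zero_le_one, fun t ht => ?_⟩
    rw [abs_of_pos (by positivity)]
    exact inv_le_one_of_one_le₀ ht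
  | const c => exact ⟨|c|, abs_nonneg c, fun t _ => le_rfl⟩
  | add hu hv ihu ihv =>
    obtain ⟨C, hC0, hC⟩ := ihu
    obtain ⟨D, hD0, hD⟩ := ihv
    exact ⟨C + D, by linarith, fun t ht => (abs_add_le _ _).trans (add_le_add (hC t ht) (hD t ht))⟩
  | mul hu hv ihu ihv =>
    obtain ⟨C, hC0, hC⟩ := ihu
    obtain ⟨D, hD0, hD⟩ := ihv
    refine ⟨C * D, by positivity, fun t ht => ?_⟩
    rw [abs_mul]
    exact mul_le_mul (hC t ht) (hD t ht) (abs_nonneg _) hC0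

lemma rep (hf : ∀ t : ℝ, f t = if t = 0 then 1 else ((1 - Real.exp (-t)) / t) ^ (b - 1))
    (N : ℕ) (hN : 1 ≤ N) :
    ∃ A B : ℝ → ℝ, Good A ∧ Good B ∧ ∀ t : ℝ, 0 < t →
      iteratedDeriv N f t = f t * ((Real.exp t - 1)⁻¹ * A t + t⁻¹ * B t) := by
  induction N, hN using Nat.le_induction with
  | base =>
    refine ⟨fun _ => b - 1, fun _ => -(b - 1), Good.const _, Good.const _, fun t ht => ?_⟩
    rw [iteratedDeriv_one, (f_hasDeriv hf ht).deriv]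
    ring
  | succ n hn ih =>
    obtain ⟨A, B, hA, hB, hrep⟩ := ih
    obtain ⟨A', hA', hAd⟩ := good_deriv hA
    obtain ⟨B', hB', hBd⟩ := good_deriv hB
    refine ⟨fun t => (b - 1) * ((Real.exp t - 1)⁻¹ * A t + t⁻¹ * B t) +
        -1 * ((Real.exp t - 1)⁻¹ * A t + A t) + A' t,
      fun t => -(b - 1) * ((Real.exp t - 1)⁻¹ * A t + t⁻¹ * B t) +
        -1 * (t⁻¹ * B t) + B' t, ?_, ?_, ?_⟩
    · exact Good.add (Good.add
        (Good.mul (Good.const (b - 1)) (Good.add (Good.mul Good.psi hA) (Good.mul Good.inv hB)))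
        (Good.mul (Good.const (-1)) (Good.add (Good.mul Good.psi hA) hA))) hA'
    · exact Good.add (Good.add
        (Good.mul (Good.const (-(b - 1))) (Good.add (Good.mul Good.psi hA) (Good.mul Good.inv hB)))
        (Good.mul (Good.const (-1)) (Good.mul Good.inv hB))) hB'
    · intro t ht
      rw [iteratedDeriv_succ]
      have hev : iteratedDeriv n f =ᶠ[nhds t]
          (fun s => f s * ((Real.exp s - 1)⁻¹ * A s + s⁻¹ * B s)) := by
        filter_upwards [isOpen_Ioi.mem_nhds ht] with s hs using hrep s hs
      rw [hev.deriv_eq]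
      have hP : HasDerivAt (fun s => (Real.exp s - 1)⁻¹ * A s + s⁻¹ * B s)
          ((-1 * ((Real.exp t - 1)⁻¹ * (Real.exp t - 1)⁻¹ + (Real.exp t - 1)⁻¹)) * A t
            + (Real.exp t - 1)⁻¹ * A' t
            + ((-1 * (t⁻¹ * t⁻¹)) * B t + t⁻¹ * B' t)) t :=
        ((hasDerivAt_psi ht).mul (hAd t ht)).add ((hasDerivAt_inv' ht).mul (hBd t ht))
      have hF : HasDerivAt (fun s => f s * ((Real.exp s - 1)⁻¹ * A s + s⁻¹ * B s)) _ t :=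
        (f_hasDeriv hf ht).mul hP
      rw [hF.deriv]
      show _ = f t * ((Real.exp t - 1)⁻¹ * ((b - 1) * ((Real.exp t - 1)⁻¹ * A t + t⁻¹ * B t) +
          -1 * ((Real.exp t - 1)⁻¹ * A t + A t) + A' t) +
        t⁻¹ * (-(b - 1) * ((Real.exp t - 1)⁻¹ * A t + t⁻¹ * B t) + -1 * (t⁻¹ * B t) + B' t))
      ring

lemma f_le (hb : 0 < b)
    (hf : ∀ t : ℝ, f t = if t = 0 then 1 else ((1 - Real.exp (-t)) / t) ^ (b - 1))
    {t : ℝ} (ht : 1 ≤ t) : f t ≤ 2 * t := by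
  have ht0 : 0 < t := lt_of_lt_of_le one_pos ht
  have hexp : Real.exp (-t) < 1 := Real.exp_lt_one_iff.mpr (by linarith)
  have hq0 : 0 < (1 - Real.exp (-t)) / t := div_pos (by linarith) ht0
  rw [hf t, if_neg ht0.ne']
  rcases le_or_gt 1 b with hb1 | hb1
  · have h1 : (1 - Real.exp (-t)) / t ≤ 1 := by
      rw [div_le_one ht0]
      have := Real.exp_pos (-t); linarith
    calc ((1 - Real.exp (-t)) / t) ^ (b - 1) ≤ 1 :=
        Real.rpow_le_one hq0.le h1 (by linarith)
      _ ≤ 2 * t := by linarith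
  · have hhalf : (1:ℝ)/2 ≤ 1 - Real.exp (-t) := by
      have h1 : Real.exp (-t) ≤ Real.exp (-1) := Real.exp_le_exp.mpr (by linarith)
      have h2 : Real.exp (-1) ≤ 1/2 := by
        rw [Real.exp_neg]
        have he : (2:ℝ) ≤ Real.exp 1 := by have := Real.add_one_le_exp 1; linarith
        rw [inv_le_comm₀ (Real.exp_pos 1) (by norm_num : (0:ℝ) < 1/2)]
        norm_num
        linarith
      linarith
    have h2t : 0 < 2 * t := by linarith
    have hlb : (2 * t)⁻¹ ≤ (1 - Real.exp (-t)) / t := by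
      rw [show (2 * t)⁻¹ = (1/2) / t by field_simp]
      exact (div_le_div_iff_of_pos_right ht0).mpr hhalf
    calc ((1 - Real.exp (-t)) / t) ^ (b - 1) ≤ ((2 * t)⁻¹) ^ (b - 1) :=
        Real.rpow_le_rpow_of_nonpos (by positivity) hlb (by linarith)
      _ = (2 * t) ^ (1 - b) := by
        rw [Real.inv_rpow h2t.le, ← Real.rpow_neg h2t.le]
        congr 1
        ring
      _ ≤ (2 * t) ^ (1 : ℝ) := Real.rpow_le_rpow_of_exponent_le (by linarith) (by linarith)
      _ = 2 * t := Real.rpow_one _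

lemma global_bound (hb : 0 < b)
    (hf : ∀ t : ℝ, f t = if t = 0 then 1 else ((1 - Real.exp (-t)) / t) ^ (b - 1))
    (N : ℕ) (hN : 1 ≤ N) :
    ∃ M : ℝ, 0 < M ∧ ∀ t : ℝ, 0 ≤ t → |iteratedDeriv N f t| ≤ M := by
  obtain ⟨A, B, hA, hB, hrep⟩ := rep hf N hN
  obtain ⟨CA, hCA0, hCA⟩ := good_bound hA
  obtain ⟨CB, hCB0, hCB⟩ := good_bound hB
  have hcont : Continuous (iteratedDeriv N f) :=
    (f_contDiff hf N).continuous_iteratedDeriv N le_rfl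
  obtain ⟨M₁, hM₁⟩ := (isCompact_Icc : IsCompact (Icc (0:ℝ) 1)).exists_bound_of_continuousOn
    hcont.continuousOn
  refine ⟨max M₁ (2 * (CA + CB)) + 1, by positivity, fun t ht => ?_⟩
  rcases le_or_gt t 1 with h1 | h1
  · have := hM₁ t ⟨ht, h1⟩
    rw [Real.norm_eq_abs] at this
    have h2 : M₁ ≤ max M₁ (2 * (CA + CB)) := le_max_left _ _
    linarith
  · have ht0 : 0 < t := lt_trans one_pos h1
    have hψpos : 0 < Real.exp t - 1 := exp_sub_one_pos' ht0
    have hψ : |(Real.exp t - 1)⁻¹| ≤ t⁻¹ := by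
      rw [abs_of_pos (by positivity)]
      apply inv_anti₀ ht0
      have := Real.add_one_le_exp t; linarith
    have hi : |t⁻¹| ≤ t⁻¹ := le_of_eq (abs_of_pos (by positivity))
    have hft : 0 < f t := f_pos hf t
    rw [hrep t ht0, abs_mul, abs_of_pos hft]
    have hXY : |(Real.exp t - 1)⁻¹ * A t + t⁻¹ * B t| ≤ t⁻¹ * CA + t⁻¹ * CB := by
      refine (abs_add_le _ _).trans ?_
      rw [abs_mul, abs_mul]
      exact add_le_add (mul_le_mul hψ (hCA t h1.le) (abs_nonneg _) (by positivity))
        (mul_le_mul hi (hCB t h1.le) (abs_nonneg _) (by positivity))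
    calc f t * |(Real.exp t - 1)⁻¹ * A t + t⁻¹ * B t|
        ≤ (2 * t) * (t⁻¹ * CA + t⁻¹ * CB) := by
          apply mul_le_mul (f_le hb hf h1.le) hXY (abs_nonneg _) (by linarith)
      _ = 2 * (CA + CB) * (t * t⁻¹) := by ring
      _ = 2 * (CA + CB) := by rw [mul_inv_cancel₀ ht0.ne', mul_one]
      _ ≤ max M₁ (2 * (CA + CB)) + 1 := by
          have := le_max_right M₁ (2 * (CA + CB)); linarith

lemma itdw_eqOn {f : ℝ → ℝ} (hd : ∀ k : ℕ, Differentiable ℝ (iteratedDeriv k f))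
    {s : Set ℝ} (hs : UniqueDiffOn ℝ s) (k : ℕ) :
    Set.EqOn (iteratedDerivWithin k f s) (iteratedDeriv k f) s := by
  induction k with
  | zero => intro x _; simp
  | succ k ih =>
    intro x hx
    rw [iteratedDerivWithin_succ,
      derivWithin_congr ih (ih hx),
      (hd k x).derivWithin (hs x hx),
      iteratedDeriv_succ]

lemma hdiff (hf : ∀ t : ℝ, f t = if t = 0 then 1 else ((1 - Real.exp (-t)) / t) ^ (b - 1)) :
    ∀ k : ℕ, Differentiable ℝ (iteratedDeriv k f) :=
  fun k => (f_contDiff hf (k + 1)).differentiable_iteratedDeriv k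
    (by exact_mod_cast lt_add_one k)

lemma taylor_bound (hf : ∀ t : ℝ, f t = if t = 0 then 1 else ((1 - Real.exp (-t)) / t) ^ (b - 1))
    {m : ℕ} {M : ℝ}
    (hM : ∀ t : ℝ, 0 ≤ t → |iteratedDeriv (m + 1) f t| ≤ M)
    {ξ t : ℝ} (hξ0 : 0 ≤ ξ) (ht : ξ < t) :
    |f t - ∑ n ∈ Finset.range (m + 1),
        (iteratedDeriv n f ξ / (Nat.factorial n : ℝ)) * (t - ξ) ^ n|
      ≤ M / (Nat.factorial (m + 1) : ℝ) * (t - ξ) ^ (m + 1) := by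
  have hu : UniqueDiffOn ℝ (Icc ξ t) := uniqueDiffOn_Icc ht
  have heq := fun k => itdw_eqOn (hdiff hf) hu k
  have hcd : ContDiffOn ℝ m f (Icc ξ t) := (f_contDiff hf m).contDiffOn
  have hf' : DifferentiableOn ℝ (iteratedDerivWithin m f (Icc ξ t)) (Ioo ξ t) := by
    intro y hy
    exact ((hdiff hf m y).differentiableWithinAt).congr
      (fun z hz => heq m (Ioo_subset_Icc_self hz)) (heq m (Ioo_subset_Icc_self hy))
  obtain ⟨x', hx', hTay⟩ := taylor_mean_remainder_lagrange (f := f) (n := m) ht.ne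
    (by rwa [Set.uIcc_of_le ht.le]) (by rwa [Set.uIcc_of_le ht.le, Set.uIoo_of_le ht.le])
  rw [Set.uIcc_of_le ht.le] at hTay
  rw [Set.uIoo_of_le ht.le] at hx'
  have hsum : taylorWithinEval f m (Icc ξ t) ξ t = ∑ n ∈ Finset.range (m + 1),
      (iteratedDeriv n f ξ / (Nat.factorial n : ℝ)) * (t - ξ) ^ n := by
    rw [taylor_within_apply]
    refine Finset.sum_congr rfl fun k _ => ?_
    rw [heq k (left_mem_Icc.mpr ht.le)]
    rw [smul_eq_mul]
    ring
  rw [hsum] at hTay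
  rw [hTay, heq (m + 1) (Ioo_subset_Icc_self hx')]
  have hx'0 : 0 ≤ x' := le_trans hξ0 hx'.1.le
  rw [abs_div, abs_mul, abs_pow, abs_of_pos (sub_pos.mpr ht),
    abs_of_pos (by positivity : (0:ℝ) < (Nat.factorial (m+1) : ℝ))]
  rw [div_le_iff₀ (by positivity : (0:ℝ) < (Nat.factorial (m+1) : ℝ))]
  have h1 := hM x' hx'0
  have h2 : (0:ℝ) ≤ (t - ξ) ^ (m + 1) := pow_nonneg (by linarith) _
  calc |iteratedDeriv (m + 1) f x'| * (t - ξ) ^ (m + 1)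
      ≤ M * (t - ξ) ^ (m + 1) := mul_le_mul_of_nonneg_right h1 h2
    _ = M / (Nat.factorial (m+1) : ℝ) * (t - ξ) ^ (m + 1) * (Nat.factorial (m+1) : ℝ) := by
        have hfp : (0:ℝ) < (Nat.factorial (m+1) : ℝ) := by positivity
        field_simp

lemma k_integrable {a ξ : ℝ} (hb : 0 < b) (ha : 0 < a) (hξ0 : 0 ≤ ξ) (N : ℕ) :
    IntegrableOn (fun t : ℝ => t ^ (b - 1) * Real.exp (-a * t) * (t - ξ) ^ N) (Ioi ξ) := by
  have hs : (-1 : ℝ) < b - 1 + N := by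
    have : (0:ℝ) ≤ N := Nat.cast_nonneg N
    linarith
  have h0 : IntegrableOn (fun t : ℝ => t ^ (b - 1 + N) * Real.exp (-a * t)) (Ioi 0) := by
    have h := integrableOn_rpow_mul_exp_neg_mul_rpow hs zero_lt_one ha
    apply h.congr_fun ?_ measurableSet_Ioi
    intro t ht
    simp only [Real.rpow_one]
  have h1 : IntegrableOn (fun t : ℝ => t ^ (b - 1 + N) * Real.exp (-a * t)) (Ioi ξ) :=
    h0.mono_set (Ioi_subset_Ioi hξ0)
  apply Integrable.mono' h1
  · apply ContinuousOn.aestronglyMeasurable ?_ measurableSet_Ioi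
    apply ContinuousOn.mul
    apply ContinuousOn.mul
    · intro t ht
      exact (Real.continuousAt_rpow_const t (b-1)
        (Or.inl (ne_of_gt (lt_of_le_of_lt hξ0 ht)))).continuousWithinAt
    · exact (Real.continuous_exp.comp (continuous_const.mul continuous_id)).continuousOn
    · exact ((continuous_id.sub continuous_const).pow N).continuousOn
  · filter_upwards [ae_restrict_mem measurableSet_Ioi] with t ht
    have ht0 : 0 < t := lt_of_le_of_lt hξ0 ht
    have htξ : ξ < t := ht
    have hnn : 0 ≤ t ^ (b - 1) * Real.exp (-a * t) * (t - ξ) ^ N := by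
      apply mul_nonneg (mul_nonneg (Real.rpow_nonneg ht0.le _) (Real.exp_pos _).le)
      exact pow_nonneg (by linarith) N
    rw [Real.norm_eq_abs, abs_of_nonneg hnn]
    have hp : (t - ξ) ^ N ≤ t ^ N := pow_le_pow_left₀ (by linarith) (by linarith) N
    calc t ^ (b - 1) * Real.exp (-a * t) * (t - ξ) ^ N
        ≤ t ^ (b - 1) * Real.exp (-a * t) * t ^ N := by
          apply mul_le_mul_of_nonneg_left hp
          exact mul_nonneg (Real.rpow_nonneg ht0.le _) (Real.exp_pos _).le
      _ = t ^ (b - 1 + N) * Real.exp (-a * t) := by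
          rw [Real.rpow_add ht0, Real.rpow_natCast]
          ring

/-- Remainder estimate: for `b > 0` and `N ≥ 1` there exists `C_N(b) > 0`, independent of
`a` and `x`, such that `|R_N(a,b,x)| ≤ C_N(b) F_N` for all `a > 0` and `x ∈ (0,1]`. -/
theorem R_N_estimate (b : ℝ) (hb : 0 < b) (N : ℕ) (hN : 1 ≤ N)
    (f : ℝ → ℝ)
    (hf : ∀ t : ℝ, f t = if t = 0 then 1 else ((1 - Real.exp (-t)) / t) ^ (b - 1)) :
    ∃ C : ℝ, 0 < C ∧ ∀ a : ℝ, 0 < a → ∀ x ∈ Set.Ioc (0 : ℝ) 1, ∀ ξ : ℝ, ξ = -Real.log x →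
      |(1 / Real.Gamma b) * ∫ t in Set.Ioi ξ, t ^ (b - 1) * Real.exp (-a * t) *
          (f t - ∑ n ∈ Finset.range N,
            (iteratedDeriv n f ξ / (Nat.factorial n : ℝ)) * (t - ξ) ^ n)|
        ≤ C * ((1 / Real.Gamma b) *
            ∫ t in Set.Ioi ξ, t ^ (b - 1) * Real.exp (-a * t) * (t - ξ) ^ N) := by
  obtain ⟨m, rfl⟩ : ∃ m, N = m + 1 := ⟨N - 1, (Nat.succ_pred_eq_of_pos hN).symm⟩
  obtain ⟨M, hM0, hM⟩ := global_bound hb hf (m + 1) hN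
  have hfacpos : (0:ℝ) < (Nat.factorial (m + 1) : ℝ) := by positivity
  refine ⟨M / (Nat.factorial (m + 1) : ℝ), by positivity, ?_⟩
  intro a ha x hx ξ hξ
  have hξ0 : 0 ≤ ξ := by
    rw [hξ]
    have := Real.log_nonpos hx.1.le hx.2
    linarith
  have hΓ : 0 < Real.Gamma b := Real.Gamma_pos_of_pos hb
  have hkint := k_integrable hb ha hξ0 (m + 1)
  have hknn : 0 ≤ ∫ t in Ioi ξ, t ^ (b - 1) * Real.exp (-a * t) * (t - ξ) ^ (m + 1) := by
    apply setIntegral_nonneg measurableSet_Ioi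
    intro t ht
    have ht0 : 0 < t := lt_of_le_of_lt hξ0 ht
    have htξ : (0:ℝ) ≤ t - ξ := by have : ξ < t := ht; linarith
    exact mul_nonneg (mul_nonneg (Real.rpow_nonneg ht0.le _) (Real.exp_pos _).le)
      (pow_nonneg htξ _)
  have key : ∀ᵐ t ∂(volume.restrict (Ioi ξ)),
      ‖t ^ (b - 1) * Real.exp (-a * t) * (f t - ∑ n ∈ Finset.range (m + 1),
          (iteratedDeriv n f ξ / (Nat.factorial n : ℝ)) * (t - ξ) ^ n)‖
        ≤ M / (Nat.factorial (m + 1) : ℝ) *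
            (t ^ (b - 1) * Real.exp (-a * t) * (t - ξ) ^ (m + 1)) := by
    filter_upwards [ae_restrict_mem measurableSet_Ioi] with t ht
    have htξ : ξ < t := ht
    have ht0 : 0 < t := lt_of_le_of_lt hξ0 htξ
    have h1 := taylor_bound hf hM hξ0 htξ
    rw [Real.norm_eq_abs, abs_mul]
    have h2 : |t ^ (b - 1) * Real.exp (-a * t)| = t ^ (b - 1) * Real.exp (-a * t) :=
      abs_of_nonneg (mul_nonneg (Real.rpow_nonneg ht0.le _) (Real.exp_pos _).le)
    rw [h2]
    calc t ^ (b - 1) * Real.exp (-a * t) * |f t - ∑ n ∈ Finset.range (m + 1),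
          iteratedDeriv n f ξ / (Nat.factorial n : ℝ) * (t - ξ) ^ n|
        ≤ t ^ (b - 1) * Real.exp (-a * t) *
            (M / (Nat.factorial (m + 1) : ℝ) * (t - ξ) ^ (m + 1)) := by
          apply mul_le_mul_of_nonneg_left h1
          exact mul_nonneg (Real.rpow_nonneg ht0.le _) (Real.exp_pos _).le
      _ = M / (Nat.factorial (m + 1) : ℝ) *
            (t ^ (b - 1) * Real.exp (-a * t) * (t - ξ) ^ (m + 1)) := by ring
  have hineq := norm_integral_le_of_norm_le
    (hkint.const_mul (M / (Nat.factorial (m + 1) : ℝ))) key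
  rw [integral_const_mul] at hineq
  rw [Real.norm_eq_abs] at hineq
  rw [abs_mul, abs_of_pos (by positivity : (0:ℝ) < 1 / Real.Gamma b)]
  calc (1 / Real.Gamma b) * |∫ t in Ioi ξ, t ^ (b - 1) * Real.exp (-a * t) *
        (f t - ∑ n ∈ Finset.range (m + 1),
          (iteratedDeriv n f ξ / (Nat.factorial n : ℝ)) * (t - ξ) ^ n)|
      ≤ (1 / Real.Gamma b) * (M / (Nat.factorial (m + 1) : ℝ) *
          ∫ t in Ioi ξ, t ^ (b - 1) * Real.exp (-a * t) * (t - ξ) ^ (m + 1)) := by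
        apply mul_le_mul_of_nonneg_left hineq (by positivity)
    _ = M / (Nat.factorial (m + 1) : ℝ) * ((1 / Real.Gamma b) *
          ∫ t in Ioi ξ, t ^ (b - 1) * Real.exp (-a * t) * (t - ξ) ^ (m + 1)) := by ring
end
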